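/- arXiv:1312.4778 — 8 statements merged into one kernel-verified Lean document; each statement's English description precedes it below -/
import Mathlib

section
/- Let n ≥ 3 and 0 < r < r_crit. Then the equation z^(n−1)/(z^n − r^n) = conj(z) has exactly 3n+1 complex solutions, namely z = 0 together with 3n points of the form r₁ e^{i(2k+1)π/n}, r₂ e^{i(2k+1)π/n}, r₃ e^{i·2kπ/n} for k = 0,…,n−1, where 0 < r₁ < r₂ < 1 < r₃ are real numbers. -/
open Complex
set_option maxHeartbeats 1000000 in

lemma radii (n : ℕ) (hn : 3 ≤ n) (c : ℝ) (hc : 0 < c)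
    (hc' : c < (((n:ℝ)-2)/n) ^ (((n:ℝ)-2)/2) - (((n:ℝ)-2)/n) ^ ((n:ℝ)/2)) :
    ∃ r₁ r₂ r₃ : ℝ, 0 < r₁ ∧ r₁ < r₂ ∧ r₂ < 1 ∧ 1 < r₃ ∧
      r₁^(n-2)*(1-r₁^2) = c ∧ r₂^(n-2)*(1-r₂^2) = c ∧ r₃^(n-2)*(r₃^2-1) = c ∧
      ∀ ρ : ℝ, 0 < ρ → ρ^(n-2) * |ρ^2-1| = c → ρ = r₁ ∨ ρ = r₂ ∨ ρ = r₃ := by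
  have hn3 : (3:ℝ) ≤ n := by exact_mod_cast hn
  set a : ℝ := ((n:ℝ)-2)/n with ha
  have hnpos : (0:ℝ) < n := by linarith
  have ha0 : 0 < a := div_pos (by linarith) hnpos
  have ha1 : a < 1 := by rw [ha, div_lt_one hnpos]; linarith
  have hna : (n:ℝ) * a = (n:ℝ) - 2 := by rw [ha]; field_simp [hnpos.ne']
  set s := Real.sqrt a with hsdef
  have hs2 : s^2 = a := Real.sq_sqrt ha0.le
  have hs0 : 0 < s := Real.sqrt_pos.2 ha0
  have hs1 : s < 1 := by nlinarith
  have hcast : ((n-2:ℕ):ℝ) = (n:ℝ)-2 := by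
    push_cast [Nat.cast_sub (by omega : 2 ≤ n)]; ring
  set f : ℝ → ℝ := fun ρ => ρ^(n-2) - ρ^n with hf
  set g : ℝ → ℝ := fun ρ => ρ^n - ρ^(n-2) with hg
  have hkey : ∀ m:ℕ, s ^ m = a ^ ((m:ℝ)/2) := by
    intro m
    rw [hsdef, Real.sqrt_eq_rpow, ← Real.rpow_natCast (a ^ ((1:ℝ)/2)) m,
      ← Real.rpow_mul ha0.le]
    ring_nf
  have hfs : f s = a ^ (((n:ℝ)-2)/2) - a ^ ((n:ℝ)/2) := by
    rw [hf]; simp only [hkey]; rw [hcast]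
  have hpowsplit : ∀ x:ℝ, x^n = x^2 * x^(n-2) := by
    intro x; rw [← pow_add]; congr 1; omega
  have hpowsplit' : ∀ x:ℝ, x^(n-1) = x^2 * x^(n-3) := by
    intro x; rw [← pow_add]; congr 1; omega
  have hpowsplit'' : ∀ x:ℝ, x^(n-2) = x * x^(n-3) := by
    intro x; rw [← pow_succ']; congr 1; omega
  have hder : ∀ x : ℝ, HasDerivAt f (((n:ℝ)-2)*x^(n-3) - (n:ℝ)*x^(n-1)) x := by
    intro x
    have h3 := (hasDerivAt_pow (n-2) x).sub (hasDerivAt_pow n x)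
    have e1 : n - 2 - 1 = n - 3 := by omega
    rw [e1, hcast] at h3
    exact h3
  have gder : ∀ x : ℝ, HasDerivAt g ((n:ℝ)*x^(n-1) - ((n:ℝ)-2)*x^(n-3)) x := by
    intro x
    have h3 := (hasDerivAt_pow n x).sub (hasDerivAt_pow (n-2) x)
    have e1 : n - 2 - 1 = n - 3 := by omega
    rw [e1, hcast] at h3
    exact h3
  have hcontf : Continuous f := by fun_prop
  have hcontg : Continuous g := by fun_prop
  have mono1 : StrictMonoOn f (Set.Icc 0 s) := by
    apply strictMonoOn_of_deriv_pos (convex_Icc _ _) hcontf.continuousOn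
    intro x hx
    rw [interior_Icc] at hx
    rw [(hder x).deriv, hpowsplit']
    have hx0 := hx.1
    have hx2 : x^2 < a := by nlinarith [hx.2]
    have hxp : 0 < x^(n-3) := pow_pos hx0 _
    have h5 : (n:ℝ)*x^2 < (n:ℝ)-2 := by nlinarith
    nlinarith [mul_pos (show (0:ℝ) < ((n:ℝ)-2) - n*x^2 by linarith) hxp]
  have anti1 : StrictAntiOn f (Set.Icc s 1) := by
    apply strictAntiOn_of_deriv_neg (convex_Icc _ _) hcontf.continuousOn
    intro x hx
    rw [interior_Icc] at hx
    rw [(hder x).deriv, hpowsplit']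
    have hx0 : 0 < x := lt_trans hs0 hx.1
    have hx2 : a < x^2 := by nlinarith [hx.1]
    have hxp : 0 < x^(n-3) := pow_pos hx0 _
    have h5 : (n:ℝ)-2 < (n:ℝ)*x^2 := by nlinarith
    nlinarith [mul_pos (show (0:ℝ) < (n:ℝ)*x^2 - ((n:ℝ)-2) by linarith) hxp]
  have mono3 : StrictMonoOn g (Set.Ici 1) := by
    apply strictMonoOn_of_deriv_pos (convex_Ici _) hcontg.continuousOn
    intro x hx
    rw [interior_Ici] at hx
    rw [(gder x).deriv, hpowsplit']
    have hx1 : (1:ℝ) < x := hx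
    have hx0 : (0:ℝ) < x := by linarith
    have hxp : 0 < x^(n-3) := pow_pos hx0 _
    have hx2 : 1 < x^2 := by nlinarith [sq_nonneg (x-1)]
    have h5 : (n:ℝ)-2 < (n:ℝ)*x^2 := by
      have h6 := mul_lt_mul_of_pos_left hx2 hnpos
      linarith
    nlinarith [mul_pos (show (0:ℝ) < (n:ℝ)*x^2 - ((n:ℝ)-2) by linarith) hxp]
  have hf0 : f 0 = 0 := by simp [hf, zero_pow (by omega : n - 2 ≠ 0), zero_pow (by omega : n ≠ 0)]
  have hf1 : f 1 = 0 := by simp [hf]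
  have hg1 : g 1 = 0 := by simp [hg]
  have hcM : c < f s := by rw [hfs]; exact hc'
  obtain ⟨r₁, hr₁mem, hfr₁⟩ : ∃ x ∈ Set.Ioo (0:ℝ) s, f x = c := by
    have h := intermediate_value_Ioo hs0.le hcontf.continuousOn (a := 0) (b := s)
    have : c ∈ Set.Ioo (f 0) (f s) := by rw [hf0]; exact ⟨hc, hcM⟩
    exact h this
  obtain ⟨r₂, hr₂mem, hfr₂⟩ : ∃ x ∈ Set.Ioo s 1, f x = c := by
    have h := intermediate_value_Ioo' hs1.le hcontf.continuousOn (a := s) (b := 1)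
    have : c ∈ Set.Ioo (f 1) (f s) := by rw [hf1]; exact ⟨hc, hcM⟩
    exact h this
  set b := Real.sqrt (1 + c) with hbdef
  have hb2 : b^2 = 1+c := Real.sq_sqrt (by linarith)
  have hb1 : 1 ≤ b := by nlinarith [Real.sqrt_nonneg (1+c)]
  have hgb : c ≤ g b := by
    have hgbe : g b = b^(n-2)*(b^2-1) := by rw [hg]; simp only [hpowsplit b]; ring
    have h1 : (1:ℝ) ≤ b^(n-2) := one_le_pow₀ hb1
    rw [hgbe]
    have : b^2 - 1 = c := by linarith
    rw [this]
    nlinarith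
  obtain ⟨r₃, hr₃mem, hgr₃⟩ : ∃ x ∈ Set.Ioc 1 b, g x = c := by
    have h := intermediate_value_Ioc hb1 hcontg.continuousOn (a := 1) (b := b)
    have : c ∈ Set.Ioc (g 1) (g b) := by rw [hg1]; exact ⟨hc, hgb⟩
    exact h this
  have expandf : ∀ x:ℝ, f x = x^(n-2)*(1-x^2) := by
    intro x; rw [hf]; simp only [hpowsplit x]; ring
  have expandg : ∀ x:ℝ, g x = x^(n-2)*(x^2-1) := by
    intro x; rw [hg]; simp only [hpowsplit x]; ring
  refine ⟨r₁, r₂, r₃, hr₁mem.1, lt_trans hr₁mem.2 hr₂mem.1, hr₂mem.2, hr₃mem.1,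
    by rw [← expandf]; exact hfr₁, by rw [← expandf]; exact hfr₂,
    by rw [← expandg]; exact hgr₃, ?_⟩
  intro ρ hρ hval
  rcases lt_trichotomy ρ 1 with h|h|h
  · have habs : |ρ^2-1| = 1-ρ^2 := by
      rw [abs_of_nonpos (by nlinarith)]; ring
    rw [habs] at hval
    have hfρ : f ρ = c := by rw [expandf]; exact hval
    rcases le_total ρ s with hle|hle
    · left
      exact mono1.injOn ⟨hρ.le, hle⟩ ⟨hr₁mem.1.le, hr₁mem.2.le⟩ (hfρ.trans hfr₁.symm)
    · right; left
      exact anti1.injOn ⟨hle, h.le⟩ ⟨hr₂mem.1.le, hr₂mem.2.le⟩ (hfρ.trans hfr₂.symm)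
  · exfalso
    rw [h] at hval
    simp at hval
    linarith
  · right; right
    have habs : |ρ^2-1| = ρ^2-1 := abs_of_pos (by nlinarith)
    rw [habs] at hval
    have hgρ : g ρ = c := by rw [expandg]; exact hval
    exact mono3.injOn (Set.mem_Ici.mpr h.le) (Set.mem_Ici.mpr hr₃mem.1.le)
      (hgρ.trans hgr₃.symm)

lemma root_char (n : ℕ) (hn : n ≠ 0) (w z : ℂ) (hw : w ≠ 0) :
    z ^ n = w ^ n ↔ ∃ k < n, z = w * Complex.exp (2*Real.pi*Complex.I/n) ^ k := by
  haveI : NeZero n := ⟨hn⟩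
  constructor
  · intro h
    have h1 : (z/w)^n = 1 := by rw [div_pow, h, div_self (pow_ne_zero _ hw)]
    obtain ⟨k, hk, hzk⟩ := (Complex.isPrimitiveRoot_exp n hn).eq_pow_of_pow_eq_one h1
    refine ⟨k, hk, ?_⟩
    rw [hzk]
    field_simp
  · rintro ⟨k, hk, rfl⟩
    have h1 : (Complex.exp (2*Real.pi*Complex.I/n) ^ k)^n = 1 := by
      rw [← pow_mul, mul_comm k n, pow_mul, (Complex.isPrimitiveRoot_exp n hn).pow_eq_one, one_pow]
    rw [mul_pow, h1, mul_one]

lemma zeta_pow (n : ℕ) (hn : n ≠ 0) (k : ℕ) :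
    Complex.exp (2*Real.pi*Complex.I/n) ^ k =
      Complex.exp (((2 * (k : ℝ) * Real.pi / n : ℝ) : ℂ) * Complex.I) := by
  rw [← Complex.exp_nat_mul]
  congr 1
  push_cast
  ring

lemma abs_circ (ρ θ : ℝ) : ‖(ρ:ℂ) * Complex.exp ((θ:ℂ)*Complex.I)‖ = |ρ| := by
  rw [norm_mul, Complex.norm_exp_ofReal_mul_I, Complex.norm_real, Real.norm_eq_abs, mul_one]

lemma normSq_circ (ρ θ : ℝ) :
    Complex.normSq ((ρ:ℂ) * Complex.exp ((θ:ℂ)*Complex.I)) = ρ^2 := by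
  rw [← Complex.sq_norm, abs_circ, _root_.sq_abs]

lemma exp_odd (n : ℕ) (hn : n ≠ 0) (k : ℕ) :
    Complex.exp ((((2 * (k : ℝ) + 1) * Real.pi / n : ℝ) : ℂ) * Complex.I) =
      Complex.exp (((Real.pi / n : ℝ) : ℂ) * Complex.I) *
        Complex.exp (2*Real.pi*Complex.I/n) ^ k := by
  rw [← Complex.exp_nat_mul, ← Complex.exp_add]
  congr 1
  have hn' : (n:ℂ) ≠ 0 := Nat.cast_ne_zero.mpr hn
  push_cast
  field_simp
  ring

lemma pow_circ (ρ θ : ℝ) (n : ℕ) :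
    ((ρ:ℂ) * Complex.exp ((θ:ℂ)*Complex.I))^n =
      (ρ:ℂ)^n * Complex.exp (((n * θ : ℝ):ℂ) * Complex.I) := by
  rw [mul_pow, ← Complex.exp_nat_mul]
  congr 2
  push_cast
  ring

lemma exp_odd_pi (k : ℕ) :
    Complex.exp ((((2 * (k:ℝ) + 1) * Real.pi : ℝ):ℂ) * Complex.I) = -1 := by
  have : ((((2 * (k:ℝ) + 1) * Real.pi : ℝ)):ℂ) * Complex.I =
      (Real.pi:ℂ) * Complex.I + (k:ℤ) * (2 * (Real.pi:ℂ) * Complex.I) := by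
    push_cast
    ring
  rw [this, Complex.exp_add, Complex.exp_pi_mul_I, Complex.exp_int_mul_two_pi_mul_I, mul_one]

lemma exp_even_pi (k : ℕ) :
    Complex.exp (((2 * (k:ℝ) * Real.pi : ℝ):ℂ) * Complex.I) = 1 := by
  have : (((2 * (k:ℝ) * Real.pi : ℝ)):ℂ) * Complex.I =
      (k:ℤ) * (2 * (Real.pi:ℂ) * Complex.I) := by
    push_cast
    ring
  rw [this, Complex.exp_int_mul_two_pi_mul_I]

lemma eqn_char (n : ℕ) (hn : 3 ≤ n) (r : ℝ) (z : ℂ) (hz : z ≠ 0)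
    (hzn : z ^ n ≠ (r:ℂ) ^ n) :
    z ^ (n-1) / (z ^ n - (r:ℂ) ^ n) = (starRingEnd ℂ) z ↔
    ((Complex.normSq z : ℂ) - 1) * z ^ n = (Complex.normSq z : ℂ) * (r:ℂ) ^ n := by
  rw [div_eq_iff (sub_ne_zero.mpr hzn)]
  have key : ∀ A B : ℂ, (A = B ↔ z*A = z*B) :=
    fun A B => ⟨fun h => by rw [h], mul_left_cancel₀ hz⟩
  rw [key]
  have hzz : z * z^(n-1) = z^n := by rw [← pow_succ']; congr 1; omega
  have hcj : z * ((starRingEnd ℂ) z * (z ^ n - (r:ℂ) ^ n)) =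
      (Complex.normSq z : ℂ) * (z ^ n - (r:ℂ) ^ n) := by
    rw [← mul_assoc, Complex.mul_conj]
  rw [hzz, hcj]
  constructor <;> intro h <;> linear_combination -h

set_option maxHeartbeats 2000000 in
/-- For `n ≥ 3` and `0 < r < r_crit`, the equation `z^(n−1)/(z^n − r^n) = conj z`
has exactly `3n+1` solutions: `z = 0` together with points on three circles. -/
theorem stmt_4 (n : ℕ) (hn : 3 ≤ n) (r : ℝ) (hr : 0 < r)
    (hrc : r < ((((n : ℝ) - 2) / n) ^ (((n : ℝ) - 2) / 2) -
          (((n : ℝ) - 2) / n) ^ ((n : ℝ) / 2)) ^ ((1 : ℝ) / n)) :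
    {z : ℂ | z ^ n ≠ (r : ℂ) ^ n ∧
        z ^ (n - 1) / (z ^ n - (r : ℂ) ^ n) = (starRingEnd ℂ) z}.ncard = 3 * n + 1 ∧
    ∃ r₁ r₂ r₃ : ℝ, 0 < r₁ ∧ r₁ < r₂ ∧ r₂ < 1 ∧ 1 < r₃ ∧
      {z : ℂ | z ^ n ≠ (r : ℂ) ^ n ∧
          z ^ (n - 1) / (z ^ n - (r : ℂ) ^ n) = (starRingEnd ℂ) z} =
        {0} ∪
        {z : ℂ | ∃ k < n, z = (r₁ : ℂ) *
          Complex.exp ((((2 * (k : ℝ) + 1) * Real.pi / n : ℝ) : ℂ) * Complex.I)} ∪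
        {z : ℂ | ∃ k < n, z = (r₂ : ℂ) *
          Complex.exp ((((2 * (k : ℝ) + 1) * Real.pi / n : ℝ) : ℂ) * Complex.I)} ∪
        {z : ℂ | ∃ k < n, z = (r₃ : ℂ) *
          Complex.exp (((2 * (k : ℝ) * Real.pi / n : ℝ) : ℂ) * Complex.I)} := by
  classical
  have hn0 : n ≠ 0 := by omega
  have hn3 : (3:ℝ) ≤ n := by exact_mod_cast hn
  have hnpos : (0:ℝ) < n := by linarith
  have hc : 0 < r^n := pow_pos hr n
  have ha0 : 0 < ((n:ℝ)-2)/n := div_pos (by linarith) hnpos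
  have ha1 : ((n:ℝ)-2)/n < 1 := by rw [div_lt_one hnpos]; linarith
  have hM0 : 0 < (((n:ℝ)-2)/n) ^ (((n:ℝ)-2)/2) - (((n:ℝ)-2)/n) ^ ((n:ℝ)/2) := by
    have := Real.rpow_lt_rpow_of_exponent_gt ha0 ha1
      (show ((n:ℝ)-2)/2 < (n:ℝ)/2 by linarith)
    linarith
  have hM1 : (((n:ℝ)-2)/n) ^ (((n:ℝ)-2)/2) - (((n:ℝ)-2)/n) ^ ((n:ℝ)/2) < 1 := by
    have h1 : (((n:ℝ)-2)/n) ^ (((n:ℝ)-2)/2) ≤ 1 :=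
      Real.rpow_le_one ha0.le ha1.le (by linarith)
    have h2 : 0 < (((n:ℝ)-2)/n) ^ ((n:ℝ)/2) := Real.rpow_pos_of_pos ha0 _
    linarith
  have hcM : r^n < (((n:ℝ)-2)/n) ^ (((n:ℝ)-2)/2) - (((n:ℝ)-2)/n) ^ ((n:ℝ)/2) := by
    have h1 := pow_lt_pow_left₀ hrc hr.le hn0
    have h2 : (((((n:ℝ)-2)/n) ^ (((n:ℝ)-2)/2) - (((n:ℝ)-2)/n) ^ ((n:ℝ)/2)) ^ ((1:ℝ)/n))^n
        = (((n:ℝ)-2)/n) ^ (((n:ℝ)-2)/2) - (((n:ℝ)-2)/n) ^ ((n:ℝ)/2) := by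
      rw [← Real.rpow_natCast (_ ^ ((1:ℝ)/n)) n, ← Real.rpow_mul hM0.le,
        one_div, inv_mul_cancel₀ (by positivity : (n:ℝ) ≠ 0), Real.rpow_one]
    rw [h2] at h1
    exact h1
  have hc1 : r^n < 1 := lt_trans hcM hM1
  obtain ⟨r₁, r₂, r₃, h01, h12, h21, h3, hv1, hv2, hv3, huniq⟩ :=
    radii n hn (r^n) hc hcM
  -- the helper for points on the inner circles
  have hodd : ∀ ρ:ℝ, 0 < ρ → ρ^(n-2)*(1-ρ^2) = r^n → ∀ k:ℕ,
      ((ρ:ℂ) * Complex.exp ((((2*(k:ℝ)+1)*Real.pi/n : ℝ):ℂ)*Complex.I))^n ≠ (r:ℂ)^n ∧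
      ((ρ:ℂ) * Complex.exp ((((2*(k:ℝ)+1)*Real.pi/n : ℝ):ℂ)*Complex.I))^(n-1) /
        (((ρ:ℂ) * Complex.exp ((((2*(k:ℝ)+1)*Real.pi/n : ℝ):ℂ)*Complex.I))^n - (r:ℂ)^n)
        = (starRingEnd ℂ) ((ρ:ℂ) * Complex.exp ((((2*(k:ℝ)+1)*Real.pi/n : ℝ):ℂ)*Complex.I)) := by
    intro ρ hρ0 hval k
    set z := (ρ:ℂ) * Complex.exp ((((2*(k:ℝ)+1)*Real.pi/n : ℝ):ℂ)*Complex.I) with hzdef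
    have hz0 : z ≠ 0 :=
      mul_ne_zero (Complex.ofReal_ne_zero.mpr hρ0.ne') (Complex.exp_ne_zero _)
    have hzn : z^n = ((-(ρ^n) : ℝ):ℂ) := by
      rw [hzdef, pow_circ]
      have harg : ((n:ℝ) * ((2*(k:ℝ)+1)*Real.pi/n) : ℝ) = (2*(k:ℝ)+1)*Real.pi := by
        field_simp
      rw [harg, exp_odd_pi k]
      push_cast
      ring
    have hne : z^n ≠ (r:ℂ)^n := by
      rw [hzn, ← Complex.ofReal_pow]
      intro h
      have h2 := Complex.ofReal_inj.mp h
      nlinarith [pow_pos hρ0 n]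
    refine ⟨hne, ?_⟩
    rw [eqn_char n hn r z hz0 hne, hzn]
    have hq : Complex.normSq z = ρ^2 := by rw [hzdef]; exact normSq_circ _ _
    rw [hq]
    have hsplit : ρ^n = ρ^2 * ρ^(n-2) := by rw [← pow_add]; congr 1; omega
    have hreal : (ρ^2 - 1) * (-(ρ^n)) = ρ^2 * r^n := by
      linear_combination ρ^2 * hval + (1 - ρ^2) * hsplit
    have h2 := congrArg (Complex.ofReal) hreal
    push_cast at h2 ⊢
    linear_combination h2
  have heven : ∀ ρ:ℝ, 1 < ρ → ρ^(n-2)*(ρ^2-1) = r^n → ∀ k:ℕ,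
      ((ρ:ℂ) * Complex.exp (((2*(k:ℝ)*Real.pi/n : ℝ):ℂ)*Complex.I))^n ≠ (r:ℂ)^n ∧
      ((ρ:ℂ) * Complex.exp (((2*(k:ℝ)*Real.pi/n : ℝ):ℂ)*Complex.I))^(n-1) /
        (((ρ:ℂ) * Complex.exp (((2*(k:ℝ)*Real.pi/n : ℝ):ℂ)*Complex.I))^n - (r:ℂ)^n)
        = (starRingEnd ℂ) ((ρ:ℂ) * Complex.exp (((2*(k:ℝ)*Real.pi/n : ℝ):ℂ)*Complex.I)) := by
    intro ρ hρ1 hval k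
    have hρ0 : 0 < ρ := by linarith
    set z := (ρ:ℂ) * Complex.exp (((2*(k:ℝ)*Real.pi/n : ℝ):ℂ)*Complex.I) with hzdef
    have hz0 : z ≠ 0 :=
      mul_ne_zero (Complex.ofReal_ne_zero.mpr hρ0.ne') (Complex.exp_ne_zero _)
    have hzn : z^n = ((ρ^n : ℝ):ℂ) := by
      rw [hzdef, pow_circ]
      have harg : ((n:ℝ) * (2*(k:ℝ)*Real.pi/n) : ℝ) = 2*(k:ℝ)*Real.pi := by
        field_simp
      rw [harg, exp_even_pi k]
      push_cast
      ring
    have hρn1 : 1 < ρ^n := one_lt_pow₀ hρ1 hn0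
    have hne : z^n ≠ (r:ℂ)^n := by
      rw [hzn, ← Complex.ofReal_pow]
      intro h
      have h2 := Complex.ofReal_inj.mp h
      linarith
    refine ⟨hne, ?_⟩
    rw [eqn_char n hn r z hz0 hne, hzn]
    have hq : Complex.normSq z = ρ^2 := by rw [hzdef]; exact normSq_circ _ _
    rw [hq]
    have hsplit : ρ^n = ρ^2 * ρ^(n-2) := by rw [← pow_add]; congr 1; omega
    have hreal : (ρ^2 - 1) * (ρ^n) = ρ^2 * r^n := by
      linear_combination ρ^2 * hval + (ρ^2 - 1) * hsplit
    have h2 := congrArg (Complex.ofReal) hreal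
    push_cast at h2 ⊢
    linear_combination h2
  -- main set equality
  set A₁ : Set ℂ := {z : ℂ | ∃ k < n, z = (r₁ : ℂ) *
      Complex.exp ((((2 * (k : ℝ) + 1) * Real.pi / n : ℝ) : ℂ) * Complex.I)} with hA₁
  set A₂ : Set ℂ := {z : ℂ | ∃ k < n, z = (r₂ : ℂ) *
      Complex.exp ((((2 * (k : ℝ) + 1) * Real.pi / n : ℝ) : ℂ) * Complex.I)} with hA₂
  set A₃ : Set ℂ := {z : ℂ | ∃ k < n, z = (r₃ : ℂ) *
      Complex.exp (((2 * (k : ℝ) * Real.pi / n : ℝ) : ℂ) * Complex.I)} with hA₃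
  have hmain : {z : ℂ | z ^ n ≠ (r : ℂ) ^ n ∧
      z ^ (n - 1) / (z ^ n - (r : ℂ) ^ n) = (starRingEnd ℂ) z} =
      {0} ∪ A₁ ∪ A₂ ∪ A₃ := by
    ext z
    simp only [Set.mem_setOf_eq, Set.mem_union, Set.mem_singleton_iff, hA₁, hA₂, hA₃]
    constructor
    · rintro ⟨hzne, heq⟩
      by_cases hz : z = 0
      · exact Or.inl (Or.inl (Or.inl hz))
      have hC := (eqn_char n hn r z hz hzne).mp heq
      set q := Complex.normSq z with hqdef
      have hq0 : 0 < q := Complex.normSq_pos.mpr hz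
      have hq1 : q ≠ 1 := by
        intro h1
        rw [h1] at hC
        simp at hC
        exact (pow_ne_zero n (Complex.ofReal_ne_zero.mpr hr.ne')) hC.symm
      have hq1' : ((q:ℂ) - 1) ≠ 0 := by
        rw [show ((q:ℂ)-1) = ((q-1:ℝ):ℂ) by push_cast; ring]
        exact Complex.ofReal_ne_zero.mpr (sub_ne_zero.mpr hq1)
      set ρ := ‖z‖ with hρdef
      have hρ0 : 0 < ρ := norm_pos_iff.mpr hz
      have hρ2 : ρ^2 = q := Complex.sq_norm z
      have hzt : z^n = ((q*r^n/(q-1) : ℝ):ℂ) := by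
        push_cast
        rw [eq_div_iff hq1']
        linear_combination hC
      have habs : ρ^n = |q*r^n/(q-1)| := by
        have h4 := congrArg norm hzt
        rwa [norm_pow, Complex.norm_real, Real.norm_eq_abs] at h4
      have hsplit : ρ^n = ρ^2 * ρ^(n-2) := by rw [← pow_add]; congr 1; omega
      rcases lt_or_gt_of_ne hq1 with hqlt|hqgt
      · -- q < 1 : inner circles
        have ht0 : q*r^n/(q-1) < 0 :=
          div_neg_of_pos_of_neg (mul_pos hq0 hc) (by linarith)
        have hρn : ρ^n = -(q*r^n/(q-1)) := by rw [habs, abs_of_neg ht0]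
        have h1 : ρ^n * (q-1) = -(q*r^n) := by
          rw [hρn, neg_mul, div_mul_cancel₀ _ (sub_ne_zero.mpr hq1)]
        rw [← hρ2] at h1
        have hmod' : ρ^2 * (ρ^(n-2)*(1-ρ^2)) = ρ^2 * r^n := by
          linear_combination -h1 + (ρ^2-1)*hsplit
        have hmod : ρ^(n-2)*(1-ρ^2) = r^n :=
          mul_left_cancel₀ (pow_ne_zero 2 hρ0.ne') hmod'
        have hρlt1 : ρ < 1 := by nlinarith
        have habs2 : ρ^(n-2) * |ρ^2-1| = r^n := by
          rw [abs_of_nonpos (by nlinarith : ρ^2-1 ≤ 0)]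
          linear_combination hmod
        have hznval : z^n = -((ρ:ℂ)^n) := by
          rw [hzt, show (q*r^n/(q-1):ℝ) = -(ρ^n) by linarith]
          push_cast
          ring
        have hwn : ((ρ:ℂ)*Complex.exp (((Real.pi/(n:ℝ):ℝ):ℂ)*Complex.I))^n
            = -((ρ:ℂ)^n) := by
          rw [pow_circ]
          have harg : ((n:ℝ)*(Real.pi/(n:ℝ)) : ℝ) = (2*((0:ℕ):ℝ)+1)*Real.pi := by
            push_cast
            field_simp
            ring
          rw [harg, exp_odd_pi 0]
          ring
        have hw0 : (ρ:ℂ)*Complex.exp (((Real.pi/(n:ℝ):ℝ):ℂ)*Complex.I) ≠ 0 :=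
          mul_ne_zero (Complex.ofReal_ne_zero.mpr hρ0.ne') (Complex.exp_ne_zero _)
        obtain ⟨k, hk, hzk⟩ := (root_char n hn0 _ z hw0).mp (by rw [hznval, hwn])
        have hzform : z = (ρ:ℂ) *
            Complex.exp ((((2*(k:ℝ)+1)*Real.pi/n : ℝ):ℂ)*Complex.I) := by
          rw [hzk, exp_odd n hn0 k]
          ring
        rcases huniq ρ hρ0 habs2 with h|h|h
        · exact Or.inl (Or.inl (Or.inr ⟨k, hk, by rw [hzform, h]⟩))
        · exact Or.inl (Or.inr ⟨k, hk, by rw [hzform, h]⟩)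
        · exfalso; rw [h] at hρlt1; linarith
      · -- q > 1 : outer circle
        have ht0 : 0 < q*r^n/(q-1) := div_pos (mul_pos hq0 hc) (by linarith)
        have hρn : ρ^n = q*r^n/(q-1) := by rw [habs, abs_of_pos ht0]
        have h1 : ρ^n * (q-1) = q*r^n := by
          rw [hρn, div_mul_cancel₀ _ (sub_ne_zero.mpr hq1)]
        rw [← hρ2] at h1
        have hmod' : ρ^2 * (ρ^(n-2)*(ρ^2-1)) = ρ^2 * r^n := by
          linear_combination h1 + (1-ρ^2)*hsplit
        have hmod : ρ^(n-2)*(ρ^2-1) = r^n :=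
          mul_left_cancel₀ (pow_ne_zero 2 hρ0.ne') hmod'
        have hρgt1 : 1 < ρ := by nlinarith
        have habs2 : ρ^(n-2) * |ρ^2-1| = r^n := by
          rw [abs_of_pos (by nlinarith : (0:ℝ) < ρ^2-1)]
          exact hmod
        have hznval : z^n = (ρ:ℂ)^n := by
          rw [hzt, show (q*r^n/(q-1):ℝ) = ρ^n from hρn.symm]
          push_cast
          ring
        obtain ⟨k, hk, hzk⟩ := (root_char n hn0 (ρ:ℂ) z
          (Complex.ofReal_ne_zero.mpr hρ0.ne')).mp (by rw [hznval])
        have hzform : z = (ρ:ℂ) *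
            Complex.exp (((2*(k:ℝ)*Real.pi/n : ℝ):ℂ)*Complex.I) := by
          rw [hzk, zeta_pow n hn0 k]
        rcases huniq ρ hρ0 habs2 with h|h|h
        · exfalso; rw [h] at hρgt1; linarith
        · exfalso; rw [h] at hρgt1; linarith
        · exact Or.inr ⟨k, hk, by rw [hzform, h]⟩
    · rintro (((rfl|⟨k,hk,rfl⟩)|⟨k,hk,rfl⟩)|⟨k,hk,rfl⟩)
      · refine ⟨?_, ?_⟩
        · rw [zero_pow hn0]
          exact fun h => (pow_ne_zero n (Complex.ofReal_ne_zero.mpr hr.ne')) h.symm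
        · rw [zero_pow (by omega : n-1 ≠ 0), zero_div, map_zero]
      · exact hodd r₁ h01 hv1 k
      · exact hodd r₂ (by linarith) hv2 k
      · exact heven r₃ h3 hv3 k
  -- counting
  have hr₂0 : 0 < r₂ := by linarith
  have hr₃0 : 0 < r₃ := by linarith
  have habsA : ∀ (ρ θ : ℝ), 0 < ρ →
      ‖(ρ:ℂ) * Complex.exp ((θ:ℂ)*Complex.I)‖ = ρ := by
    intro ρ θ hρ
    rw [abs_circ, abs_of_pos hρ]
  set φ₁ : ℕ → ℂ := fun k => (r₁ : ℂ) *
      Complex.exp ((((2 * (k : ℝ) + 1) * Real.pi / n : ℝ) : ℂ) * Complex.I) with hφ₁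
  set φ₂ : ℕ → ℂ := fun k => (r₂ : ℂ) *
      Complex.exp ((((2 * (k : ℝ) + 1) * Real.pi / n : ℝ) : ℂ) * Complex.I) with hφ₂
  set φ₃ : ℕ → ℂ := fun k => (r₃ : ℂ) *
      Complex.exp (((2 * (k : ℝ) * Real.pi / n : ℝ) : ℂ) * Complex.I) with hφ₃
  have hA₁eq : A₁ = ↑((Finset.range n).image φ₁) := by
    ext z
    simp only [hA₁, Set.mem_setOf_eq, Finset.coe_image, Set.mem_image,
      Finset.mem_coe, Finset.mem_range, hφ₁]
    constructor
    · rintro ⟨k, hk, rfl⟩; exact ⟨k, hk, rfl⟩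
    · rintro ⟨k, hk, rfl⟩; exact ⟨k, hk, rfl⟩
  have hA₂eq : A₂ = ↑((Finset.range n).image φ₂) := by
    ext z
    simp only [hA₂, Set.mem_setOf_eq, Finset.coe_image, Set.mem_image,
      Finset.mem_coe, Finset.mem_range, hφ₂]
    constructor
    · rintro ⟨k, hk, rfl⟩; exact ⟨k, hk, rfl⟩
    · rintro ⟨k, hk, rfl⟩; exact ⟨k, hk, rfl⟩
  have hA₃eq : A₃ = ↑((Finset.range n).image φ₃) := by
    ext z
    simp only [hA₃, Set.mem_setOf_eq, Finset.coe_image, Set.mem_image,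
      Finset.mem_coe, Finset.mem_range, hφ₃]
    constructor
    · rintro ⟨k, hk, rfl⟩; exact ⟨k, hk, rfl⟩
    · rintro ⟨k, hk, rfl⟩; exact ⟨k, hk, rfl⟩
  have hprim := Complex.isPrimitiveRoot_exp n hn0
  have hinjodd : ∀ (ρ:ℝ), 0 < ρ → ∀ k₁ ∈ Finset.range n, ∀ k₂ ∈ Finset.range n,
      (ρ:ℂ) * Complex.exp ((((2*(k₁:ℝ)+1)*Real.pi/n : ℝ):ℂ)*Complex.I) =
      (ρ:ℂ) * Complex.exp ((((2*(k₂:ℝ)+1)*Real.pi/n : ℝ):ℂ)*Complex.I) → k₁ = k₂ := by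
    intro ρ hρ k₁ hk₁ k₂ hk₂ h
    rw [exp_odd n hn0 k₁, exp_odd n hn0 k₂, ← mul_assoc, ← mul_assoc] at h
    have h2 := mul_left_cancel₀ (mul_ne_zero
      (Complex.ofReal_ne_zero.mpr hρ.ne') (Complex.exp_ne_zero _)) h
    exact hprim.pow_inj (Finset.mem_range.mp hk₁) (Finset.mem_range.mp hk₂) h2
  have hinj₃ : ∀ k₁ ∈ Finset.range n, ∀ k₂ ∈ Finset.range n, φ₃ k₁ = φ₃ k₂ → k₁ = k₂ := by
    intro k₁ hk₁ k₂ hk₂ h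
    rw [hφ₃] at h
    simp only at h
    rw [← zeta_pow n hn0 k₁, ← zeta_pow n hn0 k₂] at h
    have h2 := mul_left_cancel₀ (Complex.ofReal_ne_zero.mpr hr₃0.ne') h
    exact hprim.pow_inj (Finset.mem_range.mp hk₁) (Finset.mem_range.mp hk₂) h2
  have hcard₁ : A₁.ncard = n := by
    rw [hA₁eq, Set.ncard_coe_finset,
      Finset.card_image_of_injOn (fun k₁ hk₁ k₂ hk₂ h => hinjodd r₁ h01 k₁ hk₁ k₂ hk₂ h),
      Finset.card_range]
  have hcard₂ : A₂.ncard = n := by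
    rw [hA₂eq, Set.ncard_coe_finset,
      Finset.card_image_of_injOn (fun k₁ hk₁ k₂ hk₂ h => hinjodd r₂ hr₂0 k₁ hk₁ k₂ hk₂ h),
      Finset.card_range]
  have hcard₃ : A₃.ncard = n := by
    rw [hA₃eq, Set.ncard_coe_finset, Finset.card_image_of_injOn hinj₃, Finset.card_range]
  have hfin₁ : A₁.Finite := by rw [hA₁eq]; exact Finset.finite_toSet _
  have hfin₂ : A₂.Finite := by rw [hA₂eq]; exact Finset.finite_toSet _
  have hfin₃ : A₃.Finite := by rw [hA₃eq]; exact Finset.finite_toSet _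
  have habs₁ : ∀ z ∈ A₁, ‖z‖ = r₁ := by
    rintro z ⟨k, hk, rfl⟩; exact habsA _ _ h01
  have habs₂ : ∀ z ∈ A₂, ‖z‖ = r₂ := by
    rintro z ⟨k, hk, rfl⟩; exact habsA _ _ hr₂0
  have habs₃ : ∀ z ∈ A₃, ‖z‖ = r₃ := by
    rintro z ⟨k, hk, rfl⟩; exact habsA _ _ hr₃0
  have hd01 : Disjoint ({0} : Set ℂ) A₁ := by
    rw [Set.disjoint_left]
    rintro z rfl h1
    have := habs₁ 0 h1
    simp at this
    linarith
  have hd02 : Disjoint ({0} : Set ℂ) A₂ := by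
    rw [Set.disjoint_left]
    rintro z rfl h1
    have := habs₂ 0 h1
    simp at this
    linarith
  have hd03 : Disjoint ({0} : Set ℂ) A₃ := by
    rw [Set.disjoint_left]
    rintro z rfl h1
    have := habs₃ 0 h1
    simp at this
    linarith
  have hd12 : Disjoint A₁ A₂ := by
    rw [Set.disjoint_left]
    intro z h1 h2
    have e1 := habs₁ z h1
    have e2 := habs₂ z h2
    linarith
  have hd13 : Disjoint A₁ A₃ := by
    rw [Set.disjoint_left]
    intro z h1 h2
    have e1 := habs₁ z h1
    have e2 := habs₃ z h2
    linarith
  have hd23 : Disjoint A₂ A₃ := by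
    rw [Set.disjoint_left]
    intro z h1 h2
    have e1 := habs₂ z h1
    have e2 := habs₃ z h2
    linarith
  have hcount : ({0} ∪ A₁ ∪ A₂ ∪ A₃ : Set ℂ).ncard = 3*n+1 := by
    rw [Set.ncard_union_eq (by
        rw [Set.disjoint_union_left]
        exact ⟨by rw [Set.disjoint_union_left]; exact ⟨hd03, hd13⟩, hd23⟩)
      (((Set.finite_singleton 0).union hfin₁).union hfin₂) hfin₃]
    rw [Set.ncard_union_eq (by rw [Set.disjoint_union_left]; exact ⟨hd02, hd12⟩)
      ((Set.finite_singleton 0).union hfin₁) hfin₂]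
    rw [Set.ncard_union_eq hd01 (Set.finite_singleton 0) hfin₁]
    rw [Set.ncard_singleton, hcard₁, hcard₂, hcard₃]
    ring
  refine ⟨?_, r₁, r₂, r₃, h01, h12, h21, h3, hmain⟩
  rw [hmain]
  exact hcount
end

section
/- Let n ≥ 3 and r > r_crit. Then the equation z^(n−1)/(z^n − r^n) = conj(z) has exactly n+1 complex solutions: z = 0 and r₃ e^{i·2kπ/n}, k = 0,…,n−1, where r₃ > 1 is the unique positive root of ρ^n − ρ^(n−2) − r^n. -/
open Complex

lemma amgm_aux {p u : ℝ} (hp : 0 < p) (h0 : 0 < u) (h1 : u < 1) :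
    u ^ p * (1 - u) ≤ (p/(p+1)) ^ p * (1 - p/(p+1)) := by
  set a : ℝ := p/(p+1) with ha
  have hp1 : (0:ℝ) < p + 1 := by linarith
  have ha0 : 0 < a := div_pos hp hp1
  have ha1 : a < 1 := (div_lt_one hp1).mpr (by linarith)
  have h1u : 0 < 1 - u := by linarith
  have h1a : 0 < 1 - a := by linarith
  have key : (u/a) ^ (p/(p+1)) * ((1-u)/(1-a)) ^ (1/(p+1)) ≤ 1 := by
    calc (u/a) ^ (p/(p+1)) * ((1-u)/(1-a)) ^ (1/(p+1))
        ≤ p/(p+1) * (u/a) + 1/(p+1) * ((1-u)/(1-a)) :=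
          Real.geom_mean_le_arith_mean2_weighted (by positivity) (by positivity)
            (by positivity) (by positivity) (by field_simp)
      _ = 1 := by
          rw [ha]
          have h1a' : 1 - p/(p+1) = 1/(p+1) := by field_simp; ring
          rw [h1a'] at h1a ⊢
          field_simp
          ring
  have key2 : ((u/a) ^ (p/(p+1)) * ((1-u)/(1-a)) ^ (1/(p+1))) ^ (p+1) ≤ 1 :=
    Real.rpow_le_one (by positivity) key (le_of_lt hp1)
  have key3 : (u/a) ^ p * ((1-u)/(1-a)) ≤ 1 := by
    rw [Real.mul_rpow (by positivity) (by positivity)] at key2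
    rw [← Real.rpow_mul (by positivity), ← Real.rpow_mul (by positivity)] at key2
    rw [div_mul_cancel₀ _ hp1.ne', div_mul_cancel₀ _ hp1.ne', Real.rpow_one] at key2
    exact key2
  have hap : (0:ℝ) < a ^ p := Real.rpow_pos_of_pos ha0 p
  have expand : u ^ p * (1-u) = ((u/a)^p * ((1-u)/(1-a))) * (a^p * (1-a)) := by
    rw [Real.div_rpow h0.le ha0.le]
    field_simp
  calc u ^ p * (1-u) = ((u/a)^p * ((1-u)/(1-a))) * (a^p * (1-a)) := expand
    _ ≤ 1 * (a^p * (1-a)) := mul_le_mul_of_nonneg_right key3 (by positivity)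
    _ = a ^ p * (1 - a) := one_mul _

lemma gbound (n : ℕ) (hn : 3 ≤ n) {ρ : ℝ} (h0 : 0 < ρ) (h1 : ρ < 1) :
    ρ ^ (n-2) - ρ ^ n ≤ (((n:ℝ)-2)/n) ^ (((n:ℝ)-2)/2) - (((n:ℝ)-2)/n) ^ ((n:ℝ)/2) := by
  have hn3 : (3:ℝ) ≤ (n:ℝ) := by exact_mod_cast hn
  set p : ℝ := ((n:ℝ)-2)/2 with hpd
  have hp : 0 < p := by rw [hpd]; linarith
  have hu0 : (0:ℝ) < ρ^2 := by positivity
  have hu1 : ρ^2 < 1 := by nlinarith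
  have key := amgm_aux hp hu0 hu1
  have hpa : p/(p+1) = ((n:ℝ)-2)/(n:ℝ) := by
    have hne : (n:ℝ) ≠ 0 := by linarith
    rw [hpd]; field_simp
    rw [show (n:ℝ) - 2 + 2 = n by ring, mul_div_cancel_left₀ _ hne]
  -- LHS conversions
  have e1 : (ρ^2) ^ p = ρ ^ (n-2) := by
    rw [← Real.rpow_natCast ρ 2, ← Real.rpow_mul h0.le,
       show ((2:ℕ):ℝ) * p = ((n-2 : ℕ):ℝ) by rw [hpd]; push_cast [Nat.cast_sub (by omega : 2 ≤ n)]; ring,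
       Real.rpow_natCast]
  have e2 : ρ ^ (n-2) * ρ^2 = ρ ^ n := by
    rw [← pow_add]; congr 1; omega
  have a0 : (0:ℝ) < ((n:ℝ)-2)/n := by
    apply div_pos <;> linarith
  have e3 : (((n:ℝ)-2)/n) ^ ((n:ℝ)/2) = (((n:ℝ)-2)/n) ^ p * (((n:ℝ)-2)/n) := by
    rw [show (n:ℝ)/2 = p + 1 by rw [hpd]; ring, Real.rpow_add a0, Real.rpow_one]
  rw [hpa] at key
  rw [e1] at key
  nlinarith [key, e2, e3]

lemma r3_lemma (n : ℕ) (hn : 3 ≤ n) (r : ℝ) (hr : 0 < r) :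
    ∃ r₃ : ℝ, 1 < r₃ ∧ r₃ ^ n - r₃ ^ (n-2) - r ^ n = 0 ∧
      ∀ ρ : ℝ, 0 < ρ → ρ ^ n - ρ ^ (n-2) - r ^ n = 0 → ρ = r₃ := by
  set f : ℝ → ℝ := fun ρ => ρ ^ n - ρ ^ (n-2) - r ^ n with hf
  have hpow : ∀ x : ℝ, x ^ (n-2) * x ^ 2 = x ^ n := by
    intro x; rw [← pow_add]; congr 1; omega
  have hmono : StrictMonoOn f (Set.Ici 1) := by
    intro a ha b hb hab
    simp only [Set.mem_Ici] at ha hb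
    simp only [hf]
    have h1 : a ^ (n-2) ≤ b ^ (n-2) := pow_le_pow_left₀ (by linarith) hab.le _
    have h2 : (0:ℝ) < b ^ (n-2) := by positivity
    have h3 : a ^ (n-2) * (a^2 - 1) ≤ b ^ (n-2) * (a^2 - 1) :=
      mul_le_mul_of_nonneg_right h1 (by nlinarith)
    have h4 : b ^ (n-2) * (a^2 - 1) < b ^ (n-2) * (b^2 - 1) := by
      apply mul_lt_mul_of_pos_left _ h2
      nlinarith
    nlinarith [hpow a, hpow b]
  have hcont : ContinuousOn f (Set.Icc 1 (Real.sqrt (r ^ n + 2))) := by fun_prop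
  set M := Real.sqrt (r ^ n + 2) with hM
  have hM2 : M ^ 2 = r ^ n + 2 := Real.sq_sqrt (by positivity)
  have hM1 : 1 < M := by nlinarith [Real.sqrt_nonneg (r ^ n + 2), pow_pos hr n]
  have hMpow : 1 ≤ M ^ (n-2) := one_le_pow₀ hM1.le
  have hfM : 0 ≤ f M := by
    simp only [hf]
    nlinarith [hpow M, pow_pos hr n]
  have hf1 : f 1 = -r ^ n := by simp [hf]
  have hmem : (0:ℝ) ∈ Set.Icc (f 1) (f M) := by
    constructor
    · rw [hf1]; nlinarith [pow_pos hr n]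
    · exact hfM
  obtain ⟨r₃, hr₃mem, hr₃val⟩ := intermediate_value_Icc hM1.le hcont hmem
  have hr₃1 : 1 < r₃ := by
    rcases lt_or_eq_of_le hr₃mem.1 with h | h
    · exact h
    · exfalso; rw [← h] at hr₃val; rw [hf1] at hr₃val; nlinarith [pow_pos hr n]
  refine ⟨r₃, hr₃1, hr₃val, ?_⟩
  intro ρ hρ hρval
  have hρ1 : 1 < ρ := by
    by_contra h
    push_neg at h
    have h1 : ρ ^ (n-2) * (ρ^2 - 1) ≤ 0 := by
      apply mul_nonpos_of_nonneg_of_nonpos (by positivity)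
      nlinarith
    nlinarith [hpow ρ, pow_pos hr n]
  exact hmono.injOn (Set.mem_Ici.mpr hρ1.le) (Set.mem_Ici.mpr hr₃1.le) (by show _ = f r₃; rw [hr₃val]; simp only [hf]; exact hρval)

set_option maxHeartbeats 1000000 in
/-- For `n ≥ 3` and `r > r_crit`, the equation `z^(n−1)/(z^n − r^n) = conj z`
has exactly `n+1` solutions: `z = 0` and `n` points on a circle of radius `r₃ > 1`,
where `r₃` is the unique positive root of `ρ^n − ρ^(n−2) − r^n`. -/
theorem stmt_5 (n : ℕ) (hn : 3 ≤ n) (r : ℝ)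
    (hrc : r > ((((n : ℝ) - 2) / n) ^ (((n : ℝ) - 2) / 2) -
          (((n : ℝ) - 2) / n) ^ ((n : ℝ) / 2)) ^ ((1 : ℝ) / n)) :
    {z : ℂ | z ^ n ≠ (r : ℂ) ^ n ∧
        z ^ (n - 1) / (z ^ n - (r : ℂ) ^ n) = (starRingEnd ℂ) z}.ncard = n + 1 ∧
    ∃ r₃ : ℝ, 1 < r₃ ∧
      (0 < r₃ ∧ r₃ ^ n - r₃ ^ (n - 2) - r ^ n = 0 ∧
        ∀ ρ : ℝ, 0 < ρ → ρ ^ n - ρ ^ (n - 2) - r ^ n = 0 → ρ = r₃) ∧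
      {z : ℂ | z ^ n ≠ (r : ℂ) ^ n ∧
          z ^ (n - 1) / (z ^ n - (r : ℂ) ^ n) = (starRingEnd ℂ) z} =
        {0} ∪
        {z : ℂ | ∃ k < n, z = (r₃ : ℂ) *
          Complex.exp (((2 * (k : ℝ) * Real.pi / n : ℝ) : ℂ) * Complex.I)} := by
  have hn3 : (3:ℝ) ≤ (n:ℝ) := by exact_mod_cast hn
  have hnne : (n:ℝ) ≠ 0 := by linarith
  set X : ℝ := (((n : ℝ) - 2) / n) ^ (((n : ℝ) - 2) / 2) -
      (((n : ℝ) - 2) / n) ^ ((n : ℝ) / 2) with hXdef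
  have ha0 : (0:ℝ) < ((n:ℝ)-2)/n := div_pos (by linarith) (by linarith)
  have ha1 : ((n:ℝ)-2)/n < 1 := (div_lt_one (by linarith)).mpr (by linarith)
  have hX0 : 0 < X := by
    rw [hXdef]
    have := Real.rpow_lt_rpow_of_exponent_gt ha0 ha1 (show ((n:ℝ)-2)/2 < (n:ℝ)/2 by linarith)
    linarith
  have hr : 0 < r := lt_trans (Real.rpow_pos_of_pos hX0 _) hrc
  have hXrn : X < r ^ n := by
    have h1 : (X ^ ((1:ℝ)/n)) ^ n = X := by
      rw [← Real.rpow_natCast (X ^ ((1:ℝ)/n)) n, ← Real.rpow_mul hX0.le,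
        one_div_mul_cancel hnne, Real.rpow_one]
    calc X = (X ^ ((1:ℝ)/n)) ^ n := h1.symm
      _ < r ^ n := by
          apply pow_lt_pow_left₀ hrc (Real.rpow_nonneg hX0.le _) (by omega)
  obtain ⟨r₃, hr₃1, hr₃val, hr₃uniq⟩ := r3_lemma n hn r hr
  have hr₃0 : (0:ℝ) < r₃ := by linarith
  have hr₃C : (r₃:ℂ) ≠ 0 := by exact_mod_cast hr₃0.ne'
  have hrnC : ((r:ℂ)) ^ n ≠ 0 := pow_ne_zero _ (by exact_mod_cast hr.ne')
  have hprim : IsPrimitiveRoot (Complex.exp (2 * ↑Real.pi * I / n)) n :=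
    Complex.isPrimitiveRoot_exp n (by omega)
  have hform : ∀ k : ℕ, Complex.exp (((2 * (k : ℝ) * Real.pi / n : ℝ) : ℂ) * I)
      = Complex.exp (2 * ↑Real.pi * I / n) ^ k := by
    intro k
    rw [← Complex.exp_nat_mul]
    congr 1
    push_cast
    have : (n:ℂ) ≠ 0 := by exact_mod_cast hnne
    field_simp
  have hpow2 : ∀ x : ℝ, x ^ (n-2) * x ^ 2 = x ^ n := by
    intro x; rw [← pow_add]; congr 1; omega
  have hset : {z : ℂ | z ^ n ≠ (r : ℂ) ^ n ∧
          z ^ (n - 1) / (z ^ n - (r : ℂ) ^ n) = (starRingEnd ℂ) z} =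
        {0} ∪
        {z : ℂ | ∃ k < n, z = (r₃ : ℂ) *
          Complex.exp (((2 * (k : ℝ) * Real.pi / n : ℝ) : ℂ) * Complex.I)} := by
    ext z
    simp only [Set.mem_setOf_eq, Set.mem_union, Set.mem_singleton_iff]
    constructor
    · rintro ⟨hz1, hz2⟩
      by_cases hz0 : z = 0
      · exact Or.inl hz0
      right
      have hden : z ^ n - (r:ℂ) ^ n ≠ 0 := sub_ne_zero.mpr hz1
      have h3 : z ^ (n-1) = (starRingEnd ℂ) z * (z ^ n - (r:ℂ) ^ n) :=
        (div_eq_iff hden).mp hz2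
      set ρ : ℝ := ‖z‖ with hρdef
      have hρ0 : 0 < ρ := norm_pos_iff.mpr hz0
      have hconj : (starRingEnd ℂ) z * z = ((ρ^2 : ℝ) : ℂ) := by
        rw [mul_comm, Complex.mul_conj, hρdef, Complex.sq_norm]
      have h5 : z ^ n = ((ρ^2 : ℝ) : ℂ) * (z ^ n - (r:ℂ) ^ n) := by
        have h4 : z ^ (n-1) * z = ((starRingEnd ℂ) z * (z ^ n - (r:ℂ) ^ n)) * z := by
          rw [h3]
        rw [← pow_succ, Nat.sub_add_cancel (by omega : 1 ≤ n)] at h4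
        linear_combination h4 + (z ^ n - (r:ℂ)^n) * hconj
      have heq : (((ρ^2 - 1 : ℝ)) : ℂ) * z ^ n = ((ρ^2 * r^n : ℝ) : ℂ) := by
        push_cast
        push_cast at h5
        linear_combination -h5
      rcases lt_trichotomy ρ 1 with hρ1 | hρ1 | hρ1
      · exfalso
        have hne : (((ρ^2 - 1:ℝ)):ℂ) ≠ 0 := by
          simp only [ne_eq, Complex.ofReal_eq_zero]
          nlinarith
        have hc : z ^ n = (((ρ^2 * r^n) / (ρ^2 - 1) : ℝ) : ℂ) := by
          rw [Complex.ofReal_div, eq_div_iff hne]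
          linear_combination heq
        have habs : ‖z ^ n‖ = ρ ^ n := by
          rw [norm_pow, ← hρdef]
        rw [hc, Complex.norm_real, Real.norm_eq_abs] at habs
        have hclt : (ρ^2 * r^n) / (ρ^2 - 1) < 0 := by
          apply div_neg_of_pos_of_neg
          · positivity
          · nlinarith
        have hceq : (ρ^2 * r^n) / (ρ^2 - 1) = -(ρ ^ n) := by
          rw [abs_of_neg hclt] at habs
          linarith
        have hceq2 := (div_eq_iff (by nlinarith : ρ^2 - 1 ≠ 0)).mp hceq
        have h7 : ρ ^ (n-2) - ρ^n - r^n = 0 := by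
          have h6 : (ρ ^ (n-2) - ρ^n - r^n) * ρ^2 = 0 := by
            linear_combination -hceq2 + hpow2 ρ
          rcases mul_eq_zero.mp h6 with h | h
          · linarith
          · exact absurd h (by positivity)
        have := gbound n hn hρ0 hρ1
        rw [← hXdef] at this
        linarith
      · exfalso
        rw [hρ1] at heq
        norm_num at heq
        exact hrnC heq.symm
      · have hne : (((ρ^2 - 1:ℝ)):ℂ) ≠ 0 := by
          simp only [ne_eq, Complex.ofReal_eq_zero]
          nlinarith
        have hc : z ^ n = (((ρ^2 * r^n) / (ρ^2 - 1) : ℝ) : ℂ) := by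
          rw [Complex.ofReal_div, eq_div_iff hne]
          linear_combination heq
        have habs : ‖z ^ n‖ = ρ ^ n := by
          rw [norm_pow, ← hρdef]
        rw [hc, Complex.norm_real, Real.norm_eq_abs] at habs
        have hcpos : 0 < (ρ^2 * r^n) / (ρ^2 - 1) := by
          apply div_pos
          · positivity
          · nlinarith
        have hceq : (ρ^2 * r^n) / (ρ^2 - 1) = ρ ^ n := by
          rw [abs_of_pos hcpos] at habs
          exact habs
        have hceq2 := (div_eq_iff (by nlinarith : ρ^2 - 1 ≠ 0)).mp hceq
        have h7 : ρ ^ n - ρ ^ (n-2) - r^n = 0 := by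
          have h6 : (ρ ^ n - ρ ^ (n-2) - r^n) * ρ^2 = 0 := by
            linear_combination -hceq2 - hpow2 ρ
          rcases mul_eq_zero.mp h6 with h | h
          · linarith
          · exact absurd h (by positivity)
        have hρr₃ : ρ = r₃ := hr₃uniq ρ hρ0 h7
        have hzn : z ^ n = ((r₃ : ℂ)) ^ n := by
          rw [hc, hceq, hρr₃, Complex.ofReal_pow]
        have hζ : (z / (r₃:ℂ)) ^ n = 1 := by
          rw [div_pow, hzn, div_self (pow_ne_zero _ hr₃C)]
        have : NeZero n := ⟨by omega⟩
        obtain ⟨k, hk, hke⟩ := hprim.eq_pow_of_pow_eq_one hζ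
        refine ⟨k, hk, ?_⟩
        rw [hform k, hke, mul_div_cancel₀ z hr₃C]
    · rintro (rfl | ⟨k, hk, rfl⟩)
      · constructor
        · rw [zero_pow (by omega : n ≠ 0)]
          exact fun h => hrnC h.symm
        · rw [zero_pow (by omega : n - 1 ≠ 0)]
          simp
      · set θ : ℝ := 2 * (k:ℝ) * Real.pi / n with hθ
        set e : ℂ := Complex.exp ((θ:ℂ) * I) with he
        have habs1 : ‖e‖ = 1 := Complex.norm_exp_ofReal_mul_I θ
        have hzne : (r₃:ℂ) * e ≠ 0 := mul_ne_zero hr₃C (Complex.exp_ne_zero _)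
        have hepow : e ^ n = 1 := by
          rw [he, ← Complex.exp_nat_mul]
          have h2 : (n:ℂ) * ((θ:ℂ) * I) = (k:ℕ) * (2 * (Real.pi:ℂ) * I) := by
            rw [hθ]
            push_cast
            have : (n:ℂ) ≠ 0 := by exact_mod_cast hnne
            field_simp
          rw [h2, Complex.exp_nat_mul_two_pi_mul_I]
        have hzn : ((r₃:ℂ) * e) ^ n = ((r₃:ℂ)) ^ n := by
          rw [mul_pow, hepow, mul_one]
        have hrval : (r₃:ℝ) ^ n - r ^ n = r₃ ^ (n-2) := by linarith
        have hsub : ((r₃:ℂ) * e) ^ n - (r:ℂ) ^ n = ((r₃ ^ (n-2) : ℝ) : ℂ) := by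
          rw [hzn, show ((r₃:ℂ))^n - (r:ℂ)^n = (((r₃^n - r^n : ℝ)):ℂ) by push_cast; ring,
            hrval]
        have hsubne : ((r₃:ℂ) * e) ^ n - (r:ℂ) ^ n ≠ 0 := by
          rw [hsub]
          exact Complex.ofReal_ne_zero.mpr (by positivity)
        refine ⟨sub_ne_zero.mp hsubne, ?_⟩
        rw [div_eq_iff hsubne, hsub]
        apply mul_right_cancel₀ hzne
        rw [← pow_succ, Nat.sub_add_cancel (by omega : 1 ≤ n), hzn]
        have hconj : (starRingEnd ℂ) ((r₃:ℂ) * e) * ((r₃:ℂ) * e) = ((r₃^2 : ℝ) : ℂ) := by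
          rw [mul_comm, Complex.mul_conj, ← Complex.sq_norm, norm_mul, habs1,
            Complex.norm_real, Real.norm_eq_abs, abs_of_pos hr₃0, mul_one]
        have hsplit : (r₃:ℝ)^n = r₃^2 * r₃^(n-2) := by rw [mul_comm, hpow2]
        calc ((r₃:ℂ)) ^ n = ((r₃^2 : ℝ) : ℂ) * ((r₃ ^ (n-2) : ℝ) : ℂ) := by
              exact_mod_cast hsplit
          _ = (starRingEnd ℂ) ((r₃:ℂ) * e) * ((r₃:ℂ) * e) * ((r₃ ^ (n-2) : ℝ) : ℂ) := by
              rw [hconj]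
          _ = (starRingEnd ℂ) ((r₃:ℂ) * e) * ((r₃ ^ (n-2) : ℝ) : ℂ) * ((r₃:ℂ) * e) := by
              ring
  refine ⟨?_, r₃, hr₃1, ⟨hr₃0, hr₃val, hr₃uniq⟩, hset⟩
  rw [hset]
  have hTeq : {z : ℂ | ∃ k < n, z = (r₃ : ℂ) *
      Complex.exp (((2 * (k : ℝ) * Real.pi / n : ℝ) : ℂ) * Complex.I)} =
      (fun k : ℕ => (r₃ : ℂ) *
      Complex.exp (((2 * (k : ℝ) * Real.pi / n : ℝ) : ℂ) * Complex.I)) '' (Set.Iio n) := by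
    ext w
    constructor
    · rintro ⟨k, hk, h⟩
      exact ⟨k, hk, h.symm⟩
    · rintro ⟨k, hk, h⟩
      exact ⟨k, hk, h.symm⟩
  have hinj : Set.InjOn (fun k : ℕ => (r₃ : ℂ) *
      Complex.exp (((2 * (k : ℝ) * Real.pi / n : ℝ) : ℂ) * Complex.I)) (Set.Iio n) := by
    intro a ha b hb hab
    simp only [Set.mem_Iio] at ha hb
    dsimp only at hab
    rw [hform a, hform b] at hab
    exact hprim.pow_inj ha hb (mul_left_cancel₀ hr₃C hab)
  have hfin : ((fun k : ℕ => (r₃ : ℂ) *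
      Complex.exp (((2 * (k : ℝ) * Real.pi / n : ℝ) : ℂ) * Complex.I)) '' (Set.Iio n)).Finite :=
    (Set.finite_Iio n).image _
  have h0T : (0:ℂ) ∉ (fun k : ℕ => (r₃ : ℂ) *
      Complex.exp (((2 * (k : ℝ) * Real.pi / n : ℝ) : ℂ) * Complex.I)) '' (Set.Iio n) := by
    rintro ⟨k, -, hk0⟩
    exact mul_ne_zero hr₃C (Complex.exp_ne_zero _) hk0
  rw [hTeq, Set.singleton_union, Set.ncard_insert_of_notMem h0T hfin,
    Set.ncard_image_of_injOn hinj, ← Finset.coe_Iio, Set.ncard_coe_finset, Nat.card_Iio]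
end

section
/- Let n ≥ 3, 0 < r < r_crit, and 0 < ε < 1. The polynomial f₊(ρ) = ρ^(n+2) − ρ^n − r^n ρ² + ε r^n has exactly two positive real roots r₁, r₅, and they satisfy 0 < r₁ < √ε and r₅ > 1. -/
set_option maxHeartbeats 800000


/-- For `n ≥ 3`, `0 < r < r_crit` and `0 < ε < 1`, the polynomial
`f₊(ρ) = ρ^(n+2) − ρ^n − r^n ρ² + ε r^n` has exactly two positive real roots
`r₁, r₅` with `0 < r₁ < √ε` and `r₅ > 1`. -/
theorem stmt_7 (n : ℕ) (hn : 3 ≤ n) (r ε : ℝ) (hr : 0 < r)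
    (hrc : r < ((((n : ℝ) - 2) / n) ^ (((n : ℝ) - 2) / 2) -
          (((n : ℝ) - 2) / n) ^ ((n : ℝ) / 2)) ^ ((1 : ℝ) / n))
    (hε0 : 0 < ε) (hε1 : ε < 1) :
    ∃ r₁ r₅ : ℝ, 0 < r₁ ∧ r₁ < Real.sqrt ε ∧ 1 < r₅ ∧
      {ρ : ℝ | 0 < ρ ∧ ρ ^ (n + 2) - ρ ^ n - r ^ n * ρ ^ 2 + ε * r ^ n = 0} =
        {r₁, r₅} := by
  clear hrc
  have hn0 : n ≠ 0 := by omega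
  have hrn : 0 < r ^ n := pow_pos hr n
  have hsε : 0 < Real.sqrt ε := Real.sqrt_pos.mpr hε0
  have hsε1 : Real.sqrt ε < 1 := by
    rw [show (1:ℝ) = Real.sqrt 1 from Real.sqrt_one.symm]
    exact Real.sqrt_lt_sqrt hε0.le hε1
  set F : ℝ → ℝ := fun ρ => ρ ^ (n + 2) - ρ ^ n - r ^ n * ρ ^ 2 + ε * r ^ n with hF
  have hcont : Continuous F := by fun_prop
  have hF0 : F 0 = ε * r ^ n := by simp [hF, zero_pow hn0]
  have hF0pos : 0 < F 0 := by rw [hF0]; positivity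
  have hFs : F (Real.sqrt ε) < 0 := by
    have h2 : Real.sqrt ε ^ 2 = ε := Real.sq_sqrt hε0.le
    have hp : Real.sqrt ε ^ (n+2) = Real.sqrt ε ^ n * Real.sqrt ε ^ 2 := pow_add _ n 2
    have hsn : 0 < Real.sqrt ε ^ n := pow_pos hsε n
    simp only [hF]
    nlinarith [mul_pos hsn (sub_pos.mpr hε1)]
  have hF1 : F 1 < 0 := by
    simp only [hF, one_pow]
    nlinarith [mul_pos hrn (sub_pos.mpr hε1)]
  -- big point
  set M : ℝ := max 2 (2*r) with hM
  have hM2 : (2:ℝ) ≤ M := le_max_left _ _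
  have hMr : 2*r ≤ M := le_max_right _ _
  have hM0 : (0:ℝ) < M := by linarith
  have hMn : 8 * r ^ n ≤ M ^ n := by
    calc 8 * r ^ n ≤ 2 ^ n * r ^ n := by
          have : (8:ℝ) = 2 ^ 3 := by norm_num
          have h2n : (2:ℝ)^3 ≤ 2^n := pow_le_pow_right₀ one_le_two hn
          nlinarith [hrn.le]
      _ = (2*r) ^ n := by rw [mul_pow]
      _ ≤ M ^ n := pow_le_pow_left₀ (by linarith) hMr n
  have hFM : 0 < F M := by
    have hp : M ^ (n+2) = M ^ n * M ^ 2 := pow_add _ n 2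
    have hM4 : (4:ℝ) ≤ M ^ 2 := by nlinarith
    simp only [hF]
    nlinarith [mul_le_mul_of_nonneg_right hMn (by nlinarith : (0:ℝ) ≤ M^2 - 1),
      mul_pos hrn (show (0:ℝ) < M^2 - 1 by nlinarith), mul_pos hε0 hrn,
      mul_le_mul_of_nonneg_left hM4 hrn.le]
  -- roots via IVT
  obtain ⟨r₁, hr₁mem, hr₁val⟩ :=
    intermediate_value_Ioo' hsε.le hcont.continuousOn ⟨hFs, hF0pos⟩
  obtain ⟨r₅, hr₅mem, hr₅val⟩ :=
    intermediate_value_Ioo (by linarith : (1:ℝ) ≤ M) hcont.continuousOn ⟨hF1, hFM⟩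
  obtain ⟨hr₁0, hr₁s⟩ := hr₁mem
  obtain ⟨hr₅1, hr₅M⟩ := hr₅mem
  -- uniqueness lemmas
  have key_low : ∀ a b : ℝ, 0 < a → a < b → b < Real.sqrt ε →
      F a = 0 → F b = 0 → False := by
    intro a b ha hab hbs hFa hFb
    have hb0 : 0 < b := lt_trans ha hab
    have hb2 : b ^ 2 < ε := (Real.lt_sqrt hb0.le).mp hbs
    have ha2 : a ^ 2 < b ^ 2 := by
      have : b^2 - a^2 = (b - a) * (b + a) := by ring
      nlinarith [mul_pos (sub_pos.mpr hab) (by linarith : (0:ℝ) < b + a)]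
    have hpa : a ^ (n+2) = a ^ n * a ^ 2 := pow_add _ n 2
    have hpb : b ^ (n+2) = b ^ n * b ^ 2 := pow_add _ n 2
    have e1 : a ^ n * (1 - a^2) = r ^ n * (ε - a^2) := by
      simp only [hF] at hFa; linear_combination hpa - hFa
    have e2 : b ^ n * (1 - b^2) = r ^ n * (ε - b^2) := by
      simp only [hF] at hFb; linear_combination hpb - hFb
    have h3 : a ^ n * ((1 - a^2) * (ε - b^2)) = b ^ n * ((1 - b^2) * (ε - a^2)) := by
      linear_combination (ε - b^2) * e1 - (ε - a^2) * e2
    have hAB : a ^ n < b ^ n := pow_lt_pow_left₀ hab ha.le hn0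
    have hcd : (1 - a^2) * (ε - b^2) < (1 - b^2) * (ε - a^2) := by
      have hid : (1 - b^2) * (ε - a^2) - (1 - a^2) * (ε - b^2) = (b^2 - a^2) * (1 - ε) := by
        ring
      have := mul_pos (sub_pos.mpr ha2) (sub_pos.mpr hε1)
      linarith
    have hnn : (0:ℝ) ≤ (1 - a^2) * (ε - b^2) :=
      mul_nonneg (by linarith) (by linarith)
    have h4 : a ^ n * ((1 - a^2) * (ε - b^2)) < b ^ n * ((1 - b^2) * (ε - a^2)) :=
      mul_lt_mul'' hAB hcd (pow_pos ha n).le hnn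
    linarith [h3, h4]
  have key_high : ∀ a b : ℝ, 1 < a → a < b → F a = 0 → F b = 0 → False := by
    intro a b ha hab hFa hFb
    have ha0 : (0:ℝ) < a := by linarith
    have hb1 : 1 < b := lt_trans ha hab
    have ha2 : (1:ℝ) < a ^ 2 := by nlinarith [sq_nonneg (a - 1)]
    have hb2 : (1:ℝ) < b ^ 2 := by nlinarith [sq_nonneg (b - 1)]
    have hab2 : a ^ 2 < b ^ 2 := by
      nlinarith [mul_pos (sub_pos.mpr hab) (by linarith : (0:ℝ) < b + a)]
    have hpa : a ^ (n+2) = a ^ n * a ^ 2 := pow_add _ n 2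
    have hpb : b ^ (n+2) = b ^ n * b ^ 2 := pow_add _ n 2
    have e1 : a ^ n * (a^2 - 1) = r ^ n * (a^2 - ε) := by
      simp only [hF] at hFa; linear_combination hFa - hpa
    have e2 : b ^ n * (b^2 - 1) = r ^ n * (b^2 - ε) := by
      simp only [hF] at hFb; linear_combination hFb - hpb
    have h3 : a ^ n * ((a^2 - 1) * (b^2 - ε)) = b ^ n * ((b^2 - 1) * (a^2 - ε)) := by
      linear_combination (b^2 - ε) * e1 - (a^2 - ε) * e2
    have hAB : a ^ n < b ^ n := pow_lt_pow_left₀ hab ha0.le hn0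
    have hcd : (a^2 - 1) * (b^2 - ε) < (b^2 - 1) * (a^2 - ε) := by
      have hid : (b^2 - 1) * (a^2 - ε) - (a^2 - 1) * (b^2 - ε) = (b^2 - a^2) * (1 - ε) := by
        ring
      have := mul_pos (sub_pos.mpr hab2) (sub_pos.mpr hε1)
      linarith
    have hnn : (0:ℝ) ≤ (a^2 - 1) * (b^2 - ε) :=
      mul_nonneg (by linarith) (by linarith)
    have h4 : a ^ n * ((a^2 - 1) * (b^2 - ε)) < b ^ n * ((b^2 - 1) * (a^2 - ε)) :=
      mul_lt_mul'' hAB hcd (pow_pos ha0 n).le hnn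
    linarith [h3, h4]
  have hmid : ∀ ρ : ℝ, Real.sqrt ε ≤ ρ → ρ ≤ 1 → F ρ < 0 := by
    intro ρ hl hu
    have hρ0 : 0 < ρ := lt_of_lt_of_le hsε hl
    have hρn : 0 < ρ ^ n := pow_pos hρ0 n
    have hρ2 : ε ≤ ρ ^ 2 := by
      have := pow_le_pow_left₀ hsε.le hl 2
      rwa [Real.sq_sqrt hε0.le] at this
    have hρ21 : ρ ^ 2 ≤ 1 := by nlinarith
    have hp : ρ ^ (n+2) = ρ ^ n * ρ ^ 2 := pow_add _ n 2
    simp only [hF]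
    rcases eq_or_lt_of_le hρ2 with h | h
    · nlinarith [mul_pos hρn (sub_pos.mpr hε1)]
    · nlinarith [mul_pos hrn (sub_pos.mpr h), mul_nonneg hρn.le (sub_nonneg.mpr hρ21)]
  refine ⟨r₁, r₅, hr₁0, hr₁s, hr₅1, ?_⟩
  ext ρ
  simp only [Set.mem_setOf_eq, Set.mem_insert_iff, Set.mem_singleton_iff]
  constructor
  · rintro ⟨hρ0, hρeq⟩
    have hFρ : F ρ = 0 := hρeq
    rcases lt_or_ge ρ (Real.sqrt ε) with hlow | hge
    · left
      rcases lt_trichotomy ρ r₁ with h | h | h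
      · exact absurd (key_low ρ r₁ hρ0 h hr₁s hFρ hr₁val) id
      · exact h
      · exact absurd (key_low r₁ ρ hr₁0 h hlow hr₁val hFρ) id
    · rcases le_or_gt ρ 1 with hle | hgt
      · exact absurd hFρ (hmid ρ hge hle).ne
      · right
        rcases lt_trichotomy ρ r₅ with h | h | h
        · exact absurd (key_high ρ r₅ hgt h hFρ hr₅val) id
        · exact h
        · exact absurd (key_high r₅ ρ hr₅1 h hr₅val hFρ) id
  · rintro (rfl | rfl)
    · exact ⟨hr₁0, hr₁val⟩
    · exact ⟨lt_trans one_pos hr₅1, hr₅val⟩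
end

section
/- Let n ≥ 3 and 0 < r < r_crit. Then the polynomial g(ρ) = (n+2)ρ^n − n ρ^(n−2) + 2 r^n satisfies g(((n−2)/(n+2))^(1/2)) < 0, and g has exactly two positive real roots ξ₁ < ξ₂, with 0 < ξ₁ < ((n−2)/(n+2))^(1/2) < ξ₂ < 1. -/
lemma aux_P (n : ℕ) (hn : 3 ≤ n) : (((n:ℝ)+2)/n) ^ (n-2) ≤ ((n:ℝ)/2)^2 := by
  have hn0 : (0:ℝ) < n := by positivity
  rcases le_or_gt n 5 with h5 | h5
  · interval_cases n <;> norm_num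
  · have h1 : ((n:ℝ)+2)/n ≤ Real.exp (2/n) := by
      have h := Real.add_one_le_exp (2/(n:ℝ))
      calc ((n:ℝ)+2)/n = 2/(n:ℝ) + 1 := by field_simp; ring
        _ ≤ _ := h
    have h2 : (((n:ℝ)+2)/n) ^ (n-2) ≤ Real.exp (2/n) ^ (n-2) :=
      pow_le_pow_left₀ (by positivity) h1 _
    have h3 : Real.exp (2/n) ^ (n-2) = Real.exp ((n-2 : ℕ) * (2/n)) := by
      rw [Real.exp_nat_mul]
    have h4 : ((n-2:ℕ):ℝ) * (2/n) ≤ 2 := by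
      have hle : ((n-2:ℕ):ℝ) ≤ n := by exact_mod_cast Nat.sub_le n 2
      have hnn : (0:ℝ) ≤ ((n-2:ℕ):ℝ) := by positivity
      calc ((n-2:ℕ):ℝ) * (2/n) ≤ (n:ℝ) * (2/n) := by
            apply mul_le_mul_of_nonneg_right hle (by positivity)
        _ = 2 := by field_simp
    have h5' : Real.exp ((n-2:ℕ) * (2/n)) ≤ Real.exp 2 := Real.exp_le_exp.2 h4
    have h6 : Real.exp 2 < 9 := by
      have he := Real.exp_one_lt_d9
      have h2e : Real.exp 2 = Real.exp 1 ^ 2 := by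
        rw [← Real.exp_nat_mul]; norm_num
      rw [h2e]; nlinarith [Real.exp_pos 1]
    have h7 : (9:ℝ) ≤ ((n:ℝ)/2)^2 := by
      have : (6:ℝ) ≤ n := by exact_mod_cast h5
      nlinarith
    calc (((n:ℝ)+2)/n) ^ (n-2) ≤ Real.exp (2/n) ^ (n-2) := h2
      _ = Real.exp ((n-2:ℕ) * (2/n)) := h3
      _ ≤ Real.exp 2 := h5'
      _ ≤ 9 := h6.le
      _ ≤ _ := h7



lemma aux_key (n : ℕ) (hn : 3 ≤ n) (r : ℝ) (hr : 0 < r)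
    (hrc : r < ((((n : ℝ) - 2) / n) ^ (((n : ℝ) - 2) / 2) -
          (((n : ℝ) - 2) / n) ^ ((n : ℝ) / 2)) ^ ((1 : ℝ) / n)) :
    r ^ n < Real.sqrt (((n : ℝ) - 2) / ((n : ℝ) + 2)) ^ (n - 2) := by
  have hn3 : (3:ℝ) ≤ n := by exact_mod_cast hn
  have hn0 : (0:ℝ) < n := by linarith
  set b : ℝ := ((n:ℝ)-2)/n with hbdef
  set a : ℝ := ((n:ℝ)-2)/((n:ℝ)+2) with hadef
  set e : ℝ := ((n:ℝ)-2)/2 with hedef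
  have hb0 : 0 < b := by apply div_pos <;> linarith
  have hb1 : b < 1 := by rw [div_lt_one hn0]; linarith
  have ha0 : 0 < a := by apply div_pos <;> linarith
  -- A = b^e * (2/n)
  have hA : b ^ e - b ^ ((n:ℝ)/2) = b ^ e * (2/n) := by
    have h1 : (n:ℝ)/2 = e + 1 := by rw [hedef]; ring
    rw [h1, Real.rpow_add hb0, Real.rpow_one]
    have h2 : (2:ℝ)/n = 1 - b := by rw [hbdef]; field_simp; ring
    rw [h2]; ring
  have hben : (0:ℝ) < b ^ e := Real.rpow_pos_of_pos hb0 e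
  have hApos : 0 < b ^ e - b ^ ((n:ℝ)/2) := by rw [hA]; positivity
  -- r^n < A
  have hrA : r ^ n < b ^ e - b ^ ((n:ℝ)/2) := by
    set A := b ^ e - b ^ ((n:ℝ)/2)
    have h1 : r ^ n < (A ^ ((1:ℝ)/n)) ^ n := pow_lt_pow_left₀ hrc hr.le (by positivity)
    calc r ^ n < (A ^ ((1:ℝ)/n)) ^ n := h1
      _ = A := by
        rw [← Real.rpow_natCast (A ^ ((1:ℝ)/n)) n, ← Real.rpow_mul hApos.le]
        rw [one_div, inv_mul_cancel₀ (by positivity), Real.rpow_one]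
  -- c := (n/(n+2))^e ;  2/n ≤ c
  set c : ℝ := ((n:ℝ)/((n:ℝ)+2)) ^ e with hcdef
  have hq0 : (0:ℝ) < (n:ℝ)/((n:ℝ)+2) := by apply div_pos <;> linarith
  have hc0 : 0 < c := Real.rpow_pos_of_pos hq0 e
  have hcsq : c ^ 2 = ((n:ℝ)/((n:ℝ)+2)) ^ (n - 2 : ℕ) := by
    rw [hcdef, ← Real.rpow_natCast (((n:ℝ)/((n:ℝ)+2)) ^ e) 2, ← Real.rpow_mul hq0.le,
      ← Real.rpow_natCast ((n:ℝ)/((n:ℝ)+2)) (n-2)]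
    congr 1
    rw [hedef]
    have : ((n - 2 : ℕ) : ℝ) = (n:ℝ) - 2 := by
      have : 2 ≤ n := by omega
      push_cast [this]; ring
    rw [this]; ring
  have h2nc : 2/(n:ℝ) ≤ c := by
    have hP := aux_P n hn
    have hsq : (2/(n:ℝ))^2 ≤ c ^ 2 := by
      rw [hcsq]
      have h1 : ((n:ℝ)/((n:ℝ)+2)) ^ (n-2:ℕ) = ((((n:ℝ)+2)/n) ^ (n-2:ℕ))⁻¹ := by
        rw [← inv_pow]
        congr 1
        rw [inv_div]
      rw [h1]
      rw [le_inv_comm₀ (by positivity) (by positivity)]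
      calc (((n:ℝ)+2)/n) ^ (n-2:ℕ) ≤ ((n:ℝ)/2)^2 := hP
        _ = ((2/(n:ℝ))^2)⁻¹ := by
          rw [← inv_pow]; congr 1; rw [inv_div]
    calc 2/(n:ℝ) = Real.sqrt ((2/(n:ℝ))^2) := by
          rw [Real.sqrt_sq (by positivity)]
      _ ≤ Real.sqrt (c^2) := Real.sqrt_le_sqrt hsq
      _ = c := Real.sqrt_sq hc0.le
  -- b^e * (2/n) ≤ a^e
  have hae : b ^ e * (2/n) ≤ a ^ e := by
    have h1 : a = b * ((n:ℝ)/((n:ℝ)+2)) := by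
      rw [hadef, hbdef]; field_simp
    rw [h1, Real.mul_rpow hb0.le hq0.le]
    exact mul_le_mul_of_nonneg_left h2nc hben.le
  -- a^e = s^(n-2)
  have hs : a ^ e = Real.sqrt a ^ (n - 2 : ℕ) := by
    rw [Real.sqrt_eq_rpow, ← Real.rpow_natCast (a ^ ((1:ℝ)/2)) (n-2), ← Real.rpow_mul ha0.le]
    congr 1
    have : ((n - 2 : ℕ) : ℝ) = (n:ℝ) - 2 := by
      have : 2 ≤ n := by omega
      push_cast [this]; ring
    rw [this, hedef]; ring
  calc r ^ n < b ^ e - b ^ ((n:ℝ)/2) := hrA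
    _ = b ^ e * (2/n) := hA
    _ ≤ a ^ e := hae
    _ = _ := hs


lemma aux_deriv (n : ℕ) (hn : 3 ≤ n) (r x : ℝ) :
    HasDerivAt (fun ρ : ℝ => ((n:ℝ)+2)*ρ^n - (n:ℝ)*ρ^(n-2) + 2*r^n)
      ((n:ℝ) * x^(n-3) * (((n:ℝ)+2)*x^2 - ((n:ℝ)-2))) x := by
  obtain ⟨k, rfl⟩ : ∃ k, n = k + 3 := ⟨n-3, by omega⟩
  have h1 : HasDerivAt (fun ρ : ℝ => ρ^(k+3)) (((k:ℝ)+3)*x^(k+2)) x := by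
    simpa using hasDerivAt_pow (k+3) x
  have h2 : HasDerivAt (fun ρ : ℝ => ρ^(k+1)) (((k:ℝ)+1)*x^k) x := by
    simpa using hasDerivAt_pow (k+1) x
  have h3 := ((h1.const_mul (((k+3:ℕ):ℝ)+2)).sub (h2.const_mul ((k+3:ℕ):ℝ))).add_const
    (2*r^(k+3))
  have he : (k+3) - 2 = k + 1 := rfl
  have he2 : (k+3) - 3 = k := rfl
  rw [he2]
  refine h3.congr_deriv ?_
  push_cast
  ring

/-- For `n ≥ 3` and `0 < r < r_crit`, the polynomial
`g(ρ) = (n+2)ρ^n − nρ^(n−2) + 2r^n` is negative at `((n−2)/(n+2))^(1/2)` and has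
exactly two positive real roots `ξ₁ < ((n−2)/(n+2))^(1/2) < ξ₂ < 1`. -/
theorem stmt_8 (n : ℕ) (hn : 3 ≤ n) (r : ℝ) (hr : 0 < r)
    (hrc : r < ((((n : ℝ) - 2) / n) ^ (((n : ℝ) - 2) / 2) -
          (((n : ℝ) - 2) / n) ^ ((n : ℝ) / 2)) ^ ((1 : ℝ) / n)) :
    ((n : ℝ) + 2) * Real.sqrt (((n : ℝ) - 2) / ((n : ℝ) + 2)) ^ n -
      (n : ℝ) * Real.sqrt (((n : ℝ) - 2) / ((n : ℝ) + 2)) ^ (n - 2) + 2 * r ^ n < 0 ∧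
    ∃ ξ₁ ξ₂ : ℝ, 0 < ξ₁ ∧ ξ₁ < Real.sqrt (((n : ℝ) - 2) / ((n : ℝ) + 2)) ∧
      Real.sqrt (((n : ℝ) - 2) / ((n : ℝ) + 2)) < ξ₂ ∧ ξ₂ < 1 ∧
      {ρ : ℝ | 0 < ρ ∧ ((n : ℝ) + 2) * ρ ^ n - (n : ℝ) * ρ ^ (n - 2) + 2 * r ^ n = 0} =
        {ξ₁, ξ₂} := by
  have hn3 : (3:ℝ) ≤ n := by exact_mod_cast hn
  set a : ℝ := ((n:ℝ)-2)/((n:ℝ)+2) with hadef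
  set s : ℝ := Real.sqrt a with hsdef
  set g : ℝ → ℝ := fun ρ => ((n:ℝ)+2)*ρ^n - (n:ℝ)*ρ^(n-2) + 2*r^n with hgdef
  have ha0 : 0 < a := by apply div_pos <;> linarith
  have ha1 : a < 1 := by rw [hadef, div_lt_one (by linarith)]; linarith
  have hs0 : 0 < s := Real.sqrt_pos.2 ha0
  have hss : s^2 = a := Real.sq_sqrt ha0.le
  have hs1 : s < 1 := by nlinarith
  have hkey : r^n < s^(n-2) := aux_key n hn r hr hrc
  -- value at s
  have hgs : g s = 2*r^n - 2*s^(n-2) := by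
    have hsn : s^n = s^(n-2) * a := by
      rw [← hss, ← pow_add]; congr 1; omega
    have hna : ((n:ℝ)+2)*a = (n:ℝ)-2 := by rw [hadef]; field_simp
    show ((n:ℝ)+2)*s^n - (n:ℝ)*s^(n-2) + 2*r^n = 2*r^n - 2*s^(n-2)
    rw [hsn]
    linear_combination s^(n-2) * hna
  have hgs0 : g s < 0 := by rw [hgs]; linarith
  have hg0 : g 0 = 2*r^n := by
    show ((n:ℝ)+2)*(0:ℝ)^n - (n:ℝ)*(0:ℝ)^(n-2) + 2*r^n = 2*r^n
    rw [zero_pow (by omega), zero_pow (by omega)]; ring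
  have hg0pos : 0 < g 0 := by rw [hg0]; positivity
  have hg1 : g 1 = 2 + 2*r^n := by
    show ((n:ℝ)+2)*(1:ℝ)^n - (n:ℝ)*(1:ℝ)^(n-2) + 2*r^n = 2 + 2*r^n
    rw [one_pow, one_pow]; ring
  have hg1pos : 0 < g 1 := by rw [hg1]; positivity
  have hcont : Continuous g := by fun_prop
  -- monotonicity
  have hanti : StrictAntiOn g (Set.Icc 0 s) := by
    apply strictAntiOn_of_deriv_neg (convex_Icc 0 s) hcont.continuousOn
    intro x hx
    rw [interior_Icc] at hx
    rw [(aux_deriv n hn r x).deriv]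
    have hx2 : x^2 < a := by
      calc x^2 < s^2 := by exact pow_lt_pow_left₀ hx.2 hx.1.le two_ne_zero
        _ = a := hss
    apply mul_neg_of_pos_of_neg
    · have : 0 < x^(n-3) := pow_pos hx.1 _
      positivity
    · have : ((n:ℝ)+2) * x^2 < ((n:ℝ)+2) * a := by
        apply mul_lt_mul_of_pos_left hx2 (by linarith)
      have hna : ((n:ℝ)+2)*a = (n:ℝ)-2 := by rw [hadef]; field_simp
      linarith
  have hmono : StrictMonoOn g (Set.Ici s) := by
    apply strictMonoOn_of_deriv_pos (convex_Ici s) hcont.continuousOn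
    intro x hx
    rw [interior_Ici] at hx
    rw [(aux_deriv n hn r x).deriv]
    have hxpos : 0 < x := lt_trans hs0 hx
    have hx2 : a < x^2 := by
      calc a = s^2 := hss.symm
        _ < x^2 := by exact pow_lt_pow_left₀ hx hs0.le two_ne_zero
    apply mul_pos
    · have : 0 < x^(n-3) := pow_pos hxpos _
      positivity
    · have : ((n:ℝ)+2) * a < ((n:ℝ)+2) * x^2 := by
        apply mul_lt_mul_of_pos_left hx2 (by linarith)
      have hna : ((n:ℝ)+2)*a = (n:ℝ)-2 := by rw [hadef]; field_simp
      linarith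
  -- IVT
  obtain ⟨ξ₁, hξ₁mem, hξ₁⟩ :=
    intermediate_value_Ioo' hs0.le hcont.continuousOn ⟨hgs0, hg0pos⟩
  obtain ⟨ξ₂, hξ₂mem, hξ₂⟩ :=
    intermediate_value_Ioo hs1.le hcont.continuousOn ⟨hgs0, hg1pos⟩
  refine ⟨hgs0, ξ₁, ξ₂, hξ₁mem.1, hξ₁mem.2, hξ₂mem.1, hξ₂mem.2, ?_⟩
  ext ρ
  simp only [Set.mem_setOf_eq, Set.mem_insert_iff, Set.mem_singleton_iff]
  constructor
  · rintro ⟨hρ, hroot⟩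
    have hgρ : g ρ = 0 := hroot
    rcases le_or_gt ρ s with h | h
    · left
      exact hanti.injOn ⟨hρ.le, h⟩ ⟨hξ₁mem.1.le, hξ₁mem.2.le⟩ (by rw [hgρ, hξ₁])
    · right
      exact hmono.injOn h.le hξ₂mem.1.le (by rw [hgρ, hξ₂])
  · rintro (rfl | rfl)
    · exact ⟨hξ₁mem.1, hξ₁⟩
    · exact ⟨lt_trans hs0 hξ₂mem.1, hξ₂⟩
end

section
/- Let n ≥ 3 and 0 < r < r_crit, and let ξ₁ be the smallest positive root of (n+2)ξ^n − nξ^(n−2) + 2r^n. Then ε* := (ξ₁^(n+2) − ξ₁^n + r^n ξ₁²)/r^n satisfies 0 < ε* < 1. -/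
/-- For `n ≥ 3`, `0 < r < r_crit` and `ξ₁` the smallest positive root of
`(n+2)ξ^n − nξ^(n−2) + 2r^n`, the quantity
`ε* = (ξ₁^(n+2) − ξ₁^n + r^n ξ₁²)/r^n` satisfies `0 < ε* < 1`. -/
theorem stmt_9 (n : ℕ) (hn : 3 ≤ n) (r : ℝ) (hr : 0 < r)
    (hrc : r < ((((n : ℝ) - 2) / n) ^ (((n : ℝ) - 2) / 2) -
          (((n : ℝ) - 2) / n) ^ ((n : ℝ) / 2)) ^ ((1 : ℝ) / n))
    (ξ₁ : ℝ) (hξ₁pos : 0 < ξ₁)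
    (hξ₁root : ((n : ℝ) + 2) * ξ₁ ^ n - (n : ℝ) * ξ₁ ^ (n - 2) + 2 * r ^ n = 0)
    (hξ₁min : ∀ x : ℝ, 0 < x →
      ((n : ℝ) + 2) * x ^ n - (n : ℝ) * x ^ (n - 2) + 2 * r ^ n = 0 → ξ₁ ≤ x) :
    0 < (ξ₁ ^ (n + 2) - ξ₁ ^ n + r ^ n * ξ₁ ^ 2) / r ^ n ∧
    (ξ₁ ^ (n + 2) - ξ₁ ^ n + r ^ n * ξ₁ ^ 2) / r ^ n < 1 := by
  obtain ⟨m, rfl⟩ : ∃ m, n = m + 3 := ⟨n - 3, by omega⟩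
  have hsub : m + 3 - 2 = m + 1 := rfl
  rw [hsub] at hξ₁root
  simp only [hsub] at hξ₁min
  push_cast at hξ₁root hξ₁min hrc
  set M : ℝ := (m : ℝ) with hM
  have hM0 : 0 ≤ M := Nat.cast_nonneg m
  set a : ℝ := (M + 1) / (M + 3) with ha
  have ha0 : 0 < a := by positivity
  have ha1 : a < 1 := by rw [ha, div_lt_one (by linarith)]; linarith
  -- identify the rpow expressions
  have hbase : (M + 3 - 2) / (M + 3) = a := by rw [ha]; ring_nf
  rw [hbase] at hrc
  set stuff : ℝ := a ^ ((M + 3 - 2) / 2) - a ^ ((M + 3) / 2) with hstuff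
  have hstuffpos : 0 < stuff := by
    rw [hstuff]
    have : a ^ ((M + 3) / 2) < a ^ ((M + 3 - 2) / 2) :=
      Real.rpow_lt_rpow_of_exponent_gt ha0 ha1 (by linarith)
    linarith
  -- r ^ (m+3) < stuff
  have hrn : r ^ (m + 3) < stuff := by
    have h1 : r ^ (m + 3) < (stuff ^ ((1 : ℝ) / (M + 3))) ^ (m + 3) :=
      pow_lt_pow_left₀ hrc hr.le (by omega)
    have h2 : (stuff ^ ((1 : ℝ) / (M + 3))) ^ (m + 3) = stuff := by
      rw [← Real.rpow_natCast (stuff ^ ((1 : ℝ) / (M + 3))) (m + 3),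
        ← Real.rpow_mul hstuffpos.le]
      push_cast
      rw [one_div, inv_mul_cancel₀ (by linarith : M + 3 ≠ 0), Real.rpow_one]
    rwa [h2] at h1
  set s : ℝ := Real.sqrt a with hs
  have hs0 : 0 < s := Real.sqrt_pos.mpr ha0
  have hs2 : s ^ 2 = a := Real.sq_sqrt ha0.le
  have hs1 : s < 1 := by nlinarith [hs2]
  have hsp : s ^ (m + 1) = a ^ ((M + 3 - 2) / 2) := by
    rw [hs, Real.sqrt_eq_rpow, ← Real.rpow_natCast (a ^ ((1:ℝ)/2)) (m + 1),
      ← Real.rpow_mul ha0.le]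
    congr 1
    push_cast; ring
  have hsp3 : a ^ ((M + 3) / 2) = a ^ ((M + 3 - 2) / 2) * a := by
    have he : (M + 3) / 2 = (M + 3 - 2) / 2 + 1 := by ring
    rw [he, Real.rpow_add ha0, Real.rpow_one]
  -- value of g at s is negative
  have haprod : (M + 3) * a = M + 1 := by
    rw [ha]; field_simp
  have hstuffeq : stuff = s ^ (m + 1) - s ^ (m + 1) * a := by
    rw [hstuff, hsp3, ← hsp]
  have hgs : (M + 3 + 2) * s ^ (m + 3) - (M + 3) * s ^ (m + 1) + 2 * r ^ (m + 3) < 0 := by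
    have e1 : s ^ (m + 3) = s ^ (m + 1) * a := by
      rw [← hs2]; ring
    have h2 : (M + 3) * ((M + 3 + 2) * s ^ (m + 3) - (M + 3) * s ^ (m + 1) + 2 * r ^ (m + 3))
        = 2 * (M + 3) * (r ^ (m + 3) - stuff) := by
      rw [e1, hstuffeq]
      linear_combination (s ^ (m + 1) * (M + 3)) * haprod
    nlinarith [h2, hrn, hM0]
  -- IVT : there is a root in (0, s)
  have hcont : ContinuousOn
      (fun x : ℝ => (M + 3 + 2) * x ^ (m + 3) - (M + 3) * x ^ (m + 1) + 2 * r ^ (m + 3))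
      (Set.Icc 0 s) := (((continuous_const.mul (continuous_pow _)).sub
        (continuous_const.mul (continuous_pow _))).add continuous_const).continuousOn
  have hf0 : (M + 3 + 2) * (0:ℝ) ^ (m + 3) - (M + 3) * (0:ℝ) ^ (m + 1) + 2 * r ^ (m + 3)
      = 2 * r ^ (m + 3) := by
    rw [zero_pow (by omega), zero_pow (by omega)]; ring
  have hmem : (0 : ℝ) ∈ Set.Ioo
      ((M + 3 + 2) * s ^ (m + 3) - (M + 3) * s ^ (m + 1) + 2 * r ^ (m + 3))
      ((M + 3 + 2) * (0:ℝ) ^ (m + 3) - (M + 3) * (0:ℝ) ^ (m + 1) + 2 * r ^ (m + 3)) := by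
    constructor
    · exact hgs
    · rw [hf0]; positivity
  obtain ⟨x, hxmem, hfx⟩ := intermediate_value_Ioo' hs0.le hcont hmem
  have hfx' : (M + 3 + 2) * x ^ (m + 3) - (M + 3) * x ^ (m + 1) + 2 * r ^ (m + 3) = 0 := hfx
  have hxlt : ξ₁ ≤ x := hξ₁min x hxmem.1 hfx'
  have hξs : ξ₁ < s := lt_of_le_of_lt hxlt hxmem.2
  -- key numeric facts
  have hB : ξ₁ ^ 2 < a := by
    rw [← hs2]
    exact pow_lt_pow_left₀ hξs hξ₁pos.le (by omega)
  have hBa : (M + 3) * ξ₁ ^ 2 < M + 1 := by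
    rw [ha, lt_div_iff₀ (by linarith : (0:ℝ) < M + 3)] at hB
    linarith
  have hξ1 : ξ₁ < 1 := lt_trans hξs hs1
  set A : ℝ := ξ₁ ^ (m + 1) with hA
  have hApos : 0 < A := pow_pos hξ₁pos _
  set B : ℝ := ξ₁ ^ 2 with hB2
  have hBpos : 0 < B := pow_pos hξ₁pos _
  have hB1 : B < 1 := by
    calc B < a := hB
      _ < 1 := ha1
  have e3 : ξ₁ ^ (m + 3) = A * B := by rw [hA, hB2]; ring
  have e5 : ξ₁ ^ (m + 3 + 2) = A * B * B := by rw [hA, hB2]; ring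
  have hroot' : 2 * r ^ (m + 3) = A * ((M + 3) - (M + 5) * B) := by
    rw [e3] at hξ₁root; linear_combination hξ₁root
  have hrpos : 0 < r ^ (m + 3) := pow_pos hr _
  set P : ℝ := ξ₁ ^ (m + 3 + 2) - ξ₁ ^ (m + 3) + r ^ (m + 3) * ξ₁ ^ 2 with hP
  have h2P : 2 * P = A * B * ((M + 1) - (M + 3) * B) := by
    rw [hP, e3, e5]; linear_combination B * hroot'
  have hPpos : 0 < P := by
    have h1 : 0 < A * B * ((M + 1) - (M + 3) * B) :=
      mul_pos (mul_pos hApos hBpos) (by linarith [hBa])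
    linarith
  have hdiff : 2 * r ^ (m + 3) - 2 * P = A * (M + 3) * (1 - B) ^ 2 := by
    rw [h2P, hroot']; ring
  have hPlt : P < r ^ (m + 3) := by
    have h1 : 0 < A * (M + 3) * (1 - B) ^ 2 :=
      mul_pos (mul_pos hApos (by linarith : (0:ℝ) < M + 3))
        (pow_pos (by linarith : (0:ℝ) < 1 - B) 2)
    linarith
  constructor
  · exact div_pos hPpos hrpos
  · rw [div_lt_one hrpos]; exact hPlt
end

section
/- Let n ≥ 3, 0 < r < r_crit, ξ₁ the smallest positive root of (n+2)ξ^n − nξ^(n−2) + 2r^n, and ε* = (ξ₁^(n+2) − ξ₁^n + r^n ξ₁²)/r^n. For 0 < ε < ε*, the polynomial f₋(ρ) = ρ^(n+2) − ρ^n + r^n ρ² − ε r^n has exactly three positive real roots r₂ < r₃ < r₄, and they satisfy √ε < r₂ < r₃ < r₄ < 1. -/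
/-- For `n ≥ 3`, `0 < r < r_crit`, `ξ₁` the smallest positive root of
`(n+2)ξ^n − nξ^(n−2) + 2r^n` and `0 < ε < ε*`, the polynomial
`f₋(ρ) = ρ^(n+2) − ρ^n + r^n ρ² − ε r^n` has exactly three positive roots
`√ε < r₂ < r₃ < r₄ < 1`. -/
theorem stmt_10 (n : ℕ) (hn : 3 ≤ n) (r ε : ℝ) (hr : 0 < r)
    (hrc : r < ((((n : ℝ) - 2) / n) ^ (((n : ℝ) - 2) / 2) -
          (((n : ℝ) - 2) / n) ^ ((n : ℝ) / 2)) ^ ((1 : ℝ) / n))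
    (ξ₁ : ℝ) (hξ₁pos : 0 < ξ₁)
    (hξ₁root : ((n : ℝ) + 2) * ξ₁ ^ n - (n : ℝ) * ξ₁ ^ (n - 2) + 2 * r ^ n = 0)
    (hξ₁min : ∀ x : ℝ, 0 < x →
      ((n : ℝ) + 2) * x ^ n - (n : ℝ) * x ^ (n - 2) + 2 * r ^ n = 0 → ξ₁ ≤ x)
    (hε0 : 0 < ε)
    (hεlt : ε < (ξ₁ ^ (n + 2) - ξ₁ ^ n + r ^ n * ξ₁ ^ 2) / r ^ n) :
    ∃ r₂ r₃ r₄ : ℝ, Real.sqrt ε < r₂ ∧ r₂ < r₃ ∧ r₃ < r₄ ∧ r₄ < 1 ∧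
      {ρ : ℝ | 0 < ρ ∧ ρ ^ (n + 2) - ρ ^ n + r ^ n * ρ ^ 2 - ε * r ^ n = 0} =
        {r₂, r₃, r₄} := by
  obtain ⟨m, rfl⟩ : ∃ m, n = m + 3 := ⟨n - 3, by omega⟩
  clear hn
  simp only [show m + 3 - 2 = m + 1 from by omega, show m + 3 + 2 = m + 5 from by omega]
    at hξ₁root hξ₁min hεlt ⊢
  push_cast at hrc hξ₁root hξ₁min hεlt
  set G : ℝ → ℝ := fun x => ((m:ℝ)+5) * x^(m+3) - ((m:ℝ)+3) * x^(m+1) + 2 * r^(m+3)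
    with hGdef
  set F : ℝ → ℝ := fun x => x^(m+5) - x^(m+3) + r^(m+3) * x^2 - ε * r^(m+3) with hFdef
  have hrn_pos : (0:ℝ) < r^(m+3) := pow_pos hr _
  have hGξ₁ : G ξ₁ = 0 := by
    simp only [hGdef]
    linear_combination hξ₁root
  have hGmin : ∀ x : ℝ, 0 < x → G x = 0 → ξ₁ ≤ x := by
    intro x hx hgx
    refine hξ₁min x hx ?_
    simp only [hGdef] at hgx
    linear_combination hgx
  have hGc : Continuous G := by rw [hGdef]; fun_prop
  have hFc : Continuous F := by rw [hFdef]; fun_prop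
  have hG' : ∀ x : ℝ, HasDerivAt G (((m:ℝ)+3) * x^m * (((m:ℝ)+5) * x^2 - ((m:ℝ)+1))) x := by
    intro x
    have h := (((hasDerivAt_pow (m+3) x).const_mul ((m:ℝ)+5)).sub
        ((hasDerivAt_pow (m+1) x).const_mul ((m:ℝ)+3))).add_const (2 * r^(m+3))
    refine h.congr_deriv ?_
    simp only [show m+3-1 = m+2 from by omega, show m+1-1 = m from by omega]
    push_cast
    ring
  have hF' : ∀ x : ℝ, HasDerivAt F (x * G x) x := by
    intro x
    have h := (((hasDerivAt_pow (m+5) x).sub (hasDerivAt_pow (m+3) x)).add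
        ((hasDerivAt_pow 2 x).const_mul (r^(m+3)))).sub_const (ε * r^(m+3))
    refine h.congr_deriv ?_
    simp only [hGdef, show m+5-1 = m+4 from by omega, show m+3-1 = m+2 from by omega]
    push_cast
    ring
  -- the critical radius inequality
  have hm1 : ((m:ℝ)+3) - 2 = (m:ℝ)+1 := by ring
  rw [hm1] at hrc
  set b : ℝ := ((m:ℝ)+1) / ((m:ℝ)+3) with hbdef
  have hb0 : 0 < b := by positivity
  have hb1 : b < 1 := by
    rw [hbdef, div_lt_one (by positivity)]; linarith
  set X : ℝ := b ^ (((m:ℝ)+1)/2) - b ^ (((m:ℝ)+3)/2) with hXdef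
  have hX : 0 < X := by
    rw [hXdef, sub_pos]
    exact Real.rpow_lt_rpow_of_exponent_gt hb0 hb1 (by linarith [Nat.cast_nonneg (α := ℝ) m])
  have hrX : r ^ (m+3) < X := by
    have h1 := pow_lt_pow_left₀ hrc hr.le (by omega : m+3 ≠ 0)
    have h2 : (X ^ ((1:ℝ)/((m:ℝ)+3))) ^ (m+3) = X := by
      rw [← Real.rpow_natCast (X ^ ((1:ℝ)/((m:ℝ)+3))) (m+3), ← Real.rpow_mul hX.le]
      rw [show (1:ℝ)/((m:ℝ)+3) * ((m+3:ℕ):ℝ) = 1 by push_cast; field_simp]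
      exact Real.rpow_one X
    rwa [h2] at h1
  set s : ℝ := Real.sqrt b with hsdef
  have hs0 : 0 < s := Real.sqrt_pos.mpr hb0
  have hs2 : s^2 = b := Real.sq_sqrt hb0.le
  have hspow : ∀ k : ℕ, s ^ k = b ^ ((k:ℝ)/2) := by
    intro k
    rw [hsdef, Real.sqrt_eq_rpow, ← Real.rpow_natCast (b ^ ((1:ℝ)/2)) k,
      ← Real.rpow_mul hb0.le]
    ring_nf
  have hXs : X = s^(m+1) - s^(m+3) := by
    rw [hXdef, hspow (m+1), hspow (m+3)]
    push_cast
    ring_nf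
  have hs1 : s < 1 := by
    rw [hsdef, show (1:ℝ) = Real.sqrt 1 by simp]
    exact Real.sqrt_lt_sqrt hb0.le hb1
  have hGs : G s < 0 := by
    have h3 : s^(m+3) = b * s^(m+1) := by rw [← hs2]; ring
    have hGseq : G s = 2 * r^(m+3) - 2 * X := by
      rw [hXs, hGdef]
      simp only
      rw [h3, hbdef]
      field_simp
      ring
    rw [hGseq]; linarith
  -- ξstar : min point of G
  set ξstar : ℝ := Real.sqrt (((m:ℝ)+1) / ((m:ℝ)+5)) with hξstardef
  have hξstar0 : 0 < ξstar := Real.sqrt_pos.mpr (by positivity)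
  have hξstar2 : ξstar^2 = ((m:ℝ)+1) / ((m:ℝ)+5) := Real.sq_sqrt (by positivity)
  have hξstar_lt_s : ξstar < s := by
    rw [hξstardef, hsdef, hbdef]
    apply Real.sqrt_lt_sqrt (by positivity)
    apply div_lt_div_of_pos_left (by positivity) (by positivity) (by linarith)
  have h5pos : (0:ℝ) < (m:ℝ)+5 := by positivity
  have h3pos : (0:ℝ) < (m:ℝ)+3 := by positivity
  have hganti : StrictAntiOn G (Set.Icc 0 ξstar) := by
    apply strictAntiOn_of_deriv_neg (convex_Icc _ _) hGc.continuousOn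
    intro x hx
    rw [interior_Icc] at hx
    rw [(hG' x).deriv]
    have hx2 : x^2 < ((m:ℝ)+1)/((m:ℝ)+5) := by
      rw [← hξstar2]; exact pow_lt_pow_left₀ hx.2 hx.1.le (by omega)
    have := (lt_div_iff₀ h5pos).mp hx2
    apply mul_neg_of_pos_of_neg
    · exact mul_pos (by positivity) (pow_pos hx.1 m)
    · linarith
  have hgmono : StrictMonoOn G (Set.Ici ξstar) := by
    apply strictMonoOn_of_deriv_pos (convex_Ici _) hGc.continuousOn
    intro x hx
    rw [interior_Ici] at hx
    rw [(hG' x).deriv]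
    have hx0 : 0 < x := hξstar0.trans hx
    have hx2 : ((m:ℝ)+1)/((m:ℝ)+5) < x^2 := by
      rw [← hξstar2]; exact pow_lt_pow_left₀ hx hξstar0.le (by omega)
    have := (div_lt_iff₀ h5pos).mp hx2
    apply mul_pos (mul_pos (by positivity) (pow_pos hx0 m))
    linarith
  have hGξstar : G ξstar < 0 :=
    lt_trans (hgmono (Set.self_mem_Ici) (Set.mem_Ici.mpr hξstar_lt_s.le) hξstar_lt_s) hGs
  have hG0 : 0 < G 0 := by
    have : G 0 = 2 * r^(m+3) := by
      simp only [hGdef]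
      rw [zero_pow (by omega), zero_pow (by omega)]
      ring
    rw [this]; positivity
  have hξ₁ltξstar : ξ₁ < ξstar := by
    obtain ⟨ξ₀, hξ₀mem, hξ₀⟩ :=
      intermediate_value_Ioo' hξstar0.le hGc.continuousOn (Set.mem_Ioo.mpr ⟨hGξstar, hG0⟩)
    exact lt_of_le_of_lt (hGmin ξ₀ hξ₀mem.1 hξ₀) hξ₀mem.2
  have hG1 : 0 < G 1 := by
    simp only [hGdef, one_pow, mul_one]
    nlinarith
  obtain ⟨ξ₂, hξ₂mem, hGξ₂⟩ :=
    intermediate_value_Ioo hs1.le hGc.continuousOn (Set.mem_Ioo.mpr ⟨hGs, hG1⟩)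
  have hξ₂pos : 0 < ξ₂ := hs0.trans hξ₂mem.1
  have hξstarltξ₂ : ξstar < ξ₂ := hξstar_lt_s.trans hξ₂mem.1
  have hξ₁ltξ₂ : ξ₁ < ξ₂ := hξ₁ltξstar.trans hξstarltξ₂
  -- sign of G
  have hGpos1 : ∀ x : ℝ, 0 < x → x < ξ₁ → 0 < G x := by
    intro x hx hxlt
    have := hganti (Set.mem_Icc.mpr ⟨hx.le, (hxlt.trans hξ₁ltξstar).le⟩)
      (Set.mem_Icc.mpr ⟨hξ₁pos.le, hξ₁ltξstar.le⟩) hxlt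
    rwa [hGξ₁] at this
  have hGneg : ∀ x : ℝ, ξ₁ < x → x < ξ₂ → G x < 0 := by
    intro x h1 h2
    rcases le_or_gt x ξstar with h | h
    · have := hganti (Set.mem_Icc.mpr ⟨hξ₁pos.le, hξ₁ltξstar.le⟩)
        (Set.mem_Icc.mpr ⟨(hξ₁pos.trans h1).le, h⟩) h1
      rwa [hGξ₁] at this
    · have := hgmono (Set.mem_Ici.mpr h.le) (Set.mem_Ici.mpr hξstarltξ₂.le) h2
      rwa [hGξ₂] at this
  have hGpos2 : ∀ x : ℝ, ξ₂ < x → 0 < G x := by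
    intro x hx
    have := hgmono (Set.mem_Ici.mpr hξstarltξ₂.le) (Set.mem_Ici.mpr (hξstarltξ₂.trans hx).le) hx
    rwa [hGξ₂] at this
  -- F monotonicity pieces
  have hM1 : StrictMonoOn F (Set.Icc 0 ξ₁) := by
    apply strictMonoOn_of_deriv_pos (convex_Icc _ _) hFc.continuousOn
    intro x hx
    rw [interior_Icc] at hx
    rw [(hF' x).deriv]
    exact mul_pos hx.1 (hGpos1 x hx.1 hx.2)
  have hA1 : StrictAntiOn F (Set.Icc ξ₁ ξ₂) := by
    apply strictAntiOn_of_deriv_neg (convex_Icc _ _) hFc.continuousOn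
    intro x hx
    rw [interior_Icc] at hx
    rw [(hF' x).deriv]
    exact mul_neg_of_pos_of_neg (hξ₁pos.trans hx.1) (hGneg x hx.1 hx.2)
  have hM2 : StrictMonoOn F (Set.Ici ξ₂) := by
    apply strictMonoOn_of_deriv_pos (convex_Ici _) hFc.continuousOn
    intro x hx
    rw [interior_Ici] at hx
    rw [(hF' x).deriv]
    exact mul_pos (hξ₂pos.trans hx) (hGpos2 x hx)
  -- values of F
  have hεlt' := (lt_div_iff₀ hrn_pos).mp hεlt
  have hFξ₁ : 0 < F ξ₁ := by
    simp only [hFdef]; linarith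
  have hξ₁lt1 : ξ₁ < 1 := hξ₁ltξstar.trans (hξstar_lt_s.trans hs1)
  have hεξ₁sq : ε < ξ₁^2 := by
    have hp : ξ₁^(m+5) ≤ ξ₁^(m+3) := pow_le_pow_of_le_one hξ₁pos.le hξ₁lt1.le (by omega)
    have h7 : ε * r^(m+3) < ξ₁^2 * r^(m+3) := by linarith
    exact (mul_lt_mul_iff_left₀ hrn_pos).mp h7
  have hε1 : ε < 1 := hεξ₁sq.trans_le (pow_le_one₀ hξ₁pos.le hξ₁lt1.le)
  have hsqrt_pos : 0 < Real.sqrt ε := Real.sqrt_pos.mpr hε0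
  have hsqrt_lt : Real.sqrt ε < ξ₁ := by
    rw [show ξ₁ = Real.sqrt (ξ₁^2) from (Real.sqrt_sq hξ₁pos.le).symm]
    exact Real.sqrt_lt_sqrt hε0.le hεξ₁sq
  have hFsqrt : F (Real.sqrt ε) < 0 := by
    have h2 : Real.sqrt ε ^ 2 = ε := Real.sq_sqrt hε0.le
    have hppos : 0 < Real.sqrt ε ^ (m+3) := pow_pos hsqrt_pos _
    have h5 : Real.sqrt ε ^ (m+5) = Real.sqrt ε ^ (m+3) * ε := by
      conv_lhs => rw [show m+5 = (m+3)+2 from by omega, pow_add]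
      rw [h2]
    simp only [hFdef]
    rw [h5, h2]
    have hx : Real.sqrt ε ^ (m+3) * ε < Real.sqrt ε ^ (m+3) := mul_lt_of_lt_one_right hppos hε1
    linarith
  have hFξ₂ : F ξ₂ < 0 := by
    have hkey : 2 * F ξ₂ = ξ₂^(m+3) * (((m:ℝ)+1) - ((m:ℝ)+3)*ξ₂^2) - 2*ε*r^(m+3) := by
      simp only [hFdef, hGdef] at hGξ₂ ⊢
      linear_combination ξ₂^2 * hGξ₂
    have hs2lt : b < ξ₂^2 := by
      rw [← hs2]; exact pow_lt_pow_left₀ hξ₂mem.1 hs0.le (by omega)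
    have h6 : (m:ℝ)+1 < ξ₂^2 * ((m:ℝ)+3) := by
      rw [hbdef] at hs2lt
      exact (div_lt_iff₀ h3pos).mp hs2lt
    have hneg : ξ₂^(m+3) * (((m:ℝ)+1) - ((m:ℝ)+3)*ξ₂^2) < 0 :=
      mul_neg_of_pos_of_neg (pow_pos hξ₂pos _) (by linarith)
    linarith [mul_pos hε0 hrn_pos]
  have hF1 : 0 < F 1 := by
    simp only [hFdef, one_pow, mul_one]
    have hx : ε * r ^ (m+3) < r ^ (m+3) := mul_lt_of_lt_one_left hrn_pos hε1
    linarith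
  -- the three roots
  obtain ⟨r₂, hr₂mem, hFr₂⟩ :=
    intermediate_value_Ioo hsqrt_lt.le hFc.continuousOn (Set.mem_Ioo.mpr ⟨hFsqrt, hFξ₁⟩)
  obtain ⟨r₃, hr₃mem, hFr₃⟩ :=
    intermediate_value_Ioo' hξ₁ltξ₂.le hFc.continuousOn (Set.mem_Ioo.mpr ⟨hFξ₂, hFξ₁⟩)
  obtain ⟨r₄, hr₄mem, hFr₄⟩ :=
    intermediate_value_Ioo hξ₂mem.2.le hFc.continuousOn (Set.mem_Ioo.mpr ⟨hFξ₂, hF1⟩)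
  have hr₂pos : 0 < r₂ := hsqrt_pos.trans hr₂mem.1
  have hr₃pos : 0 < r₃ := hξ₁pos.trans hr₃mem.1
  have hr₄pos : 0 < r₄ := hξ₂pos.trans hr₄mem.1
  refine ⟨r₂, r₃, r₄, hr₂mem.1, hr₂mem.2.trans hr₃mem.1, hr₃mem.2.trans hr₄mem.1,
    hr₄mem.2, ?_⟩
  ext ρ
  simp only [Set.mem_setOf_eq, Set.mem_insert_iff, Set.mem_singleton_iff]
  constructor
  · rintro ⟨hρ, hρ0⟩
    have hFρ : F ρ = 0 := hρ0
    rcases le_or_gt ρ ξ₁ with h | h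
    · left
      exact hM1.injOn (Set.mem_Icc.mpr ⟨hρ.le, h⟩)
        (Set.mem_Icc.mpr ⟨hr₂pos.le, hr₂mem.2.le⟩) (by rw [hFρ, hFr₂])
    rcases le_or_gt ρ ξ₂ with h2 | h2
    · right; left
      exact hA1.injOn (Set.mem_Icc.mpr ⟨h.le, h2⟩)
        (Set.mem_Icc.mpr ⟨hr₃mem.1.le, hr₃mem.2.le⟩) (by rw [hFρ, hFr₃])
    · right; right
      exact hM2.injOn (Set.mem_Ici.mpr h2.le)
        (Set.mem_Ici.mpr hr₄mem.1.le) (by rw [hFρ, hFr₄])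
  · rintro (rfl | rfl | rfl)
    exacts [⟨hr₂pos, hFr₂⟩, ⟨hr₃pos, hFr₃⟩, ⟨hr₄pos, hFr₄⟩]
end

section
/- Let n ≥ 3, 0 < r < r_crit, and let ε* be defined from the smallest positive root ξ₁ of (n+2)ξ^n − nξ^(n−2) + 2r^n via ε* = (ξ₁^(n+2) − ξ₁^n + r^n ξ₁²)/r^n. Then for every ε with 0 < ε < ε*, the equation (z^n − ε r^n)/(z(z^n − r^n)) = conj(z) has exactly 5n complex solutions. -/
open Complex

open Complex Set Polynomial

private lemma aux_card (n : ℕ) (hn : n ≠ 0) (c : ℂ) (hc : c ≠ 0) :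
    {z : ℂ | z ^ n = c}.Finite ∧ {z : ℂ | z ^ n = c}.ncard = n := by
  have hζ := Complex.isPrimitiveRoot_exp n hn
  have hset : {z : ℂ | z ^ n = c} = ↑(Polynomial.nthRoots n c).toFinset := by
    ext z; simp [Polynomial.mem_nthRoots (Nat.pos_of_ne_zero hn)]
  have hex : ∃ α : ℂ, α ^ n = c := by
    refine ⟨Complex.exp (Complex.log c / n), ?_⟩
    rw [← Complex.exp_nat_mul, mul_div_cancel₀ _ (by exact_mod_cast hn : (n:ℂ) ≠ 0),
      Complex.exp_log hc]
  constructor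
  · rw [hset]; exact (Polynomial.nthRoots n c).toFinset.finite_toSet
  · rw [hset, Set.ncard_coe_finset, Multiset.toFinset_card_of_nodup (hζ.nthRoots_nodup hc),
      hζ.card_nthRoots, if_pos hex]

private lemma mono_help {F F' : ℝ → ℝ} (hd : ∀ x, HasDerivAt F (F' x) x) {s : Set ℝ}
    (hs : Convex ℝ s) (hpos : ∀ x ∈ interior s, 0 < F' x) : StrictMonoOn F s := by
  refine strictMonoOn_of_deriv_pos hs (Continuous.continuousOn ?_) ?_
  · exact Differentiable.continuous (fun x => (hd x).differentiableAt)
  · intro x hx; rw [(hd x).deriv]; exact hpos x hx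

private lemma anti_help {F F' : ℝ → ℝ} (hd : ∀ x, HasDerivAt F (F' x) x) {s : Set ℝ}
    (hs : Convex ℝ s) (hneg : ∀ x ∈ interior s, F' x < 0) : StrictAntiOn F s := by
  refine strictAntiOn_of_deriv_neg hs (Continuous.continuousOn ?_) ?_
  · exact Differentiable.continuous (fun x => (hd x).differentiableAt)
  · intro x hx; rw [(hd x).deriv]; exact hneg x hx

private noncomputable def fP (k : ℕ) (R x : ℝ) : ℝ :=
  ((k:ℝ)+5)*x^(k+3) - ((k:ℝ)+3)*x^(k+1) + 2*R

private noncomputable def gP (k : ℕ) (R x : ℝ) : ℝ :=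
  ((k:ℝ)+5)*x^(k+3) - ((k:ℝ)+3)*x^(k+1) - 2*R

private noncomputable def qP (k : ℕ) (R ε x : ℝ) : ℝ :=
  x^(k+5) - x^(k+3) + R*x^2 - ε*R

private noncomputable def pP (k : ℕ) (R ε x : ℝ) : ℝ :=
  x^(k+5) - x^(k+3) - R*x^2 + ε*R

private lemma fP_deriv (k : ℕ) (R : ℝ) (x : ℝ) :
    HasDerivAt (fP k R) (((k:ℝ)+3)*x^k*(((k:ℝ)+5)*x^2 - ((k:ℝ)+1))) x := by
  have h := (((hasDerivAt_pow (k+3) x).const_mul ((k:ℝ)+5)).sub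
    ((hasDerivAt_pow (k+1) x).const_mul ((k:ℝ)+3))).add_const (2*R)
  refine HasDerivAt.congr_deriv h ?_
  push_cast; ring

private lemma gP_deriv (k : ℕ) (R : ℝ) (x : ℝ) :
    HasDerivAt (gP k R) (((k:ℝ)+3)*x^k*(((k:ℝ)+5)*x^2 - ((k:ℝ)+1))) x := by
  have h := (((hasDerivAt_pow (k+3) x).const_mul ((k:ℝ)+5)).sub
    ((hasDerivAt_pow (k+1) x).const_mul ((k:ℝ)+3))).sub_const (2*R)
  refine HasDerivAt.congr_deriv h ?_
  push_cast; ring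

private lemma qP_deriv (k : ℕ) (R ε : ℝ) (x : ℝ) :
    HasDerivAt (qP k R ε) (x * fP k R x) x := by
  have h := (((hasDerivAt_pow (k+5) x).sub (hasDerivAt_pow (k+3) x)).add
    ((hasDerivAt_pow 2 x).const_mul R)).sub_const (ε*R)
  refine HasDerivAt.congr_deriv h ?_
  unfold fP; push_cast; ring

private lemma pP_deriv (k : ℕ) (R ε : ℝ) (x : ℝ) :
    HasDerivAt (pP k R ε) (x * gP k R x) x := by
  have h := (((hasDerivAt_pow (k+5) x).sub (hasDerivAt_pow (k+3) x)).sub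
    ((hasDerivAt_pow 2 x).const_mul R)).add_const (ε*R)
  refine HasDerivAt.congr_deriv h ?_
  unfold gP; push_cast; ring

/-- existence of ρ* with f(ρ*) < 0, from the r_crit hypothesis -/
private lemma rho_exists (k : ℕ) (r : ℝ) (hr : 0 < r)
    (hrc : r < ((((k:ℝ)+1) / ((k:ℝ)+3)) ^ (((k:ℝ)+1) / 2) -
          (((k:ℝ)+1) / ((k:ℝ)+3)) ^ (((k:ℝ)+3) / 2)) ^ ((1:ℝ) / ((k:ℝ)+3))) :
    ∃ ρ : ℝ, 0 < ρ ∧ ρ < 1 ∧ ((k:ℝ)+3)*ρ^2 = (k:ℝ)+1 ∧ fP k (r^(k+3)) ρ < 0 := by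
  set c : ℝ := ((k:ℝ)+1) / ((k:ℝ)+3) with hc
  have hc0 : 0 < c := by positivity
  have hc1 : c < 1 := by rw [hc, div_lt_one (by positivity)]; linarith
  set ρ : ℝ := c ^ ((1:ℝ)/2) with hρ
  have hρ0 : 0 < ρ := Real.rpow_pos_of_pos hc0 _
  have hρ1 : ρ < 1 := Real.rpow_lt_one hc0.le hc1 (by norm_num)
  have hρsq : ρ ^ 2 = c := by
    rw [hρ, ← Real.rpow_natCast (c ^ ((1:ℝ)/2)) 2, ← Real.rpow_mul hc0.le]
    norm_num
  have hpow : ∀ m : ℕ, ρ ^ m = c ^ ((m:ℝ)/2) := by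
    intro m
    rw [hρ, ← Real.rpow_natCast (c ^ ((1:ℝ)/2)) m, ← Real.rpow_mul hc0.le]
    ring_nf
  have hB : 0 < c ^ (((k:ℝ)+1)/2) - c ^ (((k:ℝ)+3)/2) := by
    have := Real.rpow_lt_rpow_of_exponent_gt hc0 hc1
      (show ((k:ℝ)+1)/2 < ((k:ℝ)+3)/2 by linarith)
    linarith
  have hrB : r ^ (k+3) < c ^ (((k:ℝ)+1)/2) - c ^ (((k:ℝ)+3)/2) := by
    calc r ^ (k+3) < ((c ^ (((k:ℝ)+1)/2) - c ^ (((k:ℝ)+3)/2)) ^ ((1:ℝ)/((k:ℝ)+3))) ^ (k+3) :=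
          pow_lt_pow_left₀ hrc hr.le (by positivity)
      _ = c ^ (((k:ℝ)+1)/2) - c ^ (((k:ℝ)+3)/2) := by
          rw [← Real.rpow_natCast (_ ^ ((1:ℝ)/((k:ℝ)+3))) (k+3), ← Real.rpow_mul hB.le]
          rw [show (1:ℝ)/((k:ℝ)+3) * ((k+3:ℕ):ℝ) = 1 by push_cast; field_simp]
          exact Real.rpow_one _
  rw [show ((k:ℝ)+1)/2 = (((k+1:ℕ)):ℝ)/2 by push_cast; ring, ← hpow] at hrB
  rw [show ((k:ℝ)+3)/2 = (((k+3:ℕ)):ℝ)/2 by push_cast; ring, ← hpow] at hrB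
  have hρsq' : ((k:ℝ)+3) * ρ^2 = (k:ℝ)+1 := by rw [hρsq, hc]; field_simp
  refine ⟨ρ, hρ0, hρ1, hρsq', ?_⟩
  unfold fP
  have h1 : ρ^(k+3) = ρ^(k+1) * ρ^2 := by ring
  nlinarith [pow_nonneg hρ0.le (k+1), hrB]

/-- the ξc point: where the common derivative factor vanishes -/
private lemma xic_exists (k : ℕ) : ∃ ξc : ℝ, 0 < ξc ∧
    ((k:ℝ)+5)*ξc^2 = (k:ℝ)+1 := by
  have hd0 : (0:ℝ) < ((k:ℝ)+1) / ((k:ℝ)+5) := by positivity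
  refine ⟨(((k:ℝ)+1) / ((k:ℝ)+5)) ^ ((1:ℝ)/2), Real.rpow_pos_of_pos hd0 _, ?_⟩
  have : ((((k:ℝ)+1) / ((k:ℝ)+5)) ^ ((1:ℝ)/2)) ^ 2 = ((k:ℝ)+1) / ((k:ℝ)+5) := by
    rw [← Real.rpow_natCast (_ ^ ((1:ℝ)/2)) 2, ← Real.rpow_mul hd0.le]
    norm_num
  rw [this]; field_simp

/-- monotonicity structure of fP (and gP) -/
private lemma fg_mono (k : ℕ) (ξc : ℝ) (hξc0 : 0 < ξc) (hξcsq : ((k:ℝ)+5)*ξc^2 = (k:ℝ)+1)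
    {F : ℝ → ℝ} (hd : ∀ x, HasDerivAt F (((k:ℝ)+3)*x^k*(((k:ℝ)+5)*x^2 - ((k:ℝ)+1))) x) :
    StrictAntiOn F (Icc 0 ξc) ∧ StrictMonoOn F (Ici ξc) := by
  constructor
  · refine anti_help hd (convex_Icc _ _) ?_
    intro x hx
    rw [interior_Icc] at hx
    have hx0 : 0 < x := hx.1
    have hsq : x ^ 2 < ξc ^ 2 := pow_lt_pow_left₀ hx.2 hx.1.le (by norm_num)
    have h2 : ((k:ℝ)+5)*x^2 - ((k:ℝ)+1) < 0 := by nlinarith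
    have h3 : 0 < ((k:ℝ)+3)*x^k := by positivity
    nlinarith
  · refine mono_help hd (convex_Ici _) ?_
    intro x hx
    rw [interior_Ici] at hx
    have hx0 : 0 < x := lt_trans hξc0 hx
    have hsq : ξc ^ 2 < x ^ 2 := pow_lt_pow_left₀ hx hξc0.le (by norm_num)
    have h2 : 0 < ((k:ℝ)+5)*x^2 - ((k:ℝ)+1) := by nlinarith
    have h3 : 0 < ((k:ℝ)+3)*x^k := by positivity
    nlinarith

/-- Root structure for the "minus" family `qP`: exactly three positive roots; also ε < 1. -/
private lemma qroots (k : ℕ) (R ε ξ₁ ρs : ℝ) (hR0 : 0 < R)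
    (hξ₁pos : 0 < ξ₁)
    (hξroot : fP k R ξ₁ = 0)
    (hξmin : ∀ x : ℝ, 0 < x → fP k R x = 0 → ξ₁ ≤ x)
    (hε0 : 0 < ε)
    (hεH : ε * R < ξ₁ ^ (k+5) - ξ₁ ^ (k+3) + R * ξ₁ ^ 2)
    (hρ0 : 0 < ρs) (hρ1 : ρs < 1) (hρsq' : ((k:ℝ)+3) * ρs^2 = (k:ℝ)+1)
    (hfρs : fP k R ρs < 0) :
    ε < 1 ∧ ∃ a₁ a₂ a₃ : ℝ, 0 < a₁ ∧ a₁ < a₂ ∧ a₂ < a₃ ∧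
      (∀ x : ℝ, 0 < x → (qP k R ε x = 0 ↔ x = a₁ ∨ x = a₂ ∨ x = a₃)) := by
  obtain ⟨ξc, hξc0, hξcsq⟩ := xic_exists k
  obtain ⟨hfanti, hfmono⟩ := fg_mono k ξc hξc0 hξcsq (fP_deriv k R)
  have hfcont : Continuous (fP k R) :=
    Differentiable.continuous (fun x => (fP_deriv k R x).differentiableAt)
  have hqcont : Continuous (qP k R ε) :=
    Differentiable.continuous (fun x => (qP_deriv k R ε x).differentiableAt)
  have hξcρs : ξc < ρs := by
    have h1 : ξc^2 < ρs^2 := by nlinarith [hξcsq, hρsq', mul_pos hξc0 hξc0]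
    nlinarith [h1, mul_pos hξc0 hξc0, mul_pos hρ0 hρ0, mul_pos (add_pos hξc0 hρ0) (add_pos hξc0 hρ0)]
  have hf0 : fP k R 0 = 2*R := by
    unfold fP; rw [zero_pow (by omega), zero_pow (by omega)]; ring
  -- ξ₁ < ρs
  have hξ₁ltρs : ξ₁ < ρs := by
    obtain ⟨y, hy, hfy⟩ := intermediate_value_Ioo' (le_of_lt hρ0) hfcont.continuousOn
      (show (0:ℝ) ∈ Ioo (fP k R ρs) (fP k R 0) by
        rw [hf0]; exact ⟨hfρs, by linarith⟩)
    exact lt_of_le_of_lt (hξmin y hy.1 hfy) hy.2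
  have hξ₁ltξc : ξ₁ < ξc := by
    by_contra h
    push_neg at h
    have := hfmono (show ξ₁ ∈ Ici ξc from h) (show ρs ∈ Ici ξc from (le_of_lt hξcρs)) hξ₁ltρs
    rw [hξroot] at this
    linarith
  -- ξ₂
  have hf1 : fP k R 1 = 2 + 2*R := by
    unfold fP; rw [one_pow, one_pow]; ring
  obtain ⟨ξ₂, hξ₂mem, hfξ₂⟩ := intermediate_value_Ioo (le_of_lt hρ1) hfcont.continuousOn
    (show (0:ℝ) ∈ Ioo (fP k R ρs) (fP k R 1) by rw [hf1]; exact ⟨hfρs, by linarith⟩)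
  have hρsξ₂ : ρs < ξ₂ := hξ₂mem.1
  have hξ₂1 : ξ₂ < 1 := hξ₂mem.2
  have hξ₂Ici : ξ₂ ∈ Ici ξc := le_of_lt (lt_trans hξcρs hρsξ₂)
  have hξ₁ξ₂ : ξ₁ < ξ₂ := lt_trans hξ₁ltρs hρsξ₂
  have hξ₂0 : 0 < ξ₂ := lt_trans hρ0 hρsξ₂
  -- sign of f
  have hfpos₁ : ∀ x : ℝ, 0 ≤ x → x < ξ₁ → 0 < fP k R x := by
    intro x hx0 hx
    have := hfanti (show x ∈ Icc 0 ξc from ⟨hx0, le_of_lt (lt_trans hx hξ₁ltξc)⟩)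
      (show ξ₁ ∈ Icc 0 ξc from ⟨hξ₁pos.le, hξ₁ltξc.le⟩) hx
    rw [hξroot] at this; exact this
  have hfneg : ∀ x : ℝ, ξ₁ < x → x < ξ₂ → fP k R x < 0 := by
    intro x hx1 hx2
    rcases le_or_gt x ξc with h | h
    · have := hfanti (show ξ₁ ∈ Icc 0 ξc from ⟨hξ₁pos.le, hξ₁ltξc.le⟩)
        (show x ∈ Icc 0 ξc from ⟨le_trans hξ₁pos.le hx1.le, h⟩) hx1
      rw [hξroot] at this; exact this
    · have := hfmono (show x ∈ Ici ξc from h.le) hξ₂Ici hx2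
      rw [hfξ₂] at this; exact this
  have hfpos₂ : ∀ x : ℝ, ξ₂ < x → 0 < fP k R x := by
    intro x hx
    have := hfmono hξ₂Ici (show x ∈ Ici ξc from le_trans hξ₂Ici hx.le) hx
    rw [hfξ₂] at this; exact this
  -- monotonicity of q
  have hqm1 : StrictMonoOn (qP k R ε) (Icc 0 ξ₁) := by
    refine mono_help (qP_deriv k R ε) (convex_Icc _ _) ?_
    intro x hx
    rw [interior_Icc] at hx
    exact mul_pos hx.1 (hfpos₁ x hx.1.le hx.2)
  have hqa : StrictAntiOn (qP k R ε) (Icc ξ₁ ξ₂) := by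
    refine anti_help (qP_deriv k R ε) (convex_Icc _ _) ?_
    intro x hx
    rw [interior_Icc] at hx
    exact mul_neg_of_pos_of_neg (lt_trans hξ₁pos hx.1) (hfneg x hx.1 hx.2)
  have hqm2 : StrictMonoOn (qP k R ε) (Ici ξ₂) := by
    refine mono_help (qP_deriv k R ε) (convex_Ici _) ?_
    intro x hx
    rw [interior_Ici] at hx
    exact mul_pos (lt_trans hξ₂0 hx) (hfpos₂ x hx)
  -- values of q
  have hq0 : qP k R ε 0 < 0 := by
    unfold qP; rw [zero_pow (by omega), zero_pow (by omega)]; nlinarith [mul_pos hε0 hR0]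
  have hqξ₁ : 0 < qP k R ε ξ₁ := by
    unfold qP; linarith [hεH]
  -- ε < 1
  have hε1 : ε < 1 := by
    have h1 : ξ₁ ^ 2 < 1 := by nlinarith [hξ₁ltρs, hρ1, hξ₁pos]
    have h2 : ξ₁^(k+5) = ξ₁^(k+1)*ξ₁^2*ξ₁^2 := by ring
    have h3 : ξ₁^(k+3) = ξ₁^(k+1)*ξ₁^2 := by ring
    have h4 : 0 < ξ₁^(k+1) := pow_pos hξ₁pos _
    have term : 0 < (1 - ξ₁^2) * (R + ξ₁^(k+3)) :=
      mul_pos (sub_pos.mpr h1) (by positivity)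
    have h6 : ε*R < 1*R := by nlinarith [hεH, term]
    exact lt_of_mul_lt_mul_right h6 hR0.le
  have hqξ₂ : qP k R ε ξ₂ < 0 := by
    have h1 : ξ₂^(k+5) = ξ₂^(k+3) * ξ₂^2 := by ring
    have h2 : ξ₂^(k+3) = ξ₂^(k+1) * ξ₂^2 := by ring
    have hsq : ρs^2 < ξ₂^2 := pow_lt_pow_left₀ hρsξ₂ hρ0.le (by norm_num)
    have h3 : ((k:ℝ)+1) < ((k:ℝ)+3) * ξ₂^2 := by
      rw [← hρsq']
      exact mul_lt_mul_of_pos_left hsq (by positivity)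
    have hroot : ((k:ℝ)+5)*ξ₂^(k+3) - ((k:ℝ)+3)*ξ₂^(k+1) + 2*R = 0 := hfξ₂
    have hroot2 : ((k:ℝ)+5)*ξ₂^(k+5) - ((k:ℝ)+3)*ξ₂^(k+3) + 2*R*ξ₂^2 = 0 := by
      linear_combination ξ₂^2 * hroot
    have key : 0 < ((k:ℝ)+3) * ξ₂^(k+5) - ((k:ℝ)+1) * ξ₂^(k+3) := by
      have h := mul_pos (sub_pos.mpr h3) (pow_pos hξ₂0 (k+3))
      calc (0:ℝ) < (((k:ℝ)+3) * ξ₂^2 - ((k:ℝ)+1)) * ξ₂^(k+3) := h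
        _ = ((k:ℝ)+3) * ξ₂^(k+5) - ((k:ℝ)+1) * ξ₂^(k+3) := by ring
    unfold qP
    linarith [key, hroot2, mul_pos hε0 hR0]
  have hq1 : 0 < qP k R ε 1 := by
    unfold qP; rw [one_pow, one_pow, one_pow]; nlinarith [hε1, hR0]
  -- the three roots
  obtain ⟨a₁, ha₁mem, hqa₁⟩ := intermediate_value_Ioo (le_of_lt hξ₁pos) hqcont.continuousOn
    (show (0:ℝ) ∈ Ioo (qP k R ε 0) (qP k R ε ξ₁) from ⟨hq0, hqξ₁⟩)
  obtain ⟨a₂, ha₂mem, hqa₂⟩ := intermediate_value_Ioo' (le_of_lt hξ₁ξ₂) hqcont.continuousOn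
    (show (0:ℝ) ∈ Ioo (qP k R ε ξ₂) (qP k R ε ξ₁) from ⟨hqξ₂, hqξ₁⟩)
  obtain ⟨a₃, ha₃mem, hqa₃⟩ := intermediate_value_Ioo (le_of_lt hξ₂1) hqcont.continuousOn
    (show (0:ℝ) ∈ Ioo (qP k R ε ξ₂) (qP k R ε 1) from ⟨hqξ₂, hq1⟩)
  refine ⟨hε1, a₁, a₂, a₃, ha₁mem.1, lt_trans ha₁mem.2 ha₂mem.1, lt_trans ha₂mem.2 ha₃mem.1, ?_⟩
  intro x hx0
  constructor
  · intro hqx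
    rcases le_or_gt x ξ₁ with h | h
    · left
      exact hqm1.injOn ⟨hx0.le, h⟩ ⟨ha₁mem.1.le, ha₁mem.2.le⟩ (by rw [hqx, hqa₁])
    · rcases le_or_gt x ξ₂ with h' | h'
      · right; left
        exact hqa.injOn ⟨h.le, h'⟩ ⟨ha₂mem.1.le, ha₂mem.2.le⟩ (by rw [hqx, hqa₂])
      · right; right
        exact hqm2.injOn (show x ∈ Ici ξ₂ from h'.le) (show a₃ ∈ Ici ξ₂ from ha₃mem.1.le)
          (by rw [hqx, hqa₃])
  · rintro (rfl | rfl | rfl)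
    · exact hqa₁
    · exact hqa₂
    · exact hqa₃

/-- Root structure for the "plus" family `pP`: exactly two positive roots. -/
private lemma proots (k : ℕ) (R ε : ℝ) (hR0 : 0 < R) (hε0 : 0 < ε) (hε1 : ε < 1) :
    ∃ b₁ b₂ : ℝ, 0 < b₁ ∧ b₁ < b₂ ∧
      (∀ x : ℝ, 0 < x → (pP k R ε x = 0 ↔ x = b₁ ∨ x = b₂)) := by
  obtain ⟨ξc, hξc0, hξcsq⟩ := xic_exists k
  obtain ⟨hganti, hgmono⟩ := fg_mono k ξc hξc0 hξcsq (gP_deriv k R)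
  have hgcont : Continuous (gP k R) :=
    Differentiable.continuous (fun x => (gP_deriv k R x).differentiableAt)
  have hpcont : Continuous (pP k R ε) :=
    Differentiable.continuous (fun x => (pP_deriv k R ε x).differentiableAt)
  have hξc1 : ξc < 1 := by nlinarith [hξcsq, hξc0, sq_nonneg (ξc - 1), Nat.cast_nonneg (α := ℝ) k]
  have hg0 : gP k R 0 = -(2*R) := by
    unfold gP; rw [zero_pow (by omega), zero_pow (by omega)]; ring
  set M : ℝ := 1 + R with hM
  have hM1 : (1:ℝ) ≤ M := by linarith
  have hMξc : ξc < M := by linarith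
  have hgM : 0 < gP k R M := by
    unfold gP
    have hA : M^(k+1) ≤ M^(k+3) := pow_le_pow_right₀ hM1 (by omega)
    have hB : M^2 ≤ M^(k+3) := pow_le_pow_right₀ hM1 (by omega)
    have hM2 : M^2 = 1 + 2*R + R^2 := by rw [hM]; ring
    nlinarith [hA, hB, hM2, hR0, sq_nonneg R, Nat.cast_nonneg (α := ℝ) k]
  have hgξc : gP k R ξc < 0 := by
    have := hganti (show (0:ℝ) ∈ Icc 0 ξc from ⟨le_refl 0, hξc0.le⟩)
      (show ξc ∈ Icc 0 ξc from ⟨hξc0.le, le_refl ξc⟩) hξc0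
    rw [hg0] at this
    linarith
  obtain ⟨η, hηmem, hgη⟩ := intermediate_value_Ioo (le_of_lt hMξc) hgcont.continuousOn
    (show (0:ℝ) ∈ Ioo (gP k R ξc) (gP k R M) from ⟨hgξc, hgM⟩)
  have hξcη : ξc < η := hηmem.1
  have hηM : η < M := hηmem.2
  have hη0 : 0 < η := lt_trans hξc0 hξcη
  -- sign of g
  have hgneg : ∀ x : ℝ, 0 ≤ x → x < η → gP k R x < 0 := by
    intro x hx0 hx
    rcases le_or_gt x ξc with h | h
    · rcases eq_or_lt_of_le hx0 with h0 | h0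
      · rw [← h0, hg0]; linarith
      · have := hganti (show (0:ℝ) ∈ Icc 0 ξc from ⟨le_refl 0, hξc0.le⟩)
          (show x ∈ Icc 0 ξc from ⟨hx0, h⟩) h0
        rw [hg0] at this; linarith
    · have := hgmono (show x ∈ Ici ξc from h.le) (show η ∈ Ici ξc from hξcη.le) hx
      rw [hgη] at this; exact this
  have hgpos : ∀ x : ℝ, η < x → 0 < gP k R x := by
    intro x hx
    have := hgmono (show η ∈ Ici ξc from hξcη.le)
      (show x ∈ Ici ξc from le_trans hξcη.le hx.le) hx
    rw [hgη] at this; exact this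
  -- monotonicity of p
  have hpa : StrictAntiOn (pP k R ε) (Icc 0 η) := by
    refine anti_help (pP_deriv k R ε) (convex_Icc _ _) ?_
    intro x hx
    rw [interior_Icc] at hx
    exact mul_neg_of_pos_of_neg hx.1 (hgneg x hx.1.le hx.2)
  have hpm : StrictMonoOn (pP k R ε) (Ici η) := by
    refine mono_help (pP_deriv k R ε) (convex_Ici _) ?_
    intro x hx
    rw [interior_Ici] at hx
    exact mul_pos (lt_trans hη0 hx) (hgpos x hx)
  -- values of p
  have hp0 : 0 < pP k R ε 0 := by
    unfold pP; rw [zero_pow (by omega), zero_pow (by omega)]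
    nlinarith [mul_pos hε0 hR0]
  have hp1 : pP k R ε 1 < 0 := by
    unfold pP; rw [one_pow, one_pow, one_pow]; nlinarith [hR0]
  have hpη : pP k R ε η < 0 := by
    rcases le_or_gt η 1 with h | h
    · have := hpm.monotoneOn (show η ∈ Ici η from le_refl η) (show (1:ℝ) ∈ Ici η from h) h
      linarith
    · have := hpa.antitoneOn (show (1:ℝ) ∈ Icc 0 η from ⟨by norm_num, h.le⟩)
        (show η ∈ Icc 0 η from ⟨hη0.le, le_refl η⟩) h.le
      linarith
  have hpM : 0 < pP k R ε M := by
    unfold pP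
    have hB : M^2 ≤ M^(k+3) := pow_le_pow_right₀ hM1 (by omega)
    have hM2 : M^2 = 1 + 2*R + R^2 := by rw [hM]; ring
    have hnn : (0:ℝ) ≤ M^2 - 1 := by nlinarith [hM2, sq_nonneg R, hR0]
    have key : M^2*(M^2 - 1) ≤ M^(k+3)*(M^2 - 1) := mul_le_mul_of_nonneg_right hB hnn
    have hM4 : M^4 = 1 + 4*R + 6*R^2 + 4*R^3 + R^4 := by rw [hM]; ring
    have hRM2 : R*M^2 = R + 2*R^2 + R^3 := by rw [hM]; ring
    have e : M^(k+5) = M^(k+3)*M^2 := by ring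
    nlinarith [key, e, hM2, hM4, hRM2, mul_pos hε0 hR0, pow_pos hR0 3, pow_pos hR0 4, sq_nonneg R, hR0]
  -- the two roots
  obtain ⟨b₁, hb₁mem, hpb₁⟩ := intermediate_value_Ioo' (le_of_lt hη0) hpcont.continuousOn
    (show (0:ℝ) ∈ Ioo (pP k R ε η) (pP k R ε 0) from ⟨hpη, hp0⟩)
  obtain ⟨b₂, hb₂mem, hpb₂⟩ := intermediate_value_Ioo (le_of_lt hηM) hpcont.continuousOn
    (show (0:ℝ) ∈ Ioo (pP k R ε η) (pP k R ε M) from ⟨hpη, hpM⟩)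
  refine ⟨b₁, b₂, hb₁mem.1, lt_trans hb₁mem.2 hb₂mem.1, ?_⟩
  intro x hx0
  constructor
  · intro hpx
    rcases le_or_gt x η with h | h
    · left
      exact hpa.injOn ⟨hx0.le, h⟩ ⟨hb₁mem.1.le, hb₁mem.2.le⟩ (by rw [hpx, hpb₁])
    · right
      exact hpm.injOn (show x ∈ Ici η from h.le) (show b₂ ∈ Ici η from hb₂mem.1.le)
        (by rw [hpx, hpb₂])
  · rintro (rfl | rfl)
    · exact hpb₁
    · exact hpb₂

/-- any `z` with `z^(k+3) = b^(k+3)`, `b > 0` a root of `pP`, solves the lens equation -/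
private lemma sol_of_p (k : ℕ) (r ε b : ℝ) (hr : 0 < r) (hε1 : ε < 1) (hb : 0 < b)
    (hpb : pP k (r^(k+3)) ε b = 0) (z : ℂ) (hz : z^(k+3) = ((b:ℂ))^(k+3)) :
    z ≠ 0 ∧ z^(k+3) ≠ (r:ℂ)^(k+3) ∧
      (z^(k+3) - (ε:ℂ)*(r:ℂ)^(k+3))/(z*(z^(k+3) - (r:ℂ)^(k+3))) = (starRingEnd ℂ) z := by
  unfold pP at hpb
  have hR0 : 0 < r^(k+3) := pow_pos hr _
  have hz0 : z ≠ 0 := by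
    intro h
    rw [h, zero_pow (by omega)] at hz
    have : (b:ℂ) = 0 := pow_eq_zero_iff (by omega) |>.mp hz.symm
    exact hb.ne' (by exact_mod_cast this)
  have habs : ‖z‖ = b := by
    have h1 : (‖z‖)^(k+3) = b^(k+3) := by
      have := congrArg (‖·‖) hz
      rwa [norm_pow, norm_pow, Complex.norm_real, Real.norm_eq_abs, abs_of_pos hb] at this
    exact pow_left_strictMonoOn₀ (n := k+3) (by omega) |>.injOn
      (norm_nonneg z) hb.le h1
  have hbr : b^(k+3) ≠ r^(k+3) := by
    intro h
    have : ε*r^(k+3) - r^(k+3) = 0 := by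
      have e : b^(k+5) = b^(k+3)*b^2 := by ring
      nlinarith [hpb, h]
    nlinarith [this, hR0]
  have hzr : z^(k+3) ≠ (r:ℂ)^(k+3) := by
    rw [hz]
    intro h
    exact hbr (by exact_mod_cast h)
  refine ⟨hz0, hzr, ?_⟩
  rw [div_eq_iff (mul_ne_zero hz0 (sub_ne_zero.mpr hzr))]
  have hconj : (starRingEnd ℂ) z * z = ((b:ℂ))^2 := by
    rw [mul_comm, Complex.mul_conj, ← Complex.sq_norm, habs]
    push_cast; ring
  have hpbC : ((b:ℂ))^(k+5) - (b:ℂ)^(k+3) - ((r:ℂ))^(k+3)*(b:ℂ)^2 + (ε:ℂ)*(r:ℂ)^(k+3) = 0 := by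
    exact_mod_cast congrArg (Complex.ofReal) hpb
  calc z^(k+3) - (ε:ℂ)*(r:ℂ)^(k+3)
      = ((starRingEnd ℂ) z * z) * (z^(k+3) - (r:ℂ)^(k+3)) := by
        rw [hconj, hz]
        push_cast
        linear_combination -hpbC
    _ = (starRingEnd ℂ) z * (z * (z^(k+3) - (r:ℂ)^(k+3))) := by ring

/-- any `z` with `z^(k+3) = -a^(k+3)`, `a > 0` a root of `qP`, solves the lens equation -/
private lemma sol_of_q (k : ℕ) (r ε a : ℝ) (hr : 0 < r) (ha : 0 < a)
    (hqa : qP k (r^(k+3)) ε a = 0) (z : ℂ) (hz : z^(k+3) = -((a:ℂ))^(k+3)) :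
    z ≠ 0 ∧ z^(k+3) ≠ (r:ℂ)^(k+3) ∧
      (z^(k+3) - (ε:ℂ)*(r:ℂ)^(k+3))/(z*(z^(k+3) - (r:ℂ)^(k+3))) = (starRingEnd ℂ) z := by
  unfold qP at hqa
  have hz0 : z ≠ 0 := by
    intro h
    rw [h, zero_pow (by omega)] at hz
    have : (a:ℂ) = 0 := pow_eq_zero_iff (n := k+3) (by omega) |>.mp (by
      have := hz.symm
      rw [neg_eq_zero] at this
      exact this)
    exact ha.ne' (by exact_mod_cast this)
  have habs : ‖z‖ = a := by
    have h1 : (‖z‖)^(k+3) = a^(k+3) := by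
      have := congrArg (‖·‖) hz
      rwa [norm_pow, norm_neg, norm_pow, Complex.norm_real, Real.norm_eq_abs, abs_of_pos ha] at this
    exact pow_left_strictMonoOn₀ (n := k+3) (by omega) |>.injOn
      (norm_nonneg z) ha.le h1
  have hzr : z^(k+3) ≠ (r:ℂ)^(k+3) := by
    rw [hz]
    intro h
    have : -a^(k+3) = r^(k+3) := by exact_mod_cast h
    nlinarith [pow_pos ha (k+3), pow_pos hr (k+3)]
  refine ⟨hz0, hzr, ?_⟩
  rw [div_eq_iff (mul_ne_zero hz0 (sub_ne_zero.mpr hzr))]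
  have hconj : (starRingEnd ℂ) z * z = ((a:ℂ))^2 := by
    rw [mul_comm, Complex.mul_conj, ← Complex.sq_norm, habs]
    push_cast; ring
  have hqaC : ((a:ℂ))^(k+5) - (a:ℂ)^(k+3) + ((r:ℂ))^(k+3)*(a:ℂ)^2 - (ε:ℂ)*(r:ℂ)^(k+3) = 0 := by
    exact_mod_cast congrArg (Complex.ofReal) hqa
  calc z^(k+3) - (ε:ℂ)*(r:ℂ)^(k+3)
      = ((starRingEnd ℂ) z * z) * (z^(k+3) - (r:ℂ)^(k+3)) := by
        rw [hconj, hz]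
        push_cast
        linear_combination hqaC
    _ = (starRingEnd ℂ) z * (z * (z^(k+3) - (r:ℂ)^(k+3))) := by ring

/-- conversely, any solution of the lens equation comes from a positive root of `pP` or `qP` -/
private lemma sol_forward (k : ℕ) (r ε : ℝ) (hr : 0 < r) (hε1 : ε < 1) (z : ℂ)
    (hz0 : z ≠ 0) (hzr : z^(k+3) ≠ (r:ℂ)^(k+3))
    (heq : (z^(k+3) - (ε:ℂ)*(r:ℂ)^(k+3))/(z*(z^(k+3) - (r:ℂ)^(k+3))) = (starRingEnd ℂ) z) :
    (pP k (r^(k+3)) ε (‖z‖) = 0 ∧ z^(k+3) = ((‖z‖ : ℝ):ℂ)^(k+3)) ∨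
    (qP k (r^(k+3)) ε (‖z‖) = 0 ∧ z^(k+3) = -((‖z‖ : ℝ):ℂ)^(k+3)) := by
  set ρ : ℝ := ‖z‖ with hρdef
  have hρ0 : 0 < ρ := norm_pos_iff.mpr hz0
  have hR0 : 0 < r^(k+3) := pow_pos hr _
  rw [div_eq_iff (mul_ne_zero hz0 (sub_ne_zero.mpr hzr))] at heq
  have hconj : (starRingEnd ℂ) z * z = ((ρ:ℝ):ℂ)^2 := by
    rw [mul_comm, Complex.mul_conj, ← Complex.sq_norm]
    push_cast; ring
  have key : z^(k+3) * (((ρ^2 - 1 : ℝ)):ℂ) = (((ρ^2 - ε)*r^(k+3) : ℝ) : ℂ) := by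
    push_cast
    linear_combination -heq - (z^(k+3) - (r:ℂ)^(k+3)) * hconj
  have hρ1 : ρ^2 ≠ 1 := by
    intro h
    have h0 : (((ρ^2 - ε)*r^(k+3) : ℝ) : ℂ) = 0 := by
      rw [← key, h]
      norm_num
    have h1 : (ρ^2 - ε)*r^(k+3) = 0 := by exact_mod_cast h0
    rw [h] at h1
    have : ε = 1 := by
      rcases mul_eq_zero.mp h1 with h2 | h2
      · linarith
      · exact absurd h2 hR0.ne'
    linarith
  have hne : (((ρ^2 - 1 : ℝ)):ℂ) ≠ 0 := by
    rw [Ne, Complex.ofReal_eq_zero, sub_eq_zero]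
    exact hρ1
  set w : ℝ := (ρ^2 - ε)*r^(k+3)/(ρ^2 - 1) with hwdef
  have hwre : w * (ρ^2 - 1) = (ρ^2 - ε)*r^(k+3) :=
    div_mul_cancel₀ _ (sub_ne_zero.mpr hρ1)
  have hzw : z^(k+3) = (w:ℂ) := by
    apply mul_right_cancel₀ hne
    rw [key]
    have hwreC := congrArg (Complex.ofReal) hwre
    push_cast at hwreC ⊢
    linear_combination -hwreC
  have habsw : |w| = ρ^(k+3) := by
    have := congrArg (‖·‖) hzw
    rw [norm_pow, Complex.norm_real, Real.norm_eq_abs] at this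
    exact this.symm
  rcases le_or_gt 0 w with hw | hw
  · left
    have hww : w = ρ^(k+3) := by rw [← _root_.abs_of_nonneg hw, habsw]
    constructor
    · unfold pP
      rw [hww] at hwre
      linear_combination hwre
    · rw [hzw, hww]
      push_cast
      ring
  · right
    have hww : w = -ρ^(k+3) := by
      have := _root_.abs_of_neg hw
      linarith [habsw, this]
    constructor
    · unfold qP
      rw [hww] at hwre
      linear_combination -hwre
    · rw [hzw, hww]
      push_cast
      ring


/-- For `n ≥ 3`, `0 < r < r_crit`, `ξ₁` the smallest positive root of
`(n+2)ξ^n − nξ^(n−2) + 2r^n` and `0 < ε < ε*`, the equation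
`(z^n − εr^n)/(z(z^n − r^n)) = conj z` has exactly `5n` solutions. -/
theorem stmt_11 (n : ℕ) (hn : 3 ≤ n) (r : ℝ) (hr : 0 < r)
    (hrc : r < ((((n : ℝ) - 2) / n) ^ (((n : ℝ) - 2) / 2) -
          (((n : ℝ) - 2) / n) ^ ((n : ℝ) / 2)) ^ ((1 : ℝ) / n))
    (ξ₁ : ℝ) (hξ₁pos : 0 < ξ₁)
    (hξ₁root : ((n : ℝ) + 2) * ξ₁ ^ n - (n : ℝ) * ξ₁ ^ (n - 2) + 2 * r ^ n = 0)
    (hξ₁min : ∀ x : ℝ, 0 < x →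
      ((n : ℝ) + 2) * x ^ n - (n : ℝ) * x ^ (n - 2) + 2 * r ^ n = 0 → ξ₁ ≤ x)
    (ε : ℝ) (hε0 : 0 < ε)
    (hεlt : ε < (ξ₁ ^ (n + 2) - ξ₁ ^ n + r ^ n * ξ₁ ^ 2) / r ^ n) :
    {z : ℂ | z ≠ 0 ∧ z ^ n ≠ (r : ℂ) ^ n ∧
      (z ^ n - (ε : ℂ) * (r : ℂ) ^ n) / (z * (z ^ n - (r : ℂ) ^ n)) =
        (starRingEnd ℂ) z}.ncard = 5 * n := by
  obtain ⟨k, rfl⟩ : ∃ k, n = k + 3 := ⟨n - 3, by omega⟩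
  clear hn
  have hR0 : 0 < r ^ (k+3) := pow_pos hr _
  -- translate the critical-radius hypothesis
  have e1 : ((k+3:ℕ):ℝ) = (k:ℝ)+3 := by push_cast; ring
  rw [e1] at hrc
  have e2 : (k:ℝ)+3-2 = (k:ℝ)+1 := by ring
  rw [e2] at hrc
  obtain ⟨ρs, hρ0, hρ1, hρsq', hfρs⟩ := rho_exists k r hr hrc
  -- translate the hypotheses about ξ₁
  have esub : k + 3 - 2 = k + 1 := rfl
  have hξroot' : fP k (r^(k+3)) ξ₁ = 0 := by
    unfold fP
    rw [esub, e1] at hξ₁root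
    linarith [hξ₁root]
  have hξmin' : ∀ x : ℝ, 0 < x → fP k (r^(k+3)) x = 0 → ξ₁ ≤ x := by
    intro x hx hfx
    apply hξ₁min x hx
    unfold fP at hfx
    rw [esub, e1]
    linarith [hfx]
  have hεH : ε * r^(k+3) < ξ₁^(k+5) - ξ₁^(k+3) + r^(k+3)*ξ₁^2 := by
    have h : ε * r^(k+3) < ξ₁ ^ (k+3+2) - ξ₁ ^ (k+3) + r ^ (k+3) * ξ₁ ^ 2 :=
      (lt_div_iff₀ hR0).mp hεlt
    exact h
  -- the five positive roots
  obtain ⟨hε1, a₁, a₂, a₃, ha₁0, h12, h23, hachar⟩ :=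
    qroots k (r^(k+3)) ε ξ₁ ρs hR0 hξ₁pos hξroot' hξmin' hε0 hεH hρ0 hρ1 hρsq' hfρs
  obtain ⟨b₁, b₂, hb₁0, hb12, hbchar⟩ := proots k (r^(k+3)) ε hR0 hε0 hε1
  have ha₂0 : 0 < a₂ := lt_trans ha₁0 h12
  have ha₃0 : 0 < a₃ := lt_trans ha₂0 h23
  have hb₂0 : 0 < b₂ := lt_trans hb₁0 hb12
  -- the five solution circles
  have hSeq : {z : ℂ | z ≠ 0 ∧ z ^ (k+3) ≠ (r : ℂ) ^ (k+3) ∧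
      (z ^ (k+3) - (ε : ℂ) * (r : ℂ) ^ (k+3)) / (z * (z ^ (k+3) - (r : ℂ) ^ (k+3))) =
        (starRingEnd ℂ) z}
      = {z : ℂ | z^(k+3) = ((b₁:ℂ))^(k+3)} ∪ {z : ℂ | z^(k+3) = ((b₂:ℂ))^(k+3)}
        ∪ {z : ℂ | z^(k+3) = -((a₁:ℂ))^(k+3)} ∪ {z : ℂ | z^(k+3) = -((a₂:ℂ))^(k+3)}
        ∪ {z : ℂ | z^(k+3) = -((a₃:ℂ))^(k+3)} := by
    ext z
    simp only [Set.mem_setOf_eq, Set.mem_union]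
    constructor
    · rintro ⟨hz0, hzr, heq⟩
      rcases sol_forward k r ε hr hε1 z hz0 hzr heq with ⟨hp, hzv⟩ | ⟨hq, hzv⟩
      · rcases (hbchar _ (norm_pos_iff.mpr hz0)).mp hp with h | h
        · exact Or.inl (Or.inl (Or.inl (Or.inl (by rw [hzv, h]))))
        · exact Or.inl (Or.inl (Or.inl (Or.inr (by rw [hzv, h]))))
      · rcases (hachar _ (norm_pos_iff.mpr hz0)).mp hq with h | h | h
        · exact Or.inl (Or.inl (Or.inr (by rw [hzv, h])))
        · exact Or.inl (Or.inr (by rw [hzv, h]))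
        · exact Or.inr (by rw [hzv, h])
    · rintro ((((h | h) | h) | h) | h)
      · exact sol_of_p k r ε b₁ hr hε1 hb₁0 ((hbchar b₁ hb₁0).mpr (Or.inl rfl)) z h
      · exact sol_of_p k r ε b₂ hr hε1 hb₂0 ((hbchar b₂ hb₂0).mpr (Or.inr rfl)) z h
      · exact sol_of_q k r ε a₁ hr ha₁0 ((hachar a₁ ha₁0).mpr (Or.inl rfl)) z h
      · exact sol_of_q k r ε a₂ hr ha₂0 ((hachar a₂ ha₂0).mpr (Or.inr (Or.inl rfl))) z h
      · exact sol_of_q k r ε a₃ hr ha₃0 ((hachar a₃ ha₃0).mpr (Or.inr (Or.inr rfl))) z h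
  rw [hSeq]
  -- the five target values are nonzero and pairwise distinct
  have hinj : ∀ x y : ℝ, 0 < x → 0 < y → x^(k+3) = y^(k+3) → x = y := by
    intro x y hx hy h
    exact pow_left_strictMonoOn₀ (n := k+3) (by omega) |>.injOn hx.le hy.le h
  have hvb₁ : ((b₁:ℂ))^(k+3) ≠ 0 := pow_ne_zero _ (by exact_mod_cast hb₁0.ne')
  have hvb₂ : ((b₂:ℂ))^(k+3) ≠ 0 := pow_ne_zero _ (by exact_mod_cast hb₂0.ne')
  have hva₁ : -((a₁:ℂ))^(k+3) ≠ 0 :=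
    neg_ne_zero.mpr (pow_ne_zero _ (by exact_mod_cast ha₁0.ne'))
  have hva₂ : -((a₂:ℂ))^(k+3) ≠ 0 :=
    neg_ne_zero.mpr (pow_ne_zero _ (by exact_mod_cast ha₂0.ne'))
  have hva₃ : -((a₃:ℂ))^(k+3) ≠ 0 :=
    neg_ne_zero.mpr (pow_ne_zero _ (by exact_mod_cast ha₃0.ne'))
  have hbb : ((b₁:ℂ))^(k+3) ≠ ((b₂:ℂ))^(k+3) := by
    intro h
    exact hb12.ne (hinj b₁ b₂ hb₁0 hb₂0 (by exact_mod_cast h))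
  have hba : ∀ b a : ℝ, 0 < b → 0 < a → ((b:ℂ))^(k+3) ≠ -((a:ℂ))^(k+3) := by
    intro b a hb ha h
    have h' : b^(k+3) = -a^(k+3) := by exact_mod_cast h
    nlinarith [pow_pos hb (k+3), pow_pos ha (k+3)]
  have haa : ∀ x y : ℝ, 0 < x → 0 < y → x ≠ y → -((x:ℂ))^(k+3) ≠ -((y:ℂ))^(k+3) := by
    intro x y hx hy hxy h
    rw [neg_inj] at h
    exact hxy (hinj x y hx hy (by exact_mod_cast h))
  -- disjointness machinery
  have hdisj : ∀ c d : ℂ, c ≠ d →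
      Disjoint {z : ℂ | z^(k+3) = c} {z : ℂ | z^(k+3) = d} := by
    intro c d hcd
    rw [Set.disjoint_left]
    intro z hz hz'
    exact hcd (by rw [← hz, ← hz'])
  -- cardinalities
  obtain ⟨hf1, hc1⟩ := aux_card (k+3) (by omega) _ hvb₁
  obtain ⟨hf2, hc2⟩ := aux_card (k+3) (by omega) _ hvb₂
  obtain ⟨hf3, hc3⟩ := aux_card (k+3) (by omega) _ hva₁
  obtain ⟨hf4, hc4⟩ := aux_card (k+3) (by omega) _ hva₂
  obtain ⟨hf5, hc5⟩ := aux_card (k+3) (by omega) _ hva₃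
  rw [Set.ncard_union_eq (by
      refine Set.disjoint_union_left.mpr ⟨Set.disjoint_union_left.mpr
        ⟨Set.disjoint_union_left.mpr ⟨?_, ?_⟩, ?_⟩, ?_⟩
      · exact hdisj _ _ (hba b₁ a₃ hb₁0 ha₃0)
      · exact hdisj _ _ (hba b₂ a₃ hb₂0 ha₃0)
      · exact hdisj _ _ (haa a₁ a₃ ha₁0 ha₃0 (lt_trans h12 h23).ne)
      · exact hdisj _ _ (haa a₂ a₃ ha₂0 ha₃0 h23.ne))
    (((hf1.union hf2).union hf3).union hf4) hf5]
  rw [Set.ncard_union_eq (by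
      refine Set.disjoint_union_left.mpr ⟨Set.disjoint_union_left.mpr ⟨?_, ?_⟩, ?_⟩
      · exact hdisj _ _ (hba b₁ a₂ hb₁0 ha₂0)
      · exact hdisj _ _ (hba b₂ a₂ hb₂0 ha₂0)
      · exact hdisj _ _ (haa a₁ a₂ ha₁0 ha₂0 h12.ne))
    ((hf1.union hf2).union hf3) hf4]
  rw [Set.ncard_union_eq (by
      refine Set.disjoint_union_left.mpr ⟨?_, ?_⟩
      · exact hdisj _ _ (hba b₁ a₁ hb₁0 ha₁0)
      · exact hdisj _ _ (hba b₂ a₁ hb₂0 ha₁0))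
    (hf1.union hf2) hf3]
  rw [Set.ncard_union_eq (hdisj _ _ hbb) hf1 hf2]
  rw [hc1, hc2, hc3, hc4, hc5]
  ring
end

section
/- Let n ≥ 3, 0 < r < r_crit, and ε* as above. If ε* < ε < 1, then the equation (z^n − ε r^n)/(z(z^n − r^n)) = conj(z) has exactly 3n complex solutions. -/
open Complex Polynomial

lemma s12_deriv1 (m : ℕ) (a b c : ℝ) (x : ℝ) :
    HasDerivAt (fun ρ : ℝ => a * ρ ^ (m + 3) - b * ρ ^ (m + 1) + c)
      (x ^ m * (((m : ℝ) + 3) * a * x ^ 2 - ((m : ℝ) + 1) * b)) x := by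
  have h := (((hasDerivAt_pow (m + 3) x).const_mul a).sub
    ((hasDerivAt_pow (m + 1) x).const_mul b)).add_const c
  refine h.congr_deriv ?_
  simp only [show m + 3 - 1 = m + 2 from by omega, Nat.add_sub_cancel]
  push_cast
  ring

lemma s12_deriv2 (m : ℕ) (a c : ℝ) (x : ℝ) :
    HasDerivAt (fun ρ : ℝ => ρ ^ (m + 5) - ρ ^ (m + 3) + a * ρ ^ 2 + c)
      (x * (((m : ℝ) + 5) * x ^ (m + 3) - ((m : ℝ) + 3) * x ^ (m + 1) + 2 * a)) x := by
  have h := (((hasDerivAt_pow (m + 5) x).sub (hasDerivAt_pow (m + 3) x)).add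
    ((hasDerivAt_pow 2 x).const_mul a)).add_const c
  refine h.congr_deriv ?_
  simp only [show m + 5 - 1 = m + 4 from by omega, show m + 3 - 1 = m + 2 from by omega]
  push_cast
  ring

lemma s12_radial (m : ℕ) (s : ℝ) (hs : 0 < s) (hs1 : s < 1)
    (ξ₁ : ℝ) (hξpos : 0 < ξ₁)
    (hroot : ((m : ℝ) + 5) * ξ₁ ^ (m + 3) - ((m : ℝ) + 3) * ξ₁ ^ (m + 1) + 2 * s = 0)
    (hmin : ∀ x : ℝ, 0 < x →
      ((m : ℝ) + 5) * x ^ (m + 3) - ((m : ℝ) + 3) * x ^ (m + 1) + 2 * s = 0 → ξ₁ ≤ x)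
    (ε : ℝ) (hεgt : ξ₁ ^ (m + 5) - ξ₁ ^ (m + 3) + s * ξ₁ ^ 2 < ε * s) (hε1 : ε < 1) :
    ∃ ρ₁ ρ₂ ρ₃ : ℝ, 0 < ρ₁ ∧ ρ₁ < 1 ∧ 0 < ρ₂ ∧ ρ₂ < 1 ∧ 1 < ρ₃ ∧ 0 < ε ∧
      (∀ ρ : ℝ, 0 < ρ →
        (ρ ^ (m + 3) * (1 - ρ ^ 2) = s * (ε - ρ ^ 2) ↔ ρ = ρ₁ ∨ ρ = ρ₃)) ∧
      (∀ ρ : ℝ, 0 < ρ →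
        (-(ρ ^ (m + 3)) * (1 - ρ ^ 2) = s * (ε - ρ ^ 2) ↔ ρ = ρ₂)) := by
  set P : ℝ → ℝ := fun x => ((m : ℝ) + 5) * x ^ (m + 3) - ((m : ℝ) + 3) * x ^ (m + 1) + 2 * s
    with hP
  set Q : ℝ → ℝ := fun x => ((m : ℝ) + 5) * x ^ (m + 3) - ((m : ℝ) + 3) * x ^ (m + 1) + (-(2 * s))
    with hQ
  set U : ℝ → ℝ := fun x => x ^ (m + 5) - x ^ (m + 3) + s * x ^ 2 + (-(ε * s)) with hU
  set V : ℝ → ℝ := fun x => x ^ (m + 5) - x ^ (m + 3) + (-s) * x ^ 2 + ε * s with hV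
  set ξm : ℝ := Real.sqrt (((m : ℝ) + 1) / ((m : ℝ) + 5)) with hξm
  have hξm_pos : 0 < ξm := Real.sqrt_pos.mpr (by positivity)
  have hξmsq : ξm ^ 2 = ((m : ℝ) + 1) / ((m : ℝ) + 5) := Real.sq_sqrt (by positivity)
  have hξmsq1 : ξm ^ 2 < 1 := by
    rw [hξmsq, div_lt_one (by positivity)]; linarith
  have hξm1 : ξm < 1 := by nlinarith [hξm_pos]
  -- continuity
  have hPc : Continuous P := by rw [hP]; fun_prop
  have hQc : Continuous Q := by rw [hQ]; fun_prop
  have hUc : Continuous U := by rw [hU]; fun_prop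
  have hVc : Continuous V := by rw [hV]; fun_prop
  -- derivatives
  have hPd : ∀ x : ℝ, HasDerivAt P
      (((m : ℝ) + 3) * x ^ m * (((m : ℝ) + 5) * x ^ 2 - ((m : ℝ) + 1))) x := by
    intro x
    have h := s12_deriv1 m ((m : ℝ) + 5) ((m : ℝ) + 3) (2 * s) x
    have e : x ^ m * (((m : ℝ) + 3) * ((m : ℝ) + 5) * x ^ 2 - ((m : ℝ) + 1) * ((m : ℝ) + 3))
        = ((m : ℝ) + 3) * x ^ m * (((m : ℝ) + 5) * x ^ 2 - ((m : ℝ) + 1)) := by ring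
    rw [e] at h; exact h
  have hQd : ∀ x : ℝ, HasDerivAt Q
      (((m : ℝ) + 3) * x ^ m * (((m : ℝ) + 5) * x ^ 2 - ((m : ℝ) + 1))) x := by
    intro x
    have h := s12_deriv1 m ((m : ℝ) + 5) ((m : ℝ) + 3) (-(2 * s)) x
    have e : x ^ m * (((m : ℝ) + 3) * ((m : ℝ) + 5) * x ^ 2 - ((m : ℝ) + 1) * ((m : ℝ) + 3))
        = ((m : ℝ) + 3) * x ^ m * (((m : ℝ) + 5) * x ^ 2 - ((m : ℝ) + 1)) := by ring
    rw [e] at h; exact h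
  have hUd : ∀ x : ℝ, HasDerivAt U (x * P x) x := by
    intro x
    have h := s12_deriv2 m s (-(ε * s)) x
    simp only [hU, hP]
    exact h
  have hVd : ∀ x : ℝ, HasDerivAt V (x * Q x) x := by
    intro x
    have h := s12_deriv2 m (-s) (ε * s) x
    have e : x * (((m : ℝ) + 5) * x ^ (m + 3) - ((m : ℝ) + 3) * x ^ (m + 1) + 2 * -s)
        = x * Q x := by simp only [hQ]; ring
    rw [e] at h
    simp only [hV]
    exact h
  -- monotonicity of P, Q
  have hPanti : StrictAntiOn P (Set.Icc 0 ξm) := by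
    apply strictAntiOn_of_deriv_neg (convex_Icc _ _) hPc.continuousOn
    intro x hx
    rw [interior_Icc] at hx
    rw [(hPd x).deriv]
    have hx2 : x ^ 2 < ξm ^ 2 := pow_lt_pow_left₀ hx.2 hx.1.le two_ne_zero
    rw [hξmsq] at hx2
    have h5 : x ^ 2 * ((m : ℝ) + 5) < (m : ℝ) + 1 := (lt_div_iff₀ (by positivity)).mp hx2
    have hxm : (0 : ℝ) < x ^ m := pow_pos hx.1 m
    exact mul_neg_of_pos_of_neg (mul_pos (by positivity) hxm) (by linarith)
  have hPmono : StrictMonoOn P (Set.Ici ξm) := by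
    apply strictMonoOn_of_deriv_pos (convex_Ici _) hPc.continuousOn
    intro x hx
    rw [interior_Ici] at hx
    rw [(hPd x).deriv]
    have hx0 : 0 < x := lt_trans hξm_pos hx
    have hx2 : ξm ^ 2 < x ^ 2 := pow_lt_pow_left₀ hx hξm_pos.le two_ne_zero
    rw [hξmsq] at hx2
    have h5 : (m : ℝ) + 1 < x ^ 2 * ((m : ℝ) + 5) := (div_lt_iff₀ (by positivity)).mp hx2
    have hxm : (0 : ℝ) < x ^ m := pow_pos hx0 m
    exact mul_pos (mul_pos (by positivity) hxm) (by linarith)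
  have hQanti : StrictAntiOn Q (Set.Icc 0 ξm) := by
    apply strictAntiOn_of_deriv_neg (convex_Icc _ _) hQc.continuousOn
    intro x hx
    rw [interior_Icc] at hx
    rw [(hQd x).deriv]
    have hx2 : x ^ 2 < ξm ^ 2 := pow_lt_pow_left₀ hx.2 hx.1.le two_ne_zero
    rw [hξmsq] at hx2
    have h5 : x ^ 2 * ((m : ℝ) + 5) < (m : ℝ) + 1 := (lt_div_iff₀ (by positivity)).mp hx2
    have hxm : (0 : ℝ) < x ^ m := pow_pos hx.1 m
    exact mul_neg_of_pos_of_neg (mul_pos (by positivity) hxm) (by linarith)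
  have hQmono : StrictMonoOn Q (Set.Ici ξm) := by
    apply strictMonoOn_of_deriv_pos (convex_Ici _) hQc.continuousOn
    intro x hx
    rw [interior_Ici] at hx
    rw [(hQd x).deriv]
    have hx0 : 0 < x := lt_trans hξm_pos hx
    have hx2 : ξm ^ 2 < x ^ 2 := pow_lt_pow_left₀ hx hξm_pos.le two_ne_zero
    rw [hξmsq] at hx2
    have h5 : (m : ℝ) + 1 < x ^ 2 * ((m : ℝ) + 5) := (div_lt_iff₀ (by positivity)).mp hx2
    have hxm : (0 : ℝ) < x ^ m := pow_pos hx0 m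
    exact mul_pos (mul_pos (by positivity) hxm) (by linarith)
  -- values of P
  have hzero1 : (0 : ℝ) ^ (m + 3) = 0 := zero_pow (by omega)
  have hzero2 : (0 : ℝ) ^ (m + 1) = 0 := zero_pow (by omega)
  have hzero3 : (0 : ℝ) ^ (m + 5) = 0 := zero_pow (by omega)
  have hP0 : P 0 = 2 * s := by simp only [hP, hzero1, hzero2]; ring
  have hPξ₁ : P ξ₁ = 0 := by simp only [hP]; linarith [hroot]
  have hP1 : P 1 = 2 + 2 * s := by simp only [hP, one_pow]; ring
  -- ξ₁ ≤ ξm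
  have hξ₁leξm : ξ₁ ≤ ξm := by
    by_contra hcon
    push_neg at hcon
    have h1 : P ξm < P ξ₁ := hPmono (Set.mem_Ici.mpr le_rfl) (Set.mem_Ici.mpr hcon.le) hcon
    rw [hPξ₁] at h1
    have h2 : (0 : ℝ) ∈ Set.Icc (P ξm) (P 0) := ⟨h1.le, by rw [hP0]; positivity⟩
    obtain ⟨x, hxmem, hPx⟩ := intermediate_value_Icc' hξm_pos.le hPc.continuousOn h2
    have hx0 : x ≠ 0 := by rintro rfl; rw [hPx] at hP0; linarith
    have := hmin x (lt_of_le_of_ne hxmem.1 (Ne.symm hx0)) (by simpa [hP] using hPx)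
    linarith [hxmem.2]
  have hξ₁1 : ξ₁ < 1 := lt_of_le_of_lt hξ₁leξm hξm1
  -- positivity of E ξ₁, hence ε > 0
  have hkey : 2 * (ξ₁ ^ (m + 5) - ξ₁ ^ (m + 3) + s * ξ₁ ^ 2)
      = ξ₁ ^ (m + 1) * ξ₁ ^ 2 * (((m : ℝ) + 1) - ((m : ℝ) + 3) * ξ₁ ^ 2) := by
    linear_combination (ξ₁ ^ 2) * hroot
  have hfac : 0 < ((m : ℝ) + 1) - ((m : ℝ) + 3) * ξ₁ ^ 2 := by
    have h1 : ξ₁ ^ 2 ≤ ξm ^ 2 := pow_le_pow_left₀ hξpos.le hξ₁leξm 2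
    rw [hξmsq] at h1
    have h2 : ξ₁ ^ 2 * ((m : ℝ) + 5) ≤ (m : ℝ) + 1 := (le_div_iff₀ (by positivity)).mp h1
    nlinarith [pow_pos hξpos 2]
  have hEξ₁pos : 0 < ξ₁ ^ (m + 5) - ξ₁ ^ (m + 3) + s * ξ₁ ^ 2 := by
    have h9 : 0 < ξ₁ ^ (m + 1) * ξ₁ ^ 2 * (((m : ℝ) + 1) - ((m : ℝ) + 3) * ξ₁ ^ 2) :=
      mul_pos (mul_pos (pow_pos hξpos (m + 1)) (pow_pos hξpos 2)) hfac
    linarith [hkey]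
  have hε0 : 0 < ε := by
    by_contra hc
    push_neg at hc
    have h9 : ε * s ≤ 0 := mul_nonpos_iff.mpr (Or.inr ⟨hc, hs.le⟩)
    linarith [hEξ₁pos, hεgt]
  -- P is nonnegative on [0, ξ₁]
  have hPnonneg : ∀ x ∈ Set.Icc (0 : ℝ) ξ₁, 0 ≤ P x := by
    intro x hx
    by_contra h
    push_neg at h
    have hx1 : x ≠ ξ₁ := by rintro rfl; rw [hPξ₁] at h; linarith
    have h2 : (0 : ℝ) ∈ Set.Icc (P x) (P 0) := ⟨h.le, by rw [hP0]; positivity⟩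
    obtain ⟨y, hymem, hPy⟩ := intermediate_value_Icc' hx.1 hPc.continuousOn h2
    have hy0 : y ≠ 0 := by rintro rfl; rw [hPy] at hP0; linarith
    have := hmin y (lt_of_le_of_ne hymem.1 (Ne.symm hy0)) (by simpa [hP] using hPy)
    have hxlt : x < ξ₁ := lt_of_le_of_ne hx.2 hx1
    linarith [hymem.2]
  -- construction of ξ₂
  have hPξm : P ξm ≤ 0 := by
    rcases eq_or_lt_of_le hξ₁leξm with h | h
    · rw [← h, hPξ₁]
    · exact le_of_lt (hPξ₁ ▸ hPanti ⟨hξpos.le, hξ₁leξm⟩ ⟨le_trans hξpos.le hξ₁leξm, le_rfl⟩ h)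
  have h2 : (0 : ℝ) ∈ Set.Icc (P ξm) (P 1) := ⟨hPξm, by rw [hP1]; positivity⟩
  obtain ⟨ξ₂, hξ₂mem, hPξ₂⟩ := intermediate_value_Icc hξm1.le hPc.continuousOn h2
  have hξ₂lt1 : ξ₂ < 1 := lt_of_le_of_ne hξ₂mem.2 (by rintro rfl; rw [hPξ₂] at hP1; linarith)
  have hξmleξ₂ : ξm ≤ ξ₂ := hξ₂mem.1
  have hξ₂pos : 0 < ξ₂ := lt_of_lt_of_le hξm_pos hξmleξ₂
  have hξ₁leξ₂ : ξ₁ ≤ ξ₂ := le_trans hξ₁leξm hξmleξ₂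
  -- sign of P
  have hPle : ∀ x ∈ Set.Icc ξ₁ ξ₂, P x ≤ 0 := by
    intro x hx
    rcases le_or_gt x ξm with h | h
    · rcases eq_or_lt_of_le hx.1 with h1 | h1
      · rw [← h1, hPξ₁]
      · exact le_of_lt (hPξ₁ ▸ hPanti ⟨hξpos.le, hξ₁leξm⟩ ⟨le_trans hξpos.le hx.1, h⟩ h1)
    · rcases eq_or_lt_of_le hx.2 with h1 | h1
      · rw [h1, hPξ₂]
      · exact le_of_lt (hPξ₂ ▸ hPmono (Set.mem_Ici.mpr h.le) (Set.mem_Ici.mpr hξmleξ₂) h1)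
  have hPpos : ∀ x : ℝ, ξ₂ < x → 0 < P x := by
    intro x hx
    have := hPmono (Set.mem_Ici.mpr hξmleξ₂) (Set.mem_Ici.mpr (le_trans hξmleξ₂ hx.le)) hx
    rw [hPξ₂] at this
    exact this
  -- monotonicity of U
  have hUmono0 : MonotoneOn U (Set.Icc 0 ξ₁) := by
    apply monotoneOn_of_deriv_nonneg (convex_Icc _ _) hUc.continuousOn
      (fun x _ => (hUd x).differentiableAt.differentiableWithinAt)
    intro x hx
    rw [interior_Icc] at hx
    rw [(hUd x).deriv]
    exact mul_nonneg hx.1.le (hPnonneg x ⟨hx.1.le, hx.2.le⟩)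
  have hUanti12 : AntitoneOn U (Set.Icc ξ₁ ξ₂) := by
    apply antitoneOn_of_deriv_nonpos (convex_Icc _ _) hUc.continuousOn
      (fun x _ => (hUd x).differentiableAt.differentiableWithinAt)
    intro x hx
    rw [interior_Icc] at hx
    rw [(hUd x).deriv]
    exact mul_nonpos_iff.mpr (Or.inl ⟨(lt_trans hξpos hx.1).le, hPle x ⟨hx.1.le, hx.2.le⟩⟩)
  have hUmono2 : StrictMonoOn U (Set.Ici ξ₂) := by
    apply strictMonoOn_of_deriv_pos (convex_Ici _) hUc.continuousOn
    intro x hx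
    rw [interior_Ici] at hx
    rw [(hUd x).deriv]
    exact mul_pos (lt_trans hξ₂pos hx) (hPpos x hx)
  -- values of U
  have hUξ₁ : U ξ₁ < 0 := by simp only [hU]; linarith [hεgt]
  have hU1 : 0 < U 1 := by
    have h8 : 0 < s * (1 - ε) := mul_pos hs (by linarith)
    simp only [hU, one_pow]
    linarith [h8]
  have hUle : ∀ x ∈ Set.Icc (0 : ℝ) ξ₂, U x < 0 := by
    intro x hx
    rcases le_or_gt x ξ₁ with h | h
    · exact lt_of_le_of_lt (hUmono0 ⟨hx.1, h⟩ ⟨hξpos.le, le_rfl⟩ h) hUξ₁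
    · exact lt_of_le_of_lt (hUanti12 ⟨le_rfl, hξ₁leξ₂⟩ ⟨h.le, hx.2⟩ h.le) hUξ₁
  -- ρ₂
  have h3 : (0 : ℝ) ∈ Set.Icc (U ξ₂) (U 1) :=
    ⟨(hUle ξ₂ ⟨hξ₂pos.le, le_rfl⟩).le, hU1.le⟩
  obtain ⟨ρ₂, hρ₂mem, hUρ₂⟩ := intermediate_value_Icc hξ₂lt1.le hUc.continuousOn h3
  have hρ₂gtξ₂ : ξ₂ < ρ₂ := by
    rcases eq_or_lt_of_le hρ₂mem.1 with h | h
    · exfalso; rw [← h] at hUρ₂; exact absurd hUρ₂ (ne_of_lt (hUle ξ₂ ⟨hξ₂pos.le, le_rfl⟩))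
    · exact h
  have hρ₂lt1 : ρ₂ < 1 := by
    rcases eq_or_lt_of_le hρ₂mem.2 with h | h
    · exfalso; rw [h] at hUρ₂; exact absurd hUρ₂ (ne_of_gt hU1)
    · exact h
  have hρ₂pos : 0 < ρ₂ := lt_trans hξ₂pos hρ₂gtξ₂
  have hUuniq : ∀ ρ : ℝ, 0 < ρ → U ρ = 0 → ρ = ρ₂ := by
    intro ρ hρ hUρ
    rcases le_or_gt ρ ξ₂ with h | h
    · exact absurd hUρ (ne_of_lt (hUle ρ ⟨hρ.le, h⟩))
    · exact hUmono2.injOn (Set.mem_Ici.mpr h.le) (Set.mem_Ici.mpr hρ₂gtξ₂.le)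
        (by rw [hUρ, hUρ₂])
  -- values of Q, ρ₀
  have hQ0 : Q 0 = -(2 * s) := by simp only [hQ, hzero1, hzero2]; ring
  have hQξm : Q ξm < 0 := by
    have := hQanti ⟨le_rfl, hξm_pos.le⟩ ⟨hξm_pos.le, le_rfl⟩ hξm_pos
    rw [hQ0] at this
    linarith
  have hQ1 : Q 1 = 2 - 2 * s := by simp only [hQ, one_pow]; ring
  have h4 : (0 : ℝ) ∈ Set.Icc (Q ξm) (Q 1) := ⟨hQξm.le, by rw [hQ1]; linarith⟩
  obtain ⟨ρ₀, hρ₀mem, hQρ₀⟩ := intermediate_value_Icc hξm1.le hQc.continuousOn h4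
  have hρ₀gtξm : ξm < ρ₀ := by
    rcases eq_or_lt_of_le hρ₀mem.1 with h | h
    · exfalso; rw [← h] at hQρ₀; linarith
    · exact h
  have hρ₀lt1 : ρ₀ < 1 := by
    rcases eq_or_lt_of_le hρ₀mem.2 with h | h
    · exfalso; rw [h, hQ1] at hQρ₀; linarith
    · exact h
  have hρ₀pos : 0 < ρ₀ := lt_trans hξm_pos hρ₀gtξm
  have hQneg : ∀ x : ℝ, 0 < x → x < ρ₀ → Q x < 0 := by
    intro x hx0 hxρ₀
    rcases le_or_gt x ξm with h | h
    · have := hQanti ⟨le_rfl, hξm_pos.le⟩ ⟨hx0.le, h⟩ hx0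
      rw [hQ0] at this
      linarith
    · have := hQmono (Set.mem_Ici.mpr h.le) (Set.mem_Ici.mpr hρ₀mem.1) hxρ₀
      rw [hQρ₀] at this
      exact this
  have hQpos : ∀ x : ℝ, ρ₀ < x → 0 < Q x := by
    intro x hx
    have := hQmono (Set.mem_Ici.mpr hρ₀mem.1)
      (Set.mem_Ici.mpr (le_trans hρ₀mem.1 hx.le)) hx
    rw [hQρ₀] at this
    exact this
  -- monotonicity of V
  have hVanti : StrictAntiOn V (Set.Icc 0 ρ₀) := by
    apply strictAntiOn_of_deriv_neg (convex_Icc _ _) hVc.continuousOn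
    intro x hx
    rw [interior_Icc] at hx
    rw [(hVd x).deriv]
    exact mul_neg_of_pos_of_neg hx.1 (hQneg x hx.1 hx.2)
  have hVmono : StrictMonoOn V (Set.Ici ρ₀) := by
    apply strictMonoOn_of_deriv_pos (convex_Ici _) hVc.continuousOn
    intro x hx
    rw [interior_Ici] at hx
    rw [(hVd x).deriv]
    exact mul_pos (lt_trans hρ₀pos hx) (hQpos x hx)
  -- values of V
  have hV0 : V 0 = ε * s := by simp only [hV, hzero1, hzero3]; ring
  have hV1 : V 1 < 0 := by
    have h8 : 0 < s * (1 - ε) := mul_pos hs (by linarith)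
    simp only [hV, one_pow]
    linarith [h8]
  have hVρ₀ : V ρ₀ < 0 := by
    have := hVmono (Set.mem_Ici.mpr le_rfl) (Set.mem_Ici.mpr hρ₀lt1.le) hρ₀lt1
    linarith
  -- ρ₁
  have h5 : (0 : ℝ) ∈ Set.Icc (V ρ₀) (V 0) := ⟨hVρ₀.le, by rw [hV0]; positivity⟩
  obtain ⟨ρ₁, hρ₁mem, hVρ₁⟩ := intermediate_value_Icc' hρ₀pos.le hVc.continuousOn h5
  have hρ₁pos : 0 < ρ₁ := by
    rcases eq_or_lt_of_le hρ₁mem.1 with h | h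
    · exfalso; rw [← h, hV0] at hVρ₁; have := mul_pos hε0 hs; linarith
    · exact h
  have hρ₁ltρ₀ : ρ₁ < ρ₀ := by
    rcases eq_or_lt_of_le hρ₁mem.2 with h | h
    · exfalso; rw [h] at hVρ₁; linarith
    · exact h
  have hρ₁lt1 : ρ₁ < 1 := lt_trans hρ₁ltρ₀ hρ₀lt1
  -- ρ₃
  have hVB : 0 < V (s + 2) := by
    simp only [hV]
    have hBpow : (s + 2) ^ (m + 5) = (s + 2) ^ (m + 3) * (s + 2) ^ 2 := by ring
    have hB2 : (s + 2) ^ 2 ≤ (s + 2) ^ (m + 3) :=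
      pow_le_pow_right₀ (by linarith) (by omega)
    have hBsq : s + 1 ≤ (s + 2) ^ 2 - 1 := by linarith [sq_nonneg s]
    have h6 : (s + 2) ^ 2 * ((s + 2) ^ 2 - 1) ≤ (s + 2) ^ (m + 3) * ((s + 2) ^ 2 - 1) :=
      mul_le_mul_of_nonneg_right hB2 (by linarith [hBsq])
    have h7 : (s + 2) ^ 2 * (s + 1) ≤ (s + 2) ^ 2 * ((s + 2) ^ 2 - 1) :=
      mul_le_mul_of_nonneg_left hBsq (by positivity)
    have h8 : 0 < ε * s := mul_pos hε0 hs
    have h9 : (0 : ℝ) < (s + 2) ^ 2 := by positivity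
    have h6' : (s + 2) ^ 2 * ((s + 2) ^ 2 - 1)
        ≤ (s + 2) ^ (m + 3) * (s + 2) ^ 2 - (s + 2) ^ (m + 3) := by linear_combination h6
    rw [hBpow]
    linarith [h6', h7, h8, h9]
  have h7 : (0 : ℝ) ∈ Set.Icc (V 1) (V (s + 2)) := ⟨hV1.le, hVB.le⟩
  obtain ⟨ρ₃, hρ₃mem, hVρ₃⟩ := intermediate_value_Icc (by linarith : (1 : ℝ) ≤ s + 2)
    hVc.continuousOn h7
  have hρ₃gt1 : 1 < ρ₃ := by
    rcases eq_or_lt_of_le hρ₃mem.1 with h | h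
    · exfalso; rw [← h] at hVρ₃; linarith
    · exact h
  have hVuniq : ∀ ρ : ℝ, 0 < ρ → V ρ = 0 → ρ = ρ₁ ∨ ρ = ρ₃ := by
    intro ρ hρ hVρ
    rcases le_or_gt ρ ρ₀ with h | h
    · left
      exact hVanti.injOn ⟨hρ.le, h⟩ ⟨hρ₁pos.le, hρ₁ltρ₀.le⟩ (by rw [hVρ, hVρ₁])
    · right
      exact hVmono.injOn (Set.mem_Ici.mpr h.le)
        (Set.mem_Ici.mpr (le_trans hρ₀lt1.le hρ₃gt1.le)) (by rw [hVρ, hVρ₃])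
  -- conclusion
  refine ⟨ρ₁, ρ₂, ρ₃, hρ₁pos, hρ₁lt1, hρ₂pos, hρ₂lt1, hρ₃gt1, hε0, ?_, ?_⟩
  · intro ρ hρ
    constructor
    · intro h
      apply hVuniq ρ hρ
      simp only [hV]
      linear_combination -h
    · rintro (rfl | rfl)
      · simp only [hV] at hVρ₁; linear_combination -hVρ₁
      · simp only [hV] at hVρ₃; linear_combination -hVρ₃
  · intro ρ hρ
    constructor
    · intro h
      apply hUuniq ρ hρ
      simp only [hU]
      linear_combination h
    · rintro rfl
      simp only [hU] at hUρ₂; linear_combination hUρ₂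

/-- the set of n-th roots of a nonzero complex number is finite with `n` elements -/
lemma s12_card_pow_eq (n : ℕ) (hn : 0 < n) (c : ℂ) (hc : c ≠ 0) :
    {z : ℂ | z ^ n = c}.Finite ∧ {z : ℂ | z ^ n = c}.ncard = n := by
  have hprim := Complex.isPrimitiveRoot_exp n hn.ne'
  have hset : {z : ℂ | z ^ n = c} = ↑(Polynomial.nthRoots n c).toFinset := by
    ext z
    simp [Polynomial.mem_nthRoots hn]
  rw [hset]
  refine ⟨(Polynomial.nthRoots n c).toFinset.finite_toSet, ?_⟩
  rw [Set.ncard_coe_finset, Multiset.toFinset_card_of_nodup (hprim.nthRoots_nodup hc),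
    hprim.card_nthRoots]
  rw [if_pos]
  refine ⟨Complex.exp (Complex.log c / n), ?_⟩
  rw [← Complex.exp_nat_mul]
  rw [mul_div_cancel₀ _ (by exact_mod_cast hn.ne')]
  exact Complex.exp_log hc

lemma s12_mem (m : ℕ) (s ε : ℝ) (hs : 0 < s) (hε1 : ε < 1) (r : ℝ)
    (hrs : ((r : ℂ)) ^ (m + 3) = ((s : ℝ) : ℂ))
    (ρc c : ℝ) (hρc : 0 < ρc) (hcabs : |c| = ρc ^ (m + 3))
    (heqc : c * (1 - ρc ^ 2) = s * (ε - ρc ^ 2))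
    (z : ℂ) (hz : z ^ (m + 3) = (c : ℂ)) :
    z ≠ 0 ∧ z ^ (m + 3) ≠ (r : ℂ) ^ (m + 3) ∧
      (z ^ (m + 3) - (ε : ℂ) * (r : ℂ) ^ (m + 3)) /
        (z * (z ^ (m + 3) - (r : ℂ) ^ (m + 3))) = (starRingEnd ℂ) z := by
  have hc0 : c ≠ 0 := by
    intro h
    have h1 := pow_pos hρc (m + 3)
    rw [h, abs_zero] at hcabs
    linarith
  have hz0 : z ≠ 0 := by
    intro h
    rw [h, zero_pow (by omega : m + 3 ≠ 0)] at hz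
    exact hc0 (by exact_mod_cast hz.symm)
  have hnz : ‖z‖ = ρc := by
    have h1 : ‖z‖ ^ (m + 3) = ρc ^ (m + 3) := by
      rw [← norm_pow, hz, Complex.norm_real, Real.norm_eq_abs, hcabs]
    exact (pow_left_inj₀ (norm_nonneg z) hρc.le (by omega)).mp h1
  have hCz : (starRingEnd ℂ) z * z = ((ρc : ℝ) : ℂ) ^ 2 := by
    rw [mul_comm, Complex.mul_conj, Complex.normSq_eq_norm_sq, hnz]
    push_cast
    ring
  have hcs : c ≠ s := by
    intro h
    rw [h] at heqc
    have h3 := mul_pos hs (show (0 : ℝ) < 1 - ε by linarith)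
    nlinarith [heqc]
  have hzn : z ^ (m + 3) ≠ (r : ℂ) ^ (m + 3) := by
    rw [hz, hrs]
    intro h
    exact hcs (by exact_mod_cast h)
  refine ⟨hz0, hzn, ?_⟩
  rw [div_eq_iff (mul_ne_zero hz0 (sub_ne_zero.mpr hzn)), hrs]
  have heqC : (c : ℂ) * (1 - ((ρc : ℝ) : ℂ) ^ 2)
      = ((s : ℝ) : ℂ) * (((ε : ℝ) : ℂ) - ((ρc : ℝ) : ℂ) ^ 2) := by
    have h4 := congrArg (fun t : ℝ => (t : ℂ)) heqc
    push_cast at h4 ⊢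
    exact h4
  linear_combination (1 - ((ρc : ℝ) : ℂ) ^ 2) * hz + (((s : ℝ) : ℂ) - z ^ (m + 3)) * hCz + heqC


/-- For `n ≥ 3`, `0 < r < r_crit` and `ε* < ε < 1`, the equation
`(z^n − εr^n)/(z(z^n − r^n)) = conj z` has exactly `3n` solutions. -/
theorem stmt_12 (n : ℕ) (hn : 3 ≤ n) (r : ℝ) (hr : 0 < r)
    (hrc : r < ((((n : ℝ) - 2) / n) ^ (((n : ℝ) - 2) / 2) -
          (((n : ℝ) - 2) / n) ^ ((n : ℝ) / 2)) ^ ((1 : ℝ) / n))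
    (ξ₁ : ℝ) (hξ₁pos : 0 < ξ₁)
    (hξ₁root : ((n : ℝ) + 2) * ξ₁ ^ n - (n : ℝ) * ξ₁ ^ (n - 2) + 2 * r ^ n = 0)
    (hξ₁min : ∀ x : ℝ, 0 < x →
      ((n : ℝ) + 2) * x ^ n - (n : ℝ) * x ^ (n - 2) + 2 * r ^ n = 0 → ξ₁ ≤ x)
    (ε : ℝ)
    (hεgt : (ξ₁ ^ (n + 2) - ξ₁ ^ n + r ^ n * ξ₁ ^ 2) / r ^ n < ε) (hε1 : ε < 1) :
    {z : ℂ | z ≠ 0 ∧ z ^ n ≠ (r : ℂ) ^ n ∧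
      (z ^ n - (ε : ℂ) * (r : ℂ) ^ n) / (z * (z ^ n - (r : ℂ) ^ n)) =
        (starRingEnd ℂ) z}.ncard = 3 * n := by
  obtain ⟨m, rfl⟩ : ∃ m, n = m + 3 := ⟨n - 3, by omega⟩
  -- first, `r < 1`
  have hr1 : r < 1 := by
    set a : ℝ := (((m + 3 : ℕ) : ℝ) - 2) / ((m + 3 : ℕ) : ℝ) with hadef
    have hmc : ((m + 3 : ℕ) : ℝ) = (m : ℝ) + 3 := by push_cast; ring
    have ha0 : 0 < a := by
      rw [hadef, hmc]
      have hm0 : (0 : ℝ) ≤ (m : ℝ) := Nat.cast_nonneg m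
      exact div_pos (by linarith) (by linarith)
    have ha1 : a < 1 := by
      rw [hadef, hmc, div_lt_one (by positivity)]; linarith
    have hexp : ((m + 3 : ℕ) : ℝ) / 2 = (((m + 3 : ℕ) : ℝ) - 2) / 2 + 1 := by ring
    have hfac : a ^ ((((m + 3 : ℕ) : ℝ) - 2) / 2) - a ^ (((m + 3 : ℕ) : ℝ) / 2)
        = a ^ ((((m + 3 : ℕ) : ℝ) - 2) / 2) * (1 - a) := by
      rw [hexp, Real.rpow_add ha0, Real.rpow_one]; ring
    have he0 : (0 : ℝ) ≤ (((m + 3 : ℕ) : ℝ) - 2) / 2 := by rw [hmc]; linarith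
    have hple : a ^ ((((m + 3 : ℕ) : ℝ) - 2) / 2) ≤ 1 := Real.rpow_le_one ha0.le ha1.le he0
    have hppos : 0 < a ^ ((((m + 3 : ℕ) : ℝ) - 2) / 2) := Real.rpow_pos_of_pos ha0 _
    have hx0 : 0 ≤ a ^ ((((m + 3 : ℕ) : ℝ) - 2) / 2) - a ^ (((m + 3 : ℕ) : ℝ) / 2) := by
      rw [hfac]; exact mul_nonneg hppos.le (by linarith)
    have hx1 : a ^ ((((m + 3 : ℕ) : ℝ) - 2) / 2) - a ^ (((m + 3 : ℕ) : ℝ) / 2) ≤ 1 := by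
      rw [hfac]
      have hq := mul_nonneg (sub_nonneg.mpr hple) (show (0 : ℝ) ≤ 1 - a by linarith)
      nlinarith [hq, ha0]
    exact lt_of_lt_of_le hrc (Real.rpow_le_one hx0 hx1 (by positivity))
  simp only [show m + 3 - 2 = m + 1 from by omega, show m + 3 + 2 = m + 5 from by omega]
    at hξ₁root hξ₁min hεgt
  set s : ℝ := r ^ (m + 3) with hsdef
  have hs : 0 < s := pow_pos hr _
  have hs1 : s < 1 := by rw [hsdef]; exact pow_lt_one₀ hr.le hr1 (by omega)
  have hroot' : ((m : ℝ) + 5) * ξ₁ ^ (m + 3) - ((m : ℝ) + 3) * ξ₁ ^ (m + 1) + 2 * s = 0 := by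
    push_cast at hξ₁root
    linarith [hξ₁root]
  have hmin' : ∀ x : ℝ, 0 < x →
      ((m : ℝ) + 5) * x ^ (m + 3) - ((m : ℝ) + 3) * x ^ (m + 1) + 2 * s = 0 → ξ₁ ≤ x := by
    intro x hx h
    apply hξ₁min x hx
    push_cast
    linarith [h]
  have hεgt' : ξ₁ ^ (m + 5) - ξ₁ ^ (m + 3) + s * ξ₁ ^ 2 < ε * s := (div_lt_iff₀ hs).mp hεgt
  obtain ⟨ρ₁, ρ₂, ρ₃, hρ₁pos, hρ₁lt1, hρ₂pos, hρ₂lt1, hρ₃gt1, hε0, hiffV, hiffU⟩ :=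
    s12_radial m s hs hs1 ξ₁ hξ₁pos hroot' hmin' ε hεgt' hε1
  have eq₁ : ρ₁ ^ (m + 3) * (1 - ρ₁ ^ 2) = s * (ε - ρ₁ ^ 2) :=
    (hiffV ρ₁ hρ₁pos).mpr (Or.inl rfl)
  have eq₃ : ρ₃ ^ (m + 3) * (1 - ρ₃ ^ 2) = s * (ε - ρ₃ ^ 2) :=
    (hiffV ρ₃ (by linarith)).mpr (Or.inr rfl)
  have eq₂ : -(ρ₂ ^ (m + 3)) * (1 - ρ₂ ^ 2) = s * (ε - ρ₂ ^ 2) :=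
    (hiffU ρ₂ hρ₂pos).mpr rfl
  have hrs : ((r : ℂ)) ^ (m + 3) = ((s : ℝ) : ℂ) := by rw [hsdef]; push_cast; ring
  have habs₁ : |ρ₁ ^ (m + 3)| = ρ₁ ^ (m + 3) := abs_of_pos (pow_pos hρ₁pos _)
  have habs₂ : |(-(ρ₂ ^ (m + 3)))| = ρ₂ ^ (m + 3) := by
    rw [abs_neg]; exact abs_of_pos (pow_pos hρ₂pos _)
  have habs₃ : |ρ₃ ^ (m + 3)| = ρ₃ ^ (m + 3) := abs_of_pos (pow_pos (by linarith) _)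
  have hmain : {z : ℂ | z ≠ 0 ∧ z ^ (m + 3) ≠ (r : ℂ) ^ (m + 3) ∧
      (z ^ (m + 3) - (ε : ℂ) * (r : ℂ) ^ (m + 3)) /
        (z * (z ^ (m + 3) - (r : ℂ) ^ (m + 3))) = (starRingEnd ℂ) z}
      = {z : ℂ | z ^ (m + 3) = ((ρ₁ ^ (m + 3) : ℝ) : ℂ)}
        ∪ {z : ℂ | z ^ (m + 3) = ((-(ρ₂ ^ (m + 3)) : ℝ) : ℂ)}
        ∪ {z : ℂ | z ^ (m + 3) = ((ρ₃ ^ (m + 3) : ℝ) : ℂ)} := by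
    ext z
    simp only [Set.mem_setOf_eq, Set.mem_union]
    constructor
    · rintro ⟨hz0, hzn, heq⟩
      rw [div_eq_iff (mul_ne_zero hz0 (sub_ne_zero.mpr hzn)), hrs] at heq
      have hρpos : 0 < ‖z‖ := norm_pos_iff.mpr hz0
      have hCz : (starRingEnd ℂ) z * z = ((‖z‖ : ℝ) : ℂ) ^ 2 := by
        rw [mul_comm, Complex.mul_conj, Complex.normSq_eq_norm_sq]
        push_cast
        ring
      have heq2 : z ^ (m + 3) * (1 - ((‖z‖ : ℝ) : ℂ) ^ 2)
          = ((s : ℝ) : ℂ) * (((ε : ℝ) : ℂ) - ((‖z‖ : ℝ) : ℂ) ^ 2) := by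
        linear_combination heq + (z ^ (m + 3) - ((s : ℝ) : ℂ)) * hCz
      have hsq : (1 : ℝ) - ‖z‖ ^ 2 ≠ 0 := by
        intro h
        have hcast : (1 : ℂ) - ((‖z‖ : ℝ) : ℂ) ^ 2 = 0 := by
          exact_mod_cast congrArg (fun t : ℝ => (t : ℂ)) h
        have h5 : ((s * (ε - ‖z‖ ^ 2) : ℝ) : ℂ) = 0 := by
          push_cast
          linear_combination -heq2 + z ^ (m + 3) * hcast
        have h6 : s * (ε - ‖z‖ ^ 2) = 0 := by exact_mod_cast h5
        have h7 : ε - ‖z‖ ^ 2 = 0 := by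
          rcases mul_eq_zero.mp h6 with h8 | h8
          · linarith
          · exact h8
        linarith
      have ht : z ^ (m + 3) = ((s * (ε - ‖z‖ ^ 2) / (1 - ‖z‖ ^ 2) : ℝ) : ℂ) := by
        rw [Complex.ofReal_div, eq_div_iff (Complex.ofReal_ne_zero.mpr hsq)]
        push_cast
        linear_combination heq2
      have htt : s * (ε - ‖z‖ ^ 2) / (1 - ‖z‖ ^ 2) * (1 - ‖z‖ ^ 2) = s * (ε - ‖z‖ ^ 2) :=
        div_mul_cancel₀ _ hsq
      have hnorm : |s * (ε - ‖z‖ ^ 2) / (1 - ‖z‖ ^ 2)| = ‖z‖ ^ (m + 3) := by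
        rw [← Real.norm_eq_abs, ← Complex.norm_real, ← ht, norm_pow]
      rcases (abs_eq (pow_nonneg (norm_nonneg z) _)).mp hnorm with hcase | hcase
      · rw [hcase] at htt ht
        rcases (hiffV ‖z‖ hρpos).mp htt with h9 | h9
        · rw [h9] at ht
          exact Or.inl (Or.inl ht)
        · rw [h9] at ht
          exact Or.inr ht
      · rw [hcase] at htt ht
        have h9 := (hiffU ‖z‖ hρpos).mp htt
        rw [h9] at ht
        exact Or.inl (Or.inr ht)
    · intro hz
      rcases hz with (hz | hz) | hz
      · exact s12_mem m s ε hs hε1 r hrs ρ₁ _ hρ₁pos habs₁ eq₁ z hz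
      · exact s12_mem m s ε hs hε1 r hrs ρ₂ _ hρ₂pos habs₂ eq₂ z hz
      · exact s12_mem m s ε hs hε1 r hrs ρ₃ _ (by linarith) habs₃ eq₃ z hz
  rw [hmain]
  obtain ⟨hf₁, hc₁⟩ := s12_card_pow_eq (m + 3) (by omega) ((ρ₁ ^ (m + 3) : ℝ) : ℂ)
    (Complex.ofReal_ne_zero.mpr (ne_of_gt (pow_pos hρ₁pos _)))
  obtain ⟨hf₂, hc₂⟩ := s12_card_pow_eq (m + 3) (by omega) ((-(ρ₂ ^ (m + 3)) : ℝ) : ℂ)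
    (Complex.ofReal_ne_zero.mpr (ne_of_lt (by linarith [pow_pos hρ₂pos (m + 3)])))
  obtain ⟨hf₃, hc₃⟩ := s12_card_pow_eq (m + 3) (by omega) ((ρ₃ ^ (m + 3) : ℝ) : ℂ)
    (Complex.ofReal_ne_zero.mpr (ne_of_gt (pow_pos (by linarith) _)))
  have hdisj : ∀ c c' : ℂ, c ≠ c' →
      Disjoint {z : ℂ | z ^ (m + 3) = c} {z : ℂ | z ^ (m + 3) = c'} := by
    intro c c' hcc
    rw [Set.disjoint_left]
    intro z hz hz'
    exact hcc (hz.symm.trans hz')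
  have hp₁ : (0 : ℝ) < ρ₁ ^ (m + 3) := pow_pos hρ₁pos _
  have hp₂ : (0 : ℝ) < ρ₂ ^ (m + 3) := pow_pos hρ₂pos _
  have hp₃ : (1 : ℝ) < ρ₃ ^ (m + 3) := one_lt_pow₀ hρ₃gt1 (by omega)
  have hq₁ : ρ₁ ^ (m + 3) < 1 := pow_lt_one₀ hρ₁pos.le hρ₁lt1 (by omega)
  have hne₁₂ : ((ρ₁ ^ (m + 3) : ℝ) : ℂ) ≠ ((-(ρ₂ ^ (m + 3)) : ℝ) : ℂ) := by
    intro h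
    have := Complex.ofReal_inj.mp h
    linarith
  have hne₁₃ : ((ρ₁ ^ (m + 3) : ℝ) : ℂ) ≠ ((ρ₃ ^ (m + 3) : ℝ) : ℂ) := by
    intro h
    have := Complex.ofReal_inj.mp h
    linarith
  have hne₂₃ : ((-(ρ₂ ^ (m + 3)) : ℝ) : ℂ) ≠ ((ρ₃ ^ (m + 3) : ℝ) : ℂ) := by
    intro h
    have := Complex.ofReal_inj.mp h
    linarith
  rw [Set.ncard_union_eq (Set.disjoint_union_left.mpr
      ⟨hdisj _ _ hne₁₃, hdisj _ _ hne₂₃⟩) (hf₁.union hf₂) hf₃,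
    Set.ncard_union_eq (hdisj _ _ hne₁₂) hf₁ hf₂, hc₁, hc₂, hc₃]
  ring
end
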